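/- arXiv:1111.7247 — 5 statements merged into one kernel-verified Lean document; each statement's English description precedes it below -/
import Mathlib

section
/- Let A be an m×N real matrix satisfying the Restricted Isometry Property of order 2s with constant δ_{2s} < √2 − 1. Let f ∈ ℝ^N be arbitrary, let w ∈ ℝ^m satisfy ‖w‖₂ ≤ ε for some ε > 0, and set y = A f + w. Let f_s denote the best s-sparse approximation of f (obtained by keeping the s largest-magnitude entries of f and setting the others to zero). Then any minimizer f̂ of ‖f‖₁ over the set {f ∈ ℝ^N : ‖y − A f‖₂ ≤ ε} satisfies ‖f − f̂‖₂ ≤ C₁ ε + C₂ ‖f − f_s‖₁ / √s, where C₁ and C₂ are constants depending only on s and δ_{2s} (not on N or m). -/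
open Finset

/-- `f` has at most `s` nonzero entries. -/
def IsSparse {N : Type*} [Fintype N] [DecidableEq N] (s : ℕ) (f : N → ℝ) : Prop :=
  ∃ T : Finset N, T.card ≤ s ∧ ∀ i ∉ T, f i = 0

/-- `A` satisfies the Restricted Isometry Property of order `s` with constant `δ`. -/
def IsRIP {M N : Type*} [Fintype M] [Fintype N] [DecidableEq N]
    (A : Matrix M N ℝ) (s : ℕ) (δ : ℝ) : Prop :=
  ∀ f : N → ℝ, IsSparse s f →
    (1 - δ) * ∑ i, f i ^ 2 ≤ ∑ j, (A.mulVec f j) ^ 2 ∧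
      ∑ j, (A.mulVec f j) ^ 2 ≤ (1 + δ) * ∑ i, f i ^ 2

namespace SR

variable {ι : Type*} [Fintype ι]

lemma sum_sq_nonneg (x : ι → ℝ) : 0 ≤ ∑ i, x i ^ 2 :=
  Finset.sum_nonneg fun i _ => sq_nonneg _

lemma abs_sum_mul_le (x y : ι → ℝ) :
    |∑ i, x i * y i| ≤ Real.sqrt (∑ i, x i ^ 2) * Real.sqrt (∑ i, y i ^ 2) := by
  rw [← Real.sqrt_sq_eq_abs, ← Real.sqrt_mul (sum_sq_nonneg x)]
  exact Real.sqrt_le_sqrt (sum_mul_sq_le_sq_mul_sq univ x y)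

lemma sum_mul_le (x y : ι → ℝ) :
    ∑ i, x i * y i ≤ Real.sqrt (∑ i, x i ^ 2) * Real.sqrt (∑ i, y i ^ 2) :=
  (le_abs_self _).trans (abs_sum_mul_le x y)

lemma sqrt_sum_sq_add_le (x y : ι → ℝ) :
    Real.sqrt (∑ i, (x i + y i) ^ 2) ≤ Real.sqrt (∑ i, x i ^ 2) + Real.sqrt (∑ i, y i ^ 2) := by
  have h1 := Real.sq_sqrt (sum_sq_nonneg x)
  have h2 := Real.sq_sqrt (sum_sq_nonneg y)
  have hcs := sum_mul_le x y
  have hexp : ∑ i, (x i + y i) ^ 2 = ∑ i, x i ^ 2 + 2 * ∑ i, x i * y i + ∑ i, y i ^ 2 := by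
    rw [Finset.mul_sum, ← Finset.sum_add_distrib, ← Finset.sum_add_distrib]
    exact Finset.sum_congr rfl fun i _ => by ring
  have : ∑ i, (x i + y i) ^ 2 ≤ (Real.sqrt (∑ i, x i ^ 2) + Real.sqrt (∑ i, y i ^ 2)) ^ 2 := by
    rw [hexp]; nlinarith
  calc Real.sqrt (∑ i, (x i + y i) ^ 2)
      ≤ Real.sqrt ((Real.sqrt (∑ i, x i ^ 2) + Real.sqrt (∑ i, y i ^ 2)) ^ 2) :=
        Real.sqrt_le_sqrt this
    _ = _ := Real.sqrt_sq (by positivity)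

/-- ℓ¹–ℓ² bound on a finset: `∑_{T} |h| ≤ √(card T) * √(∑_T h²)`. -/
lemma l1_le_sqrt_card_mul_l2 (T : Finset ι) (h : ι → ℝ) :
    ∑ i ∈ T, |h i| ≤ Real.sqrt T.card * Real.sqrt (∑ i ∈ T, h i ^ 2) := by
  have hcs := sum_mul_sq_le_sq_mul_sq T (fun _ => (1:ℝ)) (fun i => |h i|)
  simp only [one_pow, one_mul, Finset.sum_const, nsmul_eq_mul, mul_one, sq_abs] at hcs
  have h0 : 0 ≤ ∑ i ∈ T, |h i| := Finset.sum_nonneg fun i _ => abs_nonneg _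
  rw [← Real.sqrt_sq h0, ← Real.sqrt_mul (by positivity)]
  exact Real.sqrt_le_sqrt hcs



variable {M N : Type*} [Fintype M] [Fintype N] [DecidableEq N]

lemma ro_aux {A : Matrix M N ℝ} {s : ℕ} {δ : ℝ}
    (hA : IsRIP A (2 * s) δ)
    {U V : Finset N} (hU : U.card ≤ s) (hV : V.card ≤ s) (hUV : Disjoint U V)
    {u v : N → ℝ} (hu : ∀ i ∉ U, u i = 0) (hv : ∀ i ∉ V, v i = 0) :
    |∑ j, A.mulVec u j * A.mulVec v j| ≤ δ / 2 * (∑ i, u i ^ 2 + ∑ i, v i ^ 2) := by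
  have hzero : ∀ i, u i * v i = 0 := by
    intro i
    by_cases hiU : i ∈ U
    · exact mul_eq_zero.2 (Or.inr (hv i (Finset.disjoint_left.mp hUV hiU)))
    · exact mul_eq_zero.2 (Or.inl (hu i hiU))
  have hsupp : ∀ c : ℝ, ∀ i ∉ U ∪ V, u i + c * v i = 0 := by
    intro c i hi
    rw [Finset.mem_union] at hi; push_neg at hi
    rw [hu i hi.1, hv i hi.2]; ring
  have hcard : (U ∪ V).card ≤ 2 * s := by
    calc (U ∪ V).card ≤ U.card + V.card := Finset.card_union_le U V
      _ ≤ 2 * s := by omega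
  have hsp : ∀ c : ℝ, IsSparse (2 * s) (fun i => u i + c * v i) :=
    fun c => ⟨U ∪ V, hcard, hsupp c⟩
  have h1 := hA (fun i => u i + 1 * v i) (hsp 1)
  have h2 := hA (fun i => u i + (-1) * v i) (hsp (-1))
  have hmv : ∀ c : ℝ, ∀ j, A.mulVec (fun i => u i + c * v i) j
      = A.mulVec u j + c * A.mulVec v j := by
    intro c j
    have : (fun i => u i + c * v i) = u + c • v := by ext i; simp
    rw [this, Matrix.mulVec_add, Matrix.mulVec_smul]
    simp
  have hnorm : ∀ c : ℝ, ∑ i, (fun i => u i + c * v i) i ^ 2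
      = ∑ i, u i ^ 2 + c ^ 2 * ∑ i, v i ^ 2 := by
    intro c
    rw [Finset.mul_sum, ← Finset.sum_add_distrib]
    exact Finset.sum_congr rfl fun i _ => by
      show (u i + c * v i) ^ 2 = u i ^ 2 + c ^ 2 * v i ^ 2
      linear_combination (2 * c) * hzero i
  have hAnorm : ∀ c : ℝ, ∑ j, (A.mulVec (fun i => u i + c * v i) j) ^ 2
      = ∑ j, (A.mulVec u j) ^ 2 + 2 * c * ∑ j, A.mulVec u j * A.mulVec v j
        + c ^ 2 * ∑ j, (A.mulVec v j) ^ 2 := by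
    intro c
    simp only [hmv c]
    rw [Finset.mul_sum, Finset.mul_sum, ← Finset.sum_add_distrib, ← Finset.sum_add_distrib]
    exact Finset.sum_congr rfl fun j _ => by ring
  rw [hnorm 1, hAnorm 1] at h1
  rw [hnorm (-1), hAnorm (-1)] at h2
  rw [abs_le]
  constructor
  · nlinarith [h1.1, h2.2]
  · nlinarith [h1.2, h2.1]

lemma restricted_orthogonality {A : Matrix M N ℝ} {s : ℕ} {δ : ℝ} (hδ : 0 ≤ δ)
    (hA : IsRIP A (2 * s) δ)
    {U V : Finset N} (hU : U.card ≤ s) (hV : V.card ≤ s) (hUV : Disjoint U V)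
    {u v : N → ℝ} (hu : ∀ i ∉ U, u i = 0) (hv : ∀ i ∉ V, v i = 0) :
    |∑ j, A.mulVec u j * A.mulVec v j|
      ≤ δ * Real.sqrt (∑ i, u i ^ 2) * Real.sqrt (∑ i, v i ^ 2) := by
  set a := ∑ i, u i ^ 2 with ha
  set b := ∑ i, v i ^ 2 with hb
  have ha0 : 0 ≤ a := Finset.sum_nonneg fun i _ => sq_nonneg _
  have hb0 : 0 ≤ b := Finset.sum_nonneg fun i _ => sq_nonneg _
  rcases eq_or_lt_of_le ha0 with ha' | ha'
  · -- a = 0 so u = 0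
    have hu0 : ∀ i, u i = 0 := by
      intro i
      have := (Finset.sum_eq_zero_iff_of_nonneg (fun i _ => sq_nonneg (u i))).mp ha'.symm i
        (Finset.mem_univ i)
      exact pow_eq_zero_iff (n := 2) (by norm_num) |>.mp this
    have : ∀ j, A.mulVec u j = 0 := by
      intro j; unfold Matrix.mulVec dotProduct
      exact Finset.sum_eq_zero fun i _ => by rw [hu0 i, mul_zero]
    simp only [this, zero_mul, Finset.sum_const_zero, abs_zero]
    positivity
  rcases eq_or_lt_of_le hb0 with hb' | hb'
  · have hv0 : ∀ i, v i = 0 := by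
      intro i
      have := (Finset.sum_eq_zero_iff_of_nonneg (fun i _ => sq_nonneg (v i))).mp hb'.symm i
        (Finset.mem_univ i)
      exact pow_eq_zero_iff (n := 2) (by norm_num) |>.mp this
    have : ∀ j, A.mulVec v j = 0 := by
      intro j; unfold Matrix.mulVec dotProduct
      exact Finset.sum_eq_zero fun i _ => by rw [hv0 i, mul_zero]
    simp only [this, mul_zero, Finset.sum_const_zero, abs_zero]
    positivity
  -- scaling
  set c : ℝ := Real.sqrt (Real.sqrt b / Real.sqrt a) with hc
  have hsa : 0 < Real.sqrt a := Real.sqrt_pos.mpr ha'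
  have hsb : 0 < Real.sqrt b := Real.sqrt_pos.mpr hb'
  have hc0 : 0 < c := Real.sqrt_pos.mpr (by positivity)
  have hc2 : c ^ 2 = Real.sqrt b / Real.sqrt a := Real.sq_sqrt (by positivity)
  have key := ro_aux hA hU hV hUV (u := fun i => c * u i) (v := fun i => c⁻¹ * v i)
    (fun i hi => by show c * u i = 0; rw [hu i hi, mul_zero])
    (fun i hi => by show c⁻¹ * v i = 0; rw [hv i hi, mul_zero])
  have e1 : ∑ i, (c * u i) ^ 2 = c ^ 2 * a := by
    rw [ha, Finset.mul_sum]; exact Finset.sum_congr rfl fun i _ => by ring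
  have e2 : ∑ i, (c⁻¹ * v i) ^ 2 = (c ^ 2)⁻¹ * b := by
    rw [hb, Finset.mul_sum]
    exact Finset.sum_congr rfl fun i _ => by rw [mul_pow, inv_pow]
  have emv : ∀ j, A.mulVec (fun i => c * u i) j * A.mulVec (fun i => c⁻¹ * v i) j
      = A.mulVec u j * A.mulVec v j := by
    intro j
    have h1 : A.mulVec (fun i => c * u i) j = c * A.mulVec u j := by
      have : (fun i => c * u i) = c • u := by ext i; simp
      rw [this, Matrix.mulVec_smul]; simp
    have h2 : A.mulVec (fun i => c⁻¹ * v i) j = c⁻¹ * A.mulVec v j := by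
      have : (fun i => c⁻¹ * v i) = c⁻¹ • v := by ext i; simp
      rw [this, Matrix.mulVec_smul]; simp
    rw [h1, h2, mul_mul_mul_comm, mul_inv_cancel₀ (ne_of_gt hc0), one_mul]
  simp only [emv, e1, e2] at key
  have hca : c ^ 2 * a = Real.sqrt a * Real.sqrt b := by
    rw [hc2, div_mul_eq_mul_div, mul_div_assoc, Real.div_sqrt, mul_comm]
  have hcb : (c ^ 2)⁻¹ * b = Real.sqrt a * Real.sqrt b := by
    rw [hc2, inv_div, div_mul_eq_mul_div, mul_div_assoc, Real.div_sqrt]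
  rw [hca, hcb] at key
  calc |∑ j, A.mulVec u j * A.mulVec v j|
      ≤ δ / 2 * (Real.sqrt a * Real.sqrt b + Real.sqrt a * Real.sqrt b) := key
    _ = δ * Real.sqrt a * Real.sqrt b := by ring




lemma exists_blocks {ι : Type*} [DecidableEq ι] (S : Finset ι) (h : ι → ℝ) {s : ℕ}
    (hs : 1 ≤ s) :
    ∃ (L : ℕ) (B : ℕ → Finset ι),
      (∀ j, B j ⊆ S) ∧
      (∀ j j', j ≠ j' → Disjoint (B j) (B j')) ∧
      (S = (Finset.range L).biUnion B) ∧
      (∀ j, (B j).card ≤ s) ∧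
      (∀ j, (B (j + 1)).Nonempty → (B j).card = s) ∧
      (∀ j, ∀ i ∈ B (j + 1), ∀ i' ∈ B j, |h i| ≤ |h i'|) := by
  classical
  set le : ι → ι → Bool := fun i i' => decide (|h i'| ≤ |h i|) with hle
  set l : List ι := S.toList.mergeSort le with hl
  have hperm : l.Perm S.toList := List.mergeSort_perm S.toList le
  have hnodup : l.Nodup := hperm.symm.nodup (Finset.nodup_toList S)
  have hmem : ∀ i, i ∈ l ↔ i ∈ S := by
    intro i; rw [hperm.mem_iff, Finset.mem_toList]
  have hsorted : List.Pairwise (fun a b => le a b = true) l :=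
    List.pairwise_mergeSort
      (fun a b c hab hbc => by
        simp only [hle, decide_eq_true_eq] at *; exact hbc.trans hab)
      (fun a b => by
        simp only [hle]
        rcases le_total (|h b|) (|h a|) with h' | h'
        · simp [h']
        · simp [h'])
      S.toList
  have hsorted' : ∀ (k k' : ℕ) (hk : k < l.length) (hk' : k' < l.length),
      k < k' → |h (l[k'])| ≤ |h (l[k])| := by
    intro k k' hk hk' hlt
    have := List.pairwise_iff_getElem.mp hsorted k k' hk hk' hlt
    simpa [hle, decide_eq_true_eq] using this
  set B : ℕ → Finset ι := fun j => ((l.drop (j * s)).take s).toFinset with hB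
  have hBmem : ∀ j i, i ∈ B j ↔
      ∃ k, j * s ≤ k ∧ k < j * s + s ∧ ∃ hk : k < l.length, l[k] = i := by
    intro j i
    rw [hB, List.mem_toFinset, List.mem_iff_getElem]
    constructor
    · rintro ⟨n, hn, heq⟩
      have hn' := hn
      rw [List.length_take, List.length_drop] at hn'
      have h1 : n < s := lt_of_lt_of_le hn' (min_le_left _ _)
      have h2 : n < l.length - j * s := lt_of_lt_of_le hn' (min_le_right _ _)
      refine ⟨j * s + n, Nat.le_add_right _ _, by omega, by omega, ?_⟩
      rw [← heq, List.getElem_take, List.getElem_drop]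
    · rintro ⟨k, hk1, hk2, hk, heq⟩
      refine ⟨k - j * s, ?_, ?_⟩
      · rw [List.length_take, List.length_drop]; omega
      · rw [List.getElem_take, List.getElem_drop, ← heq]
        congr 1; omega
  have hBsub : ∀ j, B j ⊆ S := by
    intro j i hi
    obtain ⟨k, _, _, hk, heq⟩ := (hBmem j i).mp hi
    rw [← hmem, ← heq]
    exact List.getElem_mem hk
  refine ⟨l.length, B, hBsub, ?_, ?_, ?_, ?_, ?_⟩
  · -- disjoint
    intro j j' hjj'
    rw [Finset.disjoint_left]
    intro i hij hij'
    obtain ⟨k, ha1, ha2, hk, heq⟩ := (hBmem j i).mp hij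
    obtain ⟨k', hb1, hb2, hk', heq'⟩ := (hBmem j' i).mp hij'
    have hkk' : k = k' := (hnodup.getElem_inj_iff).mp (heq.trans heq'.symm)
    apply hjj'
    rcases Nat.lt_or_ge j j' with hlt | hge
    · have : (j + 1) * s ≤ j' * s := Nat.mul_le_mul_right s (by omega)
      rw [Nat.succ_mul] at this; omega
    rcases Nat.lt_or_ge j' j with hlt | hge'
    · have : (j' + 1) * s ≤ j * s := Nat.mul_le_mul_right s (by omega)
      rw [Nat.succ_mul] at this; omega
    omega
  · -- cover
    ext i
    rw [Finset.mem_biUnion]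
    constructor
    · intro hiS
      obtain ⟨k, hk, heq⟩ := List.mem_iff_getElem.mp ((hmem i).mpr hiS)
      refine ⟨k / s, Finset.mem_range.mpr (lt_of_le_of_lt (Nat.div_le_self k s) hk), ?_⟩
      rw [hBmem]
      refine ⟨k, Nat.div_mul_le_self k s, ?_, hk, heq⟩
      have h1 : k / s < k / s + 1 := Nat.lt_succ_self _
      have h2 := (Nat.div_lt_iff_lt_mul (by omega : 0 < s)).mp h1
      rw [Nat.succ_mul] at h2; omega
    · rintro ⟨j, _, hij⟩
      exact hBsub j hij
  · -- card ≤ s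
    intro j
    calc (B j).card ≤ ((l.drop (j * s)).take s).length := List.toFinset_card_le _
      _ ≤ s := by rw [List.length_take]; exact min_le_left _ _
  · -- full cards
    intro j ⟨i, hi⟩
    obtain ⟨k, hk1, hk2, hk, heq⟩ := (hBmem (j + 1) i).mp hi
    have hlen : j * s + s ≤ l.length := by
      rw [Nat.succ_mul] at hk1; omega
    have hsub : ((l.drop (j * s)).take s).Sublist l :=
      (List.take_sublist _ _).trans (List.drop_sublist _ _)
    rw [hB, List.toFinset_card_of_nodup (hsub.nodup hnodup), List.length_take,
      List.length_drop]
    omega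
  · -- monotone
    intro j i hi i' hi'
    obtain ⟨k, hk1, hk2, hk, heq⟩ := (hBmem (j + 1) i).mp hi
    obtain ⟨k', hk1', hk2', hk', heq'⟩ := (hBmem j i').mp hi'
    rw [← heq, ← heq']
    apply hsorted'
    rw [Nat.succ_mul] at hk1; omega




lemma sum_fun_restrict {ι : Type*} [Fintype ι] (T : Finset ι) (F G : ι → ℝ)
    (h1 : ∀ i ∈ T, G i = F i) (h0 : ∀ i ∉ T, G i = 0) :
    ∑ i, G i = ∑ i ∈ T, F i := by
  rw [← Finset.sum_subset (Finset.subset_univ T) (fun i _ hi => h0 i hi)]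
  exact Finset.sum_congr rfl h1

lemma sum_sq_le_sq_sum {κ : Type*} (t : Finset κ) (g : κ → ℝ) (hg : ∀ j ∈ t, 0 ≤ g j) :
    ∑ j ∈ t, g j ^ 2 ≤ (∑ j ∈ t, g j) ^ 2 := by
  have h1 : ∀ j ∈ t, g j ^ 2 ≤ g j * ∑ k ∈ t, g k := by
    intro j hj
    rw [pow_two]
    exact mul_le_mul_of_nonneg_left (Finset.single_le_sum hg hj) (hg j hj)
  calc ∑ j ∈ t, g j ^ 2 ≤ ∑ j ∈ t, g j * ∑ k ∈ t, g k := Finset.sum_le_sum h1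
    _ = (∑ j ∈ t, g j) ^ 2 := by rw [← Finset.sum_mul, pow_two]

lemma sqrt_add_le_sqrt2 {a b : ℝ} (ha : 0 ≤ a) (hb : 0 ≤ b) :
    Real.sqrt a + Real.sqrt b ≤ Real.sqrt 2 * Real.sqrt (a + b) := by
  have h1 : (Real.sqrt a + Real.sqrt b) ^ 2 ≤ (Real.sqrt 2 * Real.sqrt (a + b)) ^ 2 := by
    rw [mul_pow, Real.sq_sqrt (by norm_num : (0:ℝ) ≤ 2), Real.sq_sqrt (by linarith)]
    nlinarith [sq_nonneg (Real.sqrt a - Real.sqrt b), Real.sq_sqrt ha, Real.sq_sqrt hb,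
      Real.sqrt_nonneg a, Real.sqrt_nonneg b]
  calc Real.sqrt a + Real.sqrt b
      = Real.sqrt ((Real.sqrt a + Real.sqrt b) ^ 2) :=
        (Real.sqrt_sq (by positivity)).symm
    _ ≤ Real.sqrt ((Real.sqrt 2 * Real.sqrt (a + b)) ^ 2) := Real.sqrt_le_sqrt h1
    _ = _ := Real.sqrt_sq (by positivity)

lemma block_l2_le {ι : Type*} (B' B : Finset ι) (h : ι → ℝ) {s : ℕ} (hs : 1 ≤ s)
    (hcard' : B'.card ≤ s) (hcard : B'.Nonempty → B.card = s)
    (hmono : ∀ i ∈ B', ∀ i' ∈ B, |h i| ≤ |h i'|) :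
    Real.sqrt (∑ i ∈ B', h i ^ 2) ≤ (∑ i ∈ B, |h i|) / Real.sqrt s := by
  rcases B'.eq_empty_or_nonempty with hB' | hB'
  · rw [hB']
    simp only [Finset.sum_empty, Real.sqrt_zero]
    positivity
  have hBcard := hcard hB'
  have hspos : (0:ℝ) < s := by exact_mod_cast Nat.lt_of_lt_of_le Nat.zero_lt_one hs
  set T : ℝ := ∑ i ∈ B, |h i| with hT
  have hT0 : 0 ≤ T := Finset.sum_nonneg fun i _ => abs_nonneg _
  have hkey : ∀ i ∈ B', |h i| ≤ T / s := by
    intro i hi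
    rw [le_div_iff₀ hspos]
    calc |h i| * s = ∑ _i' ∈ B, |h i| := by
          rw [Finset.sum_const, hBcard, nsmul_eq_mul]; ring
      _ ≤ T := Finset.sum_le_sum fun i' hi' => hmono i hi i' hi'
  have hsum : ∑ i ∈ B', h i ^ 2 ≤ T ^ 2 / s := by
    calc ∑ i ∈ B', h i ^ 2 ≤ ∑ _i ∈ B', (T / s) ^ 2 := by
          refine Finset.sum_le_sum fun i hi => ?_
          rw [← sq_abs]
          exact pow_le_pow_left₀ (abs_nonneg _) (hkey i hi) 2
      _ = B'.card * (T / s) ^ 2 := by rw [Finset.sum_const, nsmul_eq_mul]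
      _ ≤ s * (T / s) ^ 2 := by
          apply mul_le_mul_of_nonneg_right _ (by positivity)
          exact_mod_cast hcard'
      _ = T ^ 2 / s := by field_simp
  calc Real.sqrt (∑ i ∈ B', h i ^ 2) ≤ Real.sqrt (T ^ 2 / s) := Real.sqrt_le_sqrt hsum
    _ = T / Real.sqrt s := by rw [Real.sqrt_div (sq_nonneg T), Real.sqrt_sq hT0]

lemma mulVec_sum_pt {M N κ : Type*} [Fintype M] [Fintype N] (A : Matrix M N ℝ)
    (t : Finset κ) (F : κ → N → ℝ) (mj : M) :
    A.mulVec (fun i => ∑ j ∈ t, F j i) mj = ∑ j ∈ t, A.mulVec (F j) mj := by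
  unfold Matrix.mulVec dotProduct
  simp_rw [Finset.mul_sum]
  rw [Finset.sum_comm]

lemma mulVec_add_pt {M N : Type*} [Fintype M] [Fintype N] (A : Matrix M N ℝ)
    (x y : N → ℝ) (mj : M) :
    A.mulVec (fun i => x i + y i) mj = A.mulVec x mj + A.mulVec y mj := by
  unfold Matrix.mulVec dotProduct
  simp_rw [mul_add]
  rw [Finset.sum_add_distrib]

lemma mulVec_sub_pt {M N : Type*} [Fintype M] [Fintype N] (A : Matrix M N ℝ)
    (x y : N → ℝ) (mj : M) :
    A.mulVec (fun i => x i - y i) mj = A.mulVec x mj - A.mulVec y mj := by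
  unfold Matrix.mulVec dotProduct
  simp_rw [mul_sub]
  rw [Finset.sum_sub_distrib]


end SR

set_option maxHeartbeats 1000000 in
/-- Sparse recovery with RIP matrices.  If `A` satisfies `RIP(2s, δ)` with
`δ < √2 - 1`, `y = A f + w` with `‖w‖₂ ≤ ε`, and `f_s` is the best `s`-sparse approximation
of `f` (keeping the `s` largest-magnitude entries), then any `ℓ¹` minimizer `f̂` over
`{g : ‖y - A g‖₂ ≤ ε}` satisfies `‖f - f̂‖₂ ≤ C₁ ε + C₂ ‖f - f_s‖₁ / √s`, with constants
depending only on `s` and `δ`. -/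
theorem sparse_recovery_with_RIP
    (s : ℕ) (hs : 1 ≤ s) (δ : ℝ) (hδ0 : 0 < δ) (hδ : δ < Real.sqrt 2 - 1) :
    ∃ C₁ C₂ : ℝ,
      ∀ (m N : ℕ) (A : Matrix (Fin m) (Fin N) ℝ),
        IsRIP A (2 * s) δ →
        ∀ (f : Fin N → ℝ) (w : Fin m → ℝ) (ε : ℝ), 0 < ε →
          Real.sqrt (∑ j, w j ^ 2) ≤ ε →
          ∀ y : Fin m → ℝ, y = A.mulVec f + w →
          ∀ fs : Fin N → ℝ,
            (∃ T : Finset (Fin N), T.card = s ∧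
              (∀ i ∈ T, ∀ j ∉ T, |f j| ≤ |f i|) ∧
              fs = fun i => if i ∈ T then f i else 0) →
          ∀ fhat : Fin N → ℝ,
            Real.sqrt (∑ j, (y j - A.mulVec fhat j) ^ 2) ≤ ε →
            (∀ g : Fin N → ℝ,
              Real.sqrt (∑ j, (y j - A.mulVec g j) ^ 2) ≤ ε →
              ∑ i, |fhat i| ≤ ∑ i, |g i|) →
            Real.sqrt (∑ i, (f i - fhat i) ^ 2)
              ≤ C₁ * ε + C₂ * (∑ i, |f i - fs i|) / Real.sqrt s := by
  classical
  obtain ⟨ss, hss⟩ : ∃ x : ℝ, x = Real.sqrt (s : ℝ) := ⟨_, rfl⟩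
  have hsspos : (0:ℝ) < ss := by
    rw [hss]
    exact Real.sqrt_pos.mpr (by exact_mod_cast Nat.lt_of_lt_of_le Nat.zero_lt_one hs)
  obtain ⟨a1, ha1⟩ : ∃ x : ℝ, x = Real.sqrt (1 + δ) := ⟨_, rfl⟩
  obtain ⟨a2, ha2⟩ : ∃ x : ℝ, x = Real.sqrt 2 := ⟨_, rfl⟩
  rw [← ha2] at hδ
  have ha2sq : a2 ^ 2 = 2 := by rw [ha2]; exact Real.sq_sqrt (by norm_num)
  have ha2pos : 0 < a2 := by rw [ha2]; exact Real.sqrt_pos.mpr (by norm_num)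
  have ha1pos : 0 < a1 := by rw [ha1]; exact Real.sqrt_pos.mpr (by linarith)
  obtain ⟨β, hβdef⟩ : ∃ x : ℝ, x = 1 - (1 + a2) * δ := ⟨_, rfl⟩
  have hβpos : 0 < β := by rw [hβdef]; nlinarith [hδ, ha2sq, ha2pos]
  have hssne : ss ≠ 0 := ne_of_gt hsspos
  have hβne : β ≠ 0 := ne_of_gt hβpos
  refine ⟨4 * a1 / β, 4 * a2 * δ / β + 2, ?_⟩
  intro m N A hA f w ε hε hw y hy fs hfs fhat hfeas hmin
  obtain ⟨T0, hT0card, -, hfseq⟩ := hfs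
  set h : Fin N → ℝ := fun i => fhat i - f i with hh
  have happ : ∀ i, h i = fhat i - f i := fun _ => rfl
  set S : Finset (Fin N) := T0ᶜ with hS
  obtain ⟨L, B, hBsub, hBdisj, hBcover, hBcard, hBfull, hBmono⟩ := SR.exists_blocks S h hs
  have hBnotT0 : ∀ j, ∀ i ∈ B j, i ∉ T0 := by
    intro j i hij
    have := hBsub j hij
    rw [hS, Finset.mem_compl] at this
    exact this
  have hBempty : B L = ∅ := by
    rw [Finset.eq_empty_iff_forall_notMem]
    intro i hi
    have hiS : i ∈ S := hBsub L hi
    rw [hBcover, Finset.mem_biUnion] at hiS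
    obtain ⟨j, hjL, hij⟩ := hiS
    have hne : j ≠ L := by rw [Finset.mem_range] at hjL; omega
    exact Finset.disjoint_left.mp (hBdisj j L hne) hij hi
  have hcoverK : S = (Finset.range (L + 1)).biUnion B := by
    rw [Finset.range_add_one, Finset.biUnion_insert, hBempty, Finset.empty_union, ← hBcover]
  have hpd : ∀ t : Finset ℕ, (↑t : Set ℕ).PairwiseDisjoint B :=
    fun t j _ j' _ hne => hBdisj j j' hne
  set restr : Finset (Fin N) → Fin N → ℝ := fun T i => if i ∈ T then h i else 0 with hrestr
  have hrapp : ∀ (T : Finset (Fin N)) i, restr T i = if i ∈ T then h i else 0 := fun _ _ => rfl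
  have hr0 : ∀ (T : Finset (Fin N)), ∀ i ∉ T, restr T i = 0 := by
    intro T i hi; rw [hrapp, if_neg hi]
  have hrsq : ∀ T : Finset (Fin N), ∑ i, restr T i ^ 2 = ∑ i ∈ T, h i ^ 2 := by
    intro T
    exact SR.sum_fun_restrict T (fun i => h i ^ 2) (fun i => restr T i ^ 2)
      (fun i hi => by show restr T i ^ 2 = h i ^ 2; rw [hrapp, if_pos hi])
      (fun i hi => by show restr T i ^ 2 = 0; rw [hrapp, if_neg hi]; ring)
  have hsq_nonneg : ∀ T : Finset (Fin N), (0:ℝ) ≤ ∑ i ∈ T, h i ^ 2 :=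
    fun T => Finset.sum_nonneg fun i _ => sq_nonneg _
  obtain ⟨X2, hX2⟩ : ∃ x : ℝ, x = ∑ i ∈ T0, h i ^ 2 + ∑ i ∈ B 0, h i ^ 2 := ⟨_, rfl⟩
  have hX2nn : 0 ≤ X2 := by rw [hX2]; exact add_nonneg (hsq_nonneg _) (hsq_nonneg _)
  obtain ⟨X, hX⟩ : ∃ x : ℝ, x = Real.sqrt X2 := ⟨_, rfl⟩
  have hXnn : 0 ≤ X := by rw [hX]; exact Real.sqrt_nonneg _
  have hXsq : X ^ 2 = X2 := by rw [hX]; exact Real.sq_sqrt hX2nn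
  obtain ⟨Sig, hSig⟩ :
      ∃ x : ℝ, x = ∑ j ∈ Finset.range L, Real.sqrt (∑ i ∈ B (j + 1), h i ^ 2) := ⟨_, rfl⟩
  have hSignn : 0 ≤ Sig := by
    rw [hSig]; exact Finset.sum_nonneg fun j _ => Real.sqrt_nonneg _
  obtain ⟨Es, hEs⟩ : ∃ x : ℝ, x = ∑ i ∈ S, |f i| := ⟨_, rfl⟩
  have hEsnn : 0 ≤ Es := by rw [hEs]; exact Finset.sum_nonneg fun i _ => abs_nonneg _
  obtain ⟨q, hq⟩ : ∃ x : ℝ, x = Es / ss := ⟨_, rfl⟩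
  have hqnn : 0 ≤ q := by rw [hq]; exact div_nonneg hEsnn hsspos.le
  -- ‖f - fs‖₁ = Es
  have hEeq : ∑ i, |f i - fs i| = Es := by
    rw [hEs]
    refine SR.sum_fun_restrict S (fun i => |f i|) (fun i => |f i - fs i|) ?_ ?_
    · intro i hi
      have hi' : i ∉ T0 := by rwa [hS, Finset.mem_compl] at hi
      rw [hfseq]; simp [hi']
    · intro i hi
      have hi' : i ∈ T0 := by rw [hS, Finset.mem_compl, not_not] at hi; exact hi
      rw [hfseq]; simp [hi']
  -- f is feasible, so fhat has smaller ℓ¹ norm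
  have hyf : ∀ mj, y mj - A.mulVec f mj = w mj := by
    intro mj; rw [hy]; simp
  have hl1 : ∑ i, |fhat i| ≤ ∑ i, |f i| := by
    apply hmin
    calc Real.sqrt (∑ mj, (y mj - A.mulVec f mj) ^ 2)
        = Real.sqrt (∑ mj, w mj ^ 2) := by
          rw [Finset.sum_congr rfl fun mj _ => by rw [hyf mj]]
      _ ≤ ε := hw
  -- tube constraint
  have htube : Real.sqrt (∑ mj, A.mulVec h mj ^ 2) ≤ 2 * ε := by
    have hpt : ∀ mj, A.mulVec h mj = (A.mulVec fhat mj - y mj) + w mj := by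
      intro mj
      have h1 : A.mulVec h mj = A.mulVec fhat mj - A.mulVec f mj :=
        SR.mulVec_sub_pt A fhat f mj
      have h2 := hyf mj
      rw [h1]; linarith
    have he1 : ∑ mj, (A.mulVec fhat mj - y mj) ^ 2 = ∑ mj, (y mj - A.mulVec fhat mj) ^ 2 :=
      Finset.sum_congr rfl fun mj _ => by ring
    calc Real.sqrt (∑ mj, A.mulVec h mj ^ 2)
        = Real.sqrt (∑ mj, ((A.mulVec fhat mj - y mj) + w mj) ^ 2) := by
          rw [Finset.sum_congr rfl fun mj _ => by rw [hpt mj]]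
      _ ≤ Real.sqrt (∑ mj, (A.mulVec fhat mj - y mj) ^ 2) + Real.sqrt (∑ mj, w mj ^ 2) :=
          SR.sqrt_sum_sq_add_le _ _
      _ ≤ ε + ε := add_le_add (by rw [he1]; exact hfeas) hw
      _ = 2 * ε := by ring
  -- decomposition of h
  have hdecomp : ∀ i, h i = restr T0 i + ∑ j ∈ Finset.range (L + 1), restr (B j) i := by
    intro i
    by_cases hi : i ∈ T0
    · have hnot : ∀ j, i ∉ B j := fun j hij => hBnotT0 j i hij hi
      rw [hrapp, if_pos hi,
        Finset.sum_eq_zero fun j _ => by rw [hrapp, if_neg (hnot j)], add_zero]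
    · have hiS : i ∈ S := by rw [hS, Finset.mem_compl]; exact hi
      rw [hcoverK, Finset.mem_biUnion] at hiS
      obtain ⟨j0, hj0, hij0⟩ := hiS
      have hsingle : ∑ j ∈ Finset.range (L + 1), restr (B j) i = restr (B j0) i := by
        refine Finset.sum_eq_single_of_mem j0 hj0 ?_
        intro j hj hne
        have : i ∉ B j := fun hij => Finset.disjoint_left.mp (hBdisj j j0 hne) hij hij0
        rw [hrapp, if_neg this]
      rw [hrapp, if_neg hi, zero_add, hsingle, hrapp, if_pos hij0]
  have hAdecomp : ∀ mj, A.mulVec h mj =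
      A.mulVec (restr T0) mj + ∑ j ∈ Finset.range (L + 1), A.mulVec (restr (B j)) mj := by
    intro mj
    have hfn : h = fun i => restr T0 i + ∑ j ∈ Finset.range (L + 1), restr (B j) i :=
      funext fun i => hdecomp i
    calc A.mulVec h mj
        = A.mulVec (fun i => restr T0 i + ∑ j ∈ Finset.range (L + 1), restr (B j) i) mj := by
          rw [← hfn]
      _ = A.mulVec (restr T0) mj
          + A.mulVec (fun i => ∑ j ∈ Finset.range (L + 1), restr (B j) i) mj :=
          SR.mulVec_add_pt A _ _ mj
      _ = A.mulVec (restr T0) mj + ∑ j ∈ Finset.range (L + 1), A.mulVec (restr (B j)) mj := by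
          rw [SR.mulVec_sum_pt]
  set g : Fin N → ℝ := fun i => restr T0 i + restr (B 0) i with hgdef
  have hgapp : ∀ i, g i = restr T0 i + restr (B 0) i := fun _ => rfl
  have hgsq : ∑ i, g i ^ 2 = X2 := by
    rw [hX2, ← hrsq T0, ← hrsq (B 0), ← Finset.sum_add_distrib]
    refine Finset.sum_congr rfl fun i _ => ?_
    rw [hgapp, hrapp, hrapp]
    by_cases hi : i ∈ T0
    · rw [if_pos hi, if_neg (fun hib => hBnotT0 0 i hib hi)]; ring
    · rw [if_neg hi]; ring
  have hgsparse : IsSparse (2 * s) g := by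
    refine ⟨T0 ∪ B 0, ?_, ?_⟩
    · calc (T0 ∪ B 0).card ≤ T0.card + (B 0).card := Finset.card_union_le _ _
        _ ≤ 2 * s := by have := hBcard 0; omega
    · intro i hi
      rw [Finset.mem_union] at hi; push_neg at hi
      rw [hgapp, hr0 _ _ hi.1, hr0 _ _ hi.2, add_zero]
  obtain ⟨P, hP⟩ : ∃ x : ℝ, x = ∑ mj, A.mulVec g mj ^ 2 := ⟨_, rfl⟩
  have hPlow : (1 - δ) * X2 ≤ P := by rw [hP, ← hgsq]; exact (hA g hgsparse).1
  have hPhigh : P ≤ (1 + δ) * X2 := by rw [hP, ← hgsq]; exact (hA g hgsparse).2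
  have hsqrtP : Real.sqrt P ≤ a1 * X := by
    calc Real.sqrt P ≤ Real.sqrt ((1 + δ) * X2) := Real.sqrt_le_sqrt hPhigh
      _ = a1 * X := by rw [Real.sqrt_mul (by linarith : (0:ℝ) ≤ 1 + δ) X2, ← ha1, ← hX]
  -- restricted orthogonality bounds
  have hRO : ∀ j ∈ Finset.range L,
      |∑ mj, A.mulVec g mj * A.mulVec (restr (B (j + 1))) mj|
        ≤ a2 * δ * X * Real.sqrt (∑ i ∈ B (j + 1), h i ^ 2) := by
    intro j _
    have hd1 : Disjoint T0 (B (j + 1)) := by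
      rw [Finset.disjoint_left]
      exact fun i hi hbi => hBnotT0 (j + 1) i hbi hi
    have hd2 : Disjoint (B 0) (B (j + 1)) := hBdisj 0 (j + 1) (by omega)
    have h1 := SR.restricted_orthogonality hδ0.le hA (le_of_eq hT0card) (hBcard (j + 1)) hd1
      (fun i hi => hr0 T0 i hi) (fun i hi => hr0 _ i hi)
    have h2 := SR.restricted_orthogonality hδ0.le hA (hBcard 0) (hBcard (j + 1)) hd2
      (fun i hi => hr0 _ i hi) (fun i hi => hr0 _ i hi)
    rw [hrsq, hrsq] at h1
    rw [hrsq, hrsq] at h2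
    have hsum : ∑ mj, A.mulVec g mj * A.mulVec (restr (B (j + 1))) mj
        = (∑ mj, A.mulVec (restr T0) mj * A.mulVec (restr (B (j + 1))) mj)
          + ∑ mj, A.mulVec (restr (B 0)) mj * A.mulVec (restr (B (j + 1))) mj := by
      rw [← Finset.sum_add_distrib]
      refine Finset.sum_congr rfl fun mj _ => ?_
      rw [show A.mulVec g mj = A.mulVec (restr T0) mj + A.mulVec (restr (B 0)) mj from
        SR.mulVec_add_pt A _ _ mj]
      ring
    rw [hsum]
    have hs2 : Real.sqrt (∑ i ∈ T0, h i ^ 2) + Real.sqrt (∑ i ∈ B 0, h i ^ 2) ≤ a2 * X := by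
      have := SR.sqrt_add_le_sqrt2 (hsq_nonneg T0) (hsq_nonneg (B 0))
      rw [← hX2, ← hX, ← ha2] at this
      exact this
    calc |(∑ mj, A.mulVec (restr T0) mj * A.mulVec (restr (B (j + 1))) mj)
          + ∑ mj, A.mulVec (restr (B 0)) mj * A.mulVec (restr (B (j + 1))) mj|
        ≤ |∑ mj, A.mulVec (restr T0) mj * A.mulVec (restr (B (j + 1))) mj|
          + |∑ mj, A.mulVec (restr (B 0)) mj * A.mulVec (restr (B (j + 1))) mj| := abs_add_le _ _
      _ ≤ δ * Real.sqrt (∑ i ∈ T0, h i ^ 2) * Real.sqrt (∑ i ∈ B (j + 1), h i ^ 2)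
          + δ * Real.sqrt (∑ i ∈ B 0, h i ^ 2) * Real.sqrt (∑ i ∈ B (j + 1), h i ^ 2) :=
          add_le_add h1 h2
      _ = δ * (Real.sqrt (∑ i ∈ T0, h i ^ 2) + Real.sqrt (∑ i ∈ B 0, h i ^ 2))
          * Real.sqrt (∑ i ∈ B (j + 1), h i ^ 2) := by ring
      _ ≤ δ * (a2 * X) * Real.sqrt (∑ i ∈ B (j + 1), h i ^ 2) := by
          apply mul_le_mul_of_nonneg_right _ (Real.sqrt_nonneg _)
          exact mul_le_mul_of_nonneg_left hs2 hδ0.le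
      _ = a2 * δ * X * Real.sqrt (∑ i ∈ B (j + 1), h i ^ 2) := by ring
  -- P identity
  have hPid : P = (∑ mj, A.mulVec g mj * A.mulVec h mj)
      - ∑ j ∈ Finset.range L, ∑ mj, A.mulVec g mj * A.mulVec (restr (B (j + 1))) mj := by
    have e1 : ∀ mj, A.mulVec h mj
        = A.mulVec g mj + ∑ j ∈ Finset.range L, A.mulVec (restr (B (j + 1))) mj := by
      intro mj
      rw [hAdecomp mj, Finset.sum_range_succ',
        show A.mulVec g mj = A.mulVec (restr T0) mj + A.mulVec (restr (B 0)) mj from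
          SR.mulVec_add_pt A _ _ mj]
      ring
    have e2 : ∑ mj, A.mulVec g mj * A.mulVec h mj
        = P + ∑ j ∈ Finset.range L, ∑ mj, A.mulVec g mj * A.mulVec (restr (B (j + 1))) mj := by
      calc ∑ mj, A.mulVec g mj * A.mulVec h mj
          = ∑ mj, (A.mulVec g mj ^ 2
            + ∑ j ∈ Finset.range L, A.mulVec g mj * A.mulVec (restr (B (j + 1))) mj) := by
            refine Finset.sum_congr rfl fun mj _ => ?_
            rw [e1 mj, mul_add, Finset.mul_sum]
            ring
        _ = P + ∑ mj, ∑ j ∈ Finset.range L,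
              A.mulVec g mj * A.mulVec (restr (B (j + 1))) mj := by
            rw [hP]; exact Finset.sum_add_distrib
        _ = P + ∑ j ∈ Finset.range L, ∑ mj,
              A.mulVec g mj * A.mulVec (restr (B (j + 1))) mj := by rw [Finset.sum_comm]
    linarith [e2]
  -- core inequality
  have hcore : (1 - δ) * X2 ≤ a1 * X * (2 * ε) + a2 * δ * X * Sig := by
    have hb1 : ∑ mj, A.mulVec g mj * A.mulVec h mj ≤ Real.sqrt P * (2 * ε) := by
      calc ∑ mj, A.mulVec g mj * A.mulVec h mj
          ≤ Real.sqrt (∑ mj, A.mulVec g mj ^ 2) * Real.sqrt (∑ mj, A.mulVec h mj ^ 2) :=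
            SR.sum_mul_le _ _
        _ ≤ Real.sqrt P * (2 * ε) := by
            rw [← hP]
            exact mul_le_mul_of_nonneg_left htube (Real.sqrt_nonneg _)
    have hb2 : -(a2 * δ * X * Sig)
        ≤ ∑ j ∈ Finset.range L, ∑ mj, A.mulVec g mj * A.mulVec (restr (B (j + 1))) mj := by
      have e : -(a2 * δ * X * Sig)
          = ∑ j ∈ Finset.range L, -(a2 * δ * X * Real.sqrt (∑ i ∈ B (j + 1), h i ^ 2)) := by
        rw [hSig, Finset.mul_sum, ← Finset.sum_neg_distrib]
      rw [e]
      exact Finset.sum_le_sum fun j hj => (abs_le.mp (hRO j hj)).1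
    have hb3 : Real.sqrt P * (2 * ε) ≤ a1 * X * (2 * ε) :=
      mul_le_mul_of_nonneg_right hsqrtP (by linarith)
    linarith [hPlow, hPid, hb1, hb2, hb3]
  -- cone constraint
  have hcone : ∑ i ∈ S, |h i| ≤ ∑ i ∈ T0, |h i| + 2 * Es := by
    have hsplit1 : ∑ i ∈ T0, |fhat i| + ∑ i ∈ S, |fhat i| = ∑ i, |fhat i| := by
      rw [hS]; exact Finset.sum_add_sum_compl T0 _
    have hsplit2 : ∑ i ∈ T0, |f i| + ∑ i ∈ S, |f i| = ∑ i, |f i| := by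
      rw [hS]; exact Finset.sum_add_sum_compl T0 _
    have ht1 : ∑ i ∈ T0, |f i| - ∑ i ∈ T0, |h i| ≤ ∑ i ∈ T0, |fhat i| := by
      rw [← Finset.sum_sub_distrib]
      refine Finset.sum_le_sum fun i _ => ?_
      have h1 : |f i| ≤ |fhat i| + |h i| := by
        have e : f i = fhat i + -(h i) := by rw [happ]; ring
        calc |f i| = |fhat i + -(h i)| := by rw [← e]
          _ ≤ |fhat i| + |-(h i)| := abs_add_le _ _
          _ = |fhat i| + |h i| := by rw [abs_neg]
      linarith
    have ht2 : ∑ i ∈ S, |h i| - ∑ i ∈ S, |f i| ≤ ∑ i ∈ S, |fhat i| := by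
      rw [← Finset.sum_sub_distrib]
      refine Finset.sum_le_sum fun i _ => ?_
      have h1 : |h i| ≤ |fhat i| + |f i| := by
        calc |h i| = |fhat i + -(f i)| := by rw [happ]; ring_nf
          _ ≤ |fhat i| + |-(f i)| := abs_add_le _ _
          _ = |fhat i| + |f i| := by rw [abs_neg]
      linarith
    rw [hEs]
    linarith [hl1, hsplit1, hsplit2, ht1, ht2]
  have hl1T0 : ∑ i ∈ T0, |h i| ≤ ss * X := by
    calc ∑ i ∈ T0, |h i|
        ≤ Real.sqrt T0.card * Real.sqrt (∑ i ∈ T0, h i ^ 2) := SR.l1_le_sqrt_card_mul_l2 T0 h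
      _ = ss * Real.sqrt (∑ i ∈ T0, h i ^ 2) := by rw [hT0card, ← hss]
      _ ≤ ss * X := by
          refine mul_le_mul_of_nonneg_left ?_ hsspos.le
          rw [hX]
          exact Real.sqrt_le_sqrt (by rw [hX2]; linarith [hsq_nonneg (B 0)])
  -- block chain bound
  have hSigle : Sig ≤ (∑ i ∈ S, |h i|) / ss := by
    have hstep : ∀ j ∈ Finset.range L, Real.sqrt (∑ i ∈ B (j + 1), h i ^ 2)
        ≤ (∑ i ∈ B j, |h i|) / ss := by
      intro j _
      have := SR.block_l2_le (B (j + 1)) (B j) h hs (hBcard (j + 1)) (hBfull j) (hBmono j)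
      rwa [← hss] at this
    have hScover : ∑ i ∈ S, |h i| = ∑ j ∈ Finset.range (L + 1), ∑ i ∈ B j, |h i| := by
      conv_lhs => rw [hcoverK]
      exact Finset.sum_biUnion (hpd _)
    calc Sig ≤ ∑ j ∈ Finset.range L, (∑ i ∈ B j, |h i|) / ss := by
          rw [hSig]; exact Finset.sum_le_sum hstep
      _ = (∑ j ∈ Finset.range L, ∑ i ∈ B j, |h i|) / ss := by rw [Finset.sum_div]
      _ ≤ (∑ j ∈ Finset.range (L + 1), ∑ i ∈ B j, |h i|) / ss := by
          refine div_le_div_of_nonneg_right ?_ hsspos.le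
          refine Finset.sum_le_sum_of_subset_of_nonneg
            (Finset.range_subset_range.mpr (Nat.le_succ L)) ?_
          exact fun j _ _ => Finset.sum_nonneg fun i _ => abs_nonneg _
      _ = (∑ i ∈ S, |h i|) / ss := by rw [← hScover]
  have hSigX : Sig ≤ X + 2 * q := by
    have h1 : Sig ≤ (ss * X + 2 * Es) / ss := by
      refine hSigle.trans ?_
      refine div_le_div_of_nonneg_right ?_ hsspos.le
      linarith [hcone, hl1T0]
    have h2 : (ss * X + 2 * Es) / ss = X + 2 * q := by
      rw [hq]; field_simp
    linarith
  -- β bound on X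
  have hbX : β * X ≤ 2 * a1 * ε + 2 * a2 * δ * q := by
    have e1 : a2 * δ * X * Sig ≤ a2 * δ * X * (X + 2 * q) :=
      mul_le_mul_of_nonneg_left hSigX (mul_nonneg (mul_nonneg ha2pos.le hδ0.le) hXnn)
    have hmul : β * X * X ≤ (2 * a1 * ε + 2 * a2 * δ * q) * X := by
      nlinarith [hcore, e1, hXsq]
    rcases eq_or_lt_of_le hXnn with hX0 | hX0
    · rw [← hX0, mul_zero]
      have t1 : 0 ≤ 2 * a1 * ε :=
        mul_nonneg (mul_nonneg (by norm_num) ha1pos.le) hε.le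
      have t2 : 0 ≤ 2 * a2 * δ * q :=
        mul_nonneg (mul_nonneg (mul_nonneg (by norm_num) ha2pos.le) hδ0.le) hqnn
      linarith
    · exact le_of_mul_le_mul_right hmul hX0
  -- final assembly
  have hfinal2 : ∑ i, h i ^ 2 ≤ X2 + Sig ^ 2 := by
    have hsplitU : ∑ i, h i ^ 2 = ∑ i ∈ T0, h i ^ 2 + ∑ i ∈ S, h i ^ 2 := by
      rw [hS]; exact (Finset.sum_add_sum_compl T0 _).symm
    have hSsum : ∑ i ∈ S, h i ^ 2 = ∑ j ∈ Finset.range (L + 1), ∑ i ∈ B j, h i ^ 2 := by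
      conv_lhs => rw [hcoverK]
      exact Finset.sum_biUnion (hpd _)
    have htail : ∑ j ∈ Finset.range L, ∑ i ∈ B (j + 1), h i ^ 2 ≤ Sig ^ 2 := by
      rw [Finset.sum_congr rfl fun j (_ : j ∈ Finset.range L) =>
        (Real.sq_sqrt (hsq_nonneg (B (j + 1)))).symm]
      rw [hSig]
      exact SR.sum_sq_le_sq_sum _ _ fun j _ => Real.sqrt_nonneg _
    rw [hsplitU, hSsum, Finset.sum_range_succ', hX2]
    linarith [htail]
  have hnormh : Real.sqrt (∑ i, h i ^ 2) ≤ X + Sig := by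
    calc Real.sqrt (∑ i, h i ^ 2) ≤ Real.sqrt (X2 + Sig ^ 2) := Real.sqrt_le_sqrt hfinal2
      _ ≤ Real.sqrt ((X + Sig) ^ 2) := Real.sqrt_le_sqrt (by nlinarith [hXsq, hXnn, hSignn])
      _ = X + Sig := Real.sqrt_sq (add_nonneg hXnn hSignn)
  have hXle : X ≤ (2 * a1 * ε + 2 * a2 * δ * q) / β := by
    rw [le_div_iff₀ hβpos]
    linarith [hbX]
  have hgoalLHS : ∑ i, (f i - fhat i) ^ 2 = ∑ i, h i ^ 2 :=
    Finset.sum_congr rfl fun i _ => by rw [happ]; ring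
  rw [hgoalLHS, hEeq, ← hss]
  have etarget : 4 * a1 / β * ε + (4 * a2 * δ / β + 2) * Es / ss
      = 2 * ((2 * a1 * ε + 2 * a2 * δ * q) / β) + 2 * q := by
    rw [hq]; field_simp; ring
  calc Real.sqrt (∑ i, h i ^ 2) ≤ X + Sig := hnormh
    _ ≤ X + (X + 2 * q) := by linarith [hSigX]
    _ = 2 * X + 2 * q := by ring
    _ ≤ 2 * ((2 * a1 * ε + 2 * a2 * δ * q) / β) + 2 * q := by linarith [hXle]
    _ = 4 * a1 / β * ε + (4 * a2 * δ / β + 2) * Es / ss := etarget.symm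
end

section
/- There exist constants c₁, c₂ > 0 depending only on δ_s ∈ (0,1) such that the following holds. Let h be a random mask on an n₁×n₂ grid whose entries are i.i.d., equal to +√(d/n) with probability 1/2 and −√(d/n) with probability 1/2, and let A = D_sub R be the m×n spatial-domain CCA sensing matrix built from h. If m ≥ c₁ s² log n, then A satisfies RIP(s, δ_s) with probability at least 1 − 2n² exp(−c₂ m / s²). -/
open Finset MeasureTheory ProbabilityTheory

/-- The spatial-domain compressive coded aperture (CCA) sensing matrix built from a mask
`h` on an `n₁ × n₂` grid: 2D circular convolution with `h` followed by retaining one entry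
per `d₁ × d₂` block (pointwise subsampling).  Written with 0-based indices,
`A (l₁,l₂) (k₁,k₂) = h (l₁ d₁ - k₁ mod n₁) (l₂ d₂ - k₂ mod n₂)`. -/
def ccaMatrix (n₁ n₂ d₁ d₂ : ℕ) (h : ZMod n₁ → ZMod n₂ → ℝ) :
    Matrix (Fin (n₁ / d₁) × Fin (n₂ / d₂)) (ZMod n₁ × ZMod n₂) ℝ :=
  fun l k => h ((((l.1 : ℕ) * d₁ : ℕ) : ZMod n₁) - k.1) ((((l.2 : ℕ) * d₂ : ℕ) : ZMod n₂) - k.2)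

open Real
open scoped ENNReal

section AuxProb

variable {Ω : Type*} {mΩ : MeasurableSpace Ω} {μ : Measure Ω} [IsProbabilityMeasure μ]

lemma half_squeeze {x y : ℝ≥0∞} (hx : 1/2 ≤ x) (hy : 1/2 ≤ y) (hxy : x + y ≤ 1) :
    x = 1/2 ∧ y = 1/2 := by
  constructor
  · refine le_antisymm ?_ hx
    have h1 : x + 1/2 ≤ 1/2 + 1/2 := by
      calc x + 1/2 ≤ x + y := by gcongr
      _ ≤ 1 := hxy
      _ = 1/2 + 1/2 := by rw [ENNReal.add_halves]
    rw [add_comm x (1/2), add_comm (1/2 : ℝ≥0∞) (1/2)] at h1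
    exact (ENNReal.add_le_add_iff_left (by norm_num)).1 h1
  · refine le_antisymm ?_ hy
    have h1 : y + 1/2 ≤ 1/2 + 1/2 := by
      calc y + 1/2 ≤ y + x := by gcongr
      _ = x + y := add_comm _ _
      _ ≤ 1 := hxy
      _ = 1/2 + 1/2 := by rw [ENNReal.add_halves]
    rw [add_comm y (1/2), add_comm (1/2 : ℝ≥0∞) (1/2)] at h1
    exact (ENNReal.add_le_add_iff_left (by norm_num)).1 h1

lemma half_half_integral (X : Ω → ℝ) (hX : Measurable X)
    (h1 : μ {ω | X ω = 1} = 1/2) (h2 : μ {ω | X ω = -1} = 1/2) (g : ℝ → ℝ) :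
    Integrable (fun ω => g (X ω)) μ ∧ ∫ ω, g (X ω) ∂μ = (g 1 + g (-1)) / 2 := by
  set U : Set Ω := X ⁻¹' {1} with hU
  set V : Set Ω := X ⁻¹' {-1} with hV
  have hUm : MeasurableSet U := hX (measurableSet_singleton 1)
  have hVm : MeasurableSet V := hX (measurableSet_singleton (-1))
  have hU12 : μ U = 1/2 := h1
  have hV12 : μ V = 1/2 := h2
  have hUV : Disjoint U V := by
    rw [Set.disjoint_left]
    rintro ω h1' h2'
    simp only [hU, hV, Set.mem_preimage, Set.mem_singleton_iff] at h1' h2'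
    rw [h1'] at h2'; norm_num at h2'
  have hfull : μ (U ∪ V) = 1 := by
    rw [measure_union hUV hVm, hU12, hV12, ENNReal.add_halves]
  have hae : ∀ᵐ ω ∂μ, ω ∈ U ∪ V := by
    rw [ae_iff]
    have : {ω | ¬ ω ∈ U ∪ V} = (U ∪ V)ᶜ := rfl
    rw [this, measure_compl (hUm.union hVm) (measure_ne_top _ _), hfull, measure_univ, tsub_self]
  set h : Ω → ℝ := fun ω => U.indicator (fun _ => g 1) ω + V.indicator (fun _ => g (-1)) ω with hh
  have heq : (fun ω => g (X ω)) =ᵐ[μ] h := by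
    filter_upwards [hae] with ω hω
    rcases hω with hω | hω
    · have hnv : ω ∉ V := fun h' => (Set.disjoint_left.1 hUV hω) h'
      simp only [hh, Set.indicator_of_mem hω, Set.indicator_of_notMem hnv, add_zero]
      simp only [hU, Set.mem_preimage, Set.mem_singleton_iff] at hω
      rw [hω]
    · have hnu : ω ∉ U := fun h' => (Set.disjoint_left.1 hUV h') hω
      simp only [hh, Set.indicator_of_mem hω, Set.indicator_of_notMem hnu, zero_add]
      simp only [hV, Set.mem_preimage, Set.mem_singleton_iff] at hω
      rw [hω]
  have hint1 : Integrable (fun ω => U.indicator (fun _ => g 1) ω) μ :=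
    (integrable_indicator_iff hUm).2 (integrableOn_const (measure_ne_top _ _))
  have hint2 : Integrable (fun ω => V.indicator (fun _ => g (-1)) ω) μ :=
    (integrable_indicator_iff hVm).2 (integrableOn_const (measure_ne_top _ _))
  have hinth : Integrable h μ := hint1.add hint2
  refine ⟨hinth.congr heq.symm, ?_⟩
  rw [integral_congr_ae heq, hh]
  rw [integral_add hint1 hint2, integral_indicator_const _ hUm, integral_indicator_const _ hVm,
    measureReal_def, measureReal_def, hU12, hV12]
  have : ((1:ℝ≥0∞)/2).toReal = 1/2 := by norm_num
  rw [this]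
  simp only [smul_eq_mul]
  ring

lemma prod_sign_half {X Y : Ω → ℝ} (hX : Measurable X) (hY : Measurable Y)
    (hind : IndepFun X Y μ)
    (hX1 : μ {ω | X ω = 1} = 1/2) (hX2 : μ {ω | X ω = -1} = 1/2)
    (hY1 : μ {ω | Y ω = 1} = 1/2) (hY2 : μ {ω | Y ω = -1} = 1/2) :
    μ {ω | X ω * Y ω = 1} = 1/2 ∧ μ {ω | X ω * Y ω = -1} = 1/2 := by
  have hmeas1 : MeasurableSet {ω | X ω * Y ω = 1} := (hX.mul hY) (measurableSet_singleton 1)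
  have hmeas2 : MeasurableSet {ω | X ω * Y ω = -1} := (hX.mul hY) (measurableSet_singleton (-1))
  have hinter : ∀ (a b : ℝ), μ (X ⁻¹' {a} ∩ Y ⁻¹' {b}) = μ (X ⁻¹' {a}) * μ (Y ⁻¹' {b}) :=
    fun a b => hind.measure_inter_preimage_eq_mul _ _ (measurableSet_singleton a)
      (measurableSet_singleton b)
  have hXpre1 : μ (X ⁻¹' {1}) = 1/2 := hX1
  have hXpre2 : μ (X ⁻¹' {-1}) = 1/2 := hX2
  have hYpre1 : μ (Y ⁻¹' {1}) = 1/2 := hY1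
  have hYpre2 : μ (Y ⁻¹' {-1}) = 1/2 := hY2
  have hdisj : ∀ (a a' : ℝ), a ≠ a' → ∀ (b b' : ℝ),
      Disjoint (X ⁻¹' {a} ∩ Y ⁻¹' {b}) (X ⁻¹' {a'} ∩ Y ⁻¹' {b'}) := by
    intro a a' ha b b'
    rw [Set.disjoint_left]
    rintro ω ⟨h1', _⟩ ⟨h2', _⟩
    simp only [Set.mem_preimage, Set.mem_singleton_iff] at h1' h2'
    exact ha (h1'.symm.trans h2')
  have quarter : (1:ℝ≥0∞)/2 * (1/2) + 1/2 * (1/2) = 1/2 := by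
    rw [← add_mul, ENNReal.add_halves, one_mul]
  have hsub1 : (X ⁻¹' {1} ∩ Y ⁻¹' {1}) ∪ (X ⁻¹' {-1} ∩ Y ⁻¹' {-1}) ⊆ {ω | X ω * Y ω = 1} := by
    rintro ω (⟨h1', h2'⟩ | ⟨h1', h2'⟩) <;>
      simp only [Set.mem_preimage, Set.mem_singleton_iff] at h1' h2' <;>
      simp [Set.mem_setOf_eq, h1', h2']
  have hsub2 : (X ⁻¹' {1} ∩ Y ⁻¹' {-1}) ∪ (X ⁻¹' {-1} ∩ Y ⁻¹' {1}) ⊆ {ω | X ω * Y ω = -1} := by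
    rintro ω (⟨h1', h2'⟩ | ⟨h1', h2'⟩) <;>
      simp only [Set.mem_preimage, Set.mem_singleton_iff] at h1' h2' <;>
      simp [Set.mem_setOf_eq, h1', h2']
  have hm1 : (1:ℝ≥0∞)/2 ≤ μ {ω | X ω * Y ω = 1} := by
    calc (1:ℝ≥0∞)/2 = μ (X ⁻¹' {1} ∩ Y ⁻¹' {1}) + μ (X ⁻¹' {-1} ∩ Y ⁻¹' {-1}) := by
          rw [hinter, hinter, hXpre1, hYpre1, hXpre2, hYpre2, quarter]
      _ = μ ((X ⁻¹' {1} ∩ Y ⁻¹' {1}) ∪ (X ⁻¹' {-1} ∩ Y ⁻¹' {-1})) := by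
          rw [measure_union (hdisj 1 (-1) (by norm_num) 1 (-1))
            ((hX (measurableSet_singleton _)).inter (hY (measurableSet_singleton _)))]
      _ ≤ _ := measure_mono hsub1
  have hm2 : (1:ℝ≥0∞)/2 ≤ μ {ω | X ω * Y ω = -1} := by
    calc (1:ℝ≥0∞)/2 = μ (X ⁻¹' {1} ∩ Y ⁻¹' {-1}) + μ (X ⁻¹' {-1} ∩ Y ⁻¹' {1}) := by
          rw [hinter, hinter, hXpre1, hYpre2, hXpre2, hYpre1, quarter]
      _ = μ ((X ⁻¹' {1} ∩ Y ⁻¹' {-1}) ∪ (X ⁻¹' {-1} ∩ Y ⁻¹' {1})) := by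
          rw [measure_union (hdisj 1 (-1) (by norm_num) (-1) 1)
            ((hX (measurableSet_singleton _)).inter (hY (measurableSet_singleton _)))]
      _ ≤ _ := measure_mono hsub2
  have hdd : Disjoint {ω | X ω * Y ω = 1} {ω | X ω * Y ω = -1} := by
    rw [Set.disjoint_left]
    rintro ω h1' h2'
    simp only [Set.mem_setOf_eq] at h1' h2'
    rw [h1'] at h2'; norm_num at h2'
  have hsum : μ {ω | X ω * Y ω = 1} + μ {ω | X ω * Y ω = -1} ≤ 1 := by
    rw [← measure_union hdd hmeas2]
    exact prob_le_one
  exact half_squeeze hm1 hm2 hsum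

end AuxProb


section PairSums

variable {Ω : Type*} {mΩ : MeasurableSpace Ω} {μ : Measure Ω} [IsProbabilityMeasure μ]
variable {Γ : Type*} [MeasurableSpace Γ] {J : Type*} [DecidableEq Γ]

lemma mgf_pair_sum (ε : Γ → Ω → ℝ) (hmeas : ∀ v, Measurable (ε v))
    (hindep : iIndepFun ε μ)
    (hhalf : ∀ v, μ {ω | ε v ω = 1} = 1/2 ∧ μ {ω | ε v ω = -1} = 1/2)
    (a b : J → Γ) (t : ℝ) (s : Finset J) (hab : ∀ x ∈ s, a x ≠ b x)
    (hdisj : ∀ x ∈ s, ∀ y ∈ s, x ≠ y → ({a x, b x} : Finset Γ) ∩ {a y, b y} = ∅) :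
    Integrable (fun ω => Real.exp (t * ∑ x ∈ s, ε (a x) ω * ε (b x) ω)) μ ∧
      mgf (fun ω => ∑ x ∈ s, ε (a x) ω * ε (b x) ω) μ t = Real.cosh t ^ s.card := by
  classical
  induction s using Finset.induction_on with
  | empty =>
    simp only [sum_empty, mul_zero, Real.exp_zero, card_empty, pow_zero]
    refine ⟨integrable_const 1, ?_⟩
    have : mgf (fun _ : Ω => (0:ℝ)) μ t = 1 := by
      simp [mgf]
    simpa using this
  | @insert x s hx ih =>
    have hab' : ∀ y ∈ s, a y ≠ b y := fun y hy => hab y (mem_insert_of_mem hy)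
    have hdisj' : ∀ y ∈ s, ∀ z ∈ s, y ≠ z → ({a y, b y} : Finset Γ) ∩ {a z, b z} = ∅ :=
      fun y hy z hz => hdisj y (mem_insert_of_mem hy) z (mem_insert_of_mem hz)
    obtain ⟨ih_int, ih_mgf⟩ := ih hab' hdisj'
    set Y : Ω → ℝ := fun ω => ε (a x) ω * ε (b x) ω with hYdef
    set T : Ω → ℝ := fun ω => ∑ y ∈ s, ε (a y) ω * ε (b y) ω with hTdef
    have hYmeas : Measurable Y := (hmeas (a x)).mul (hmeas (b x))
    have hTmeas : Measurable T := Finset.measurable_sum s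
      (fun y _ => (hmeas (a y)).mul (hmeas (b y)))
    -- independence of Y and T
    have hYT : IndepFun Y T μ := by
      set P : Finset Γ := {a x, b x} with hP
      set Q : Finset Γ := s.biUnion (fun y => {a y, b y}) with hQ
      have hPQ : Disjoint P Q := by
        rw [Finset.disjoint_left]
        intro v hvP hvQ
        obtain ⟨y, hy, hvy⟩ := Finset.mem_biUnion.1 hvQ
        have hxy : x ≠ y := fun h => hx (h ▸ hy)
        have := hdisj x (mem_insert_self _ _) y (mem_insert_of_mem hy) hxy
        have : v ∈ ({a x, b x} : Finset Γ) ∩ {a y, b y} := Finset.mem_inter.2 ⟨hvP, hvy⟩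
        rw [hdisj x (mem_insert_self _ _) y (mem_insert_of_mem hy) hxy] at this
        exact absurd this (Finset.notMem_empty v)
      have base := hindep.indepFun_finset P Q hPQ hmeas
      have haP : a x ∈ P := by simp [hP]
      have hbP : b x ∈ P := by simp [hP]
      set φ : (P → ℝ) → ℝ := fun g => g ⟨a x, haP⟩ * g ⟨b x, hbP⟩ with hφ
      have hφm : Measurable φ := (measurable_pi_apply _).mul (measurable_pi_apply _)
      set ψ : (Q → ℝ) → ℝ := fun g =>
        ∑ y ∈ s.attach, g ⟨a y.1, Finset.mem_biUnion.2 ⟨y.1, y.2, by simp⟩⟩ *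
          g ⟨b y.1, Finset.mem_biUnion.2 ⟨y.1, y.2, by simp⟩⟩ with hψ
      have hψm : Measurable ψ := Finset.measurable_sum _
        (fun y _ => (measurable_pi_apply _).mul (measurable_pi_apply _))
      have hYeq : Y = φ ∘ (fun ω (i : P) => ε i ω) := rfl
      have hTeq : T = ψ ∘ (fun ω (i : Q) => ε i ω) := by
        funext ω
        simp only [hTdef, hψ, Function.comp_apply]
        rw [← Finset.sum_attach s (fun y => ε (a y) ω * ε (b y) ω)]
      rw [hYeq, hTeq]
      exact base.comp hφm hψm
    -- distribution of Y
    have hYind : IndepFun (ε (a x)) (ε (b x)) μ :=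
      hindep.indepFun (hab x (mem_insert_self _ _))
    obtain ⟨hY1, hY2⟩ := prod_sign_half (hmeas (a x)) (hmeas (b x)) hYind
      (hhalf (a x)).1 (hhalf (a x)).2 (hhalf (b x)).1 (hhalf (b x)).2
    obtain ⟨hYint, hYintegral⟩ := half_half_integral Y hYmeas hY1 hY2
      (fun u => Real.exp (t * u))
    have hmgfY : mgf Y μ t = Real.cosh t := by
      rw [mgf, hYintegral, Real.cosh_eq]
      ring_nf
    -- assemble
    have hsum : (fun ω => ∑ y ∈ insert x s, ε (a y) ω * ε (b y) ω) = Y + T := by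
      funext ω
      simp only [Pi.add_apply, hYdef, hTdef]
      rw [Finset.sum_insert hx]
    have hint : Integrable (fun ω => Real.exp (t * (Y + T) ω)) μ :=
      hYT.integrable_exp_mul_add hYint ih_int
    constructor
    · have := hint
      simpa only [← hsum] using this
    · have hmgf : mgf (fun ω => ∑ y ∈ insert x s, ε (a y) ω * ε (b y) ω) μ t
          = mgf Y μ t * mgf T μ t := by
        rw [hsum]
        exact hYT.mgf_add' hYmeas.aestronglyMeasurable hTmeas.aestronglyMeasurable
      rw [hmgf, hmgfY, ih_mgf, Finset.card_insert_of_notMem hx, pow_succ]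
      ring

lemma pair_sum_tail (ε : Γ → Ω → ℝ) (hmeas : ∀ v, Measurable (ε v))
    (hindep : iIndepFun ε μ)
    (hhalf : ∀ v, μ {ω | ε v ω = 1} = 1/2 ∧ μ {ω | ε v ω = -1} = 1/2)
    (a b : J → Γ) (s : Finset J) (hab : ∀ x ∈ s, a x ≠ b x)
    (hdisj : ∀ x ∈ s, ∀ y ∈ s, x ≠ y → ({a x, b x} : Finset Γ) ∩ {a y, b y} = ∅)
    (m : ℕ) (hm : 0 < m) (hcard : s.card ≤ m) (bb : ℝ) (hb : 0 < bb) :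
    μ {ω | bb ≤ |∑ x ∈ s, ε (a x) ω * ε (b x) ω|}
      ≤ ENNReal.ofReal (2 * Real.exp (-(bb^2) / (2*m))) := by
  classical
  set S : Ω → ℝ := fun ω => ∑ x ∈ s, ε (a x) ω * ε (b x) ω with hS
  have hmpos : (0:ℝ) < m := by exact_mod_cast hm
  set t : ℝ := bb / m with ht
  have htpos : 0 < t := div_pos hb hmpos
  have hmgf : ∀ u : ℝ, Integrable (fun ω => Real.exp (u * S ω)) μ ∧
      mgf S μ u = Real.cosh u ^ s.card := fun u =>
    mgf_pair_sum ε hmeas hindep hhalf a b u s hab hdisj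
  have hcosh_bound : ∀ u : ℝ, Real.cosh u ^ s.card ≤ Real.exp (u^2 * m / 2) := by
    intro u
    calc Real.cosh u ^ s.card ≤ (Real.exp (u^2/2)) ^ s.card :=
          pow_le_pow_left₀ (Real.cosh_pos (x := u)).le (Real.cosh_le_exp_half_sq u) _
      _ = Real.exp (s.card * (u^2/2)) := by rw [← Real.exp_nat_mul]
      _ ≤ Real.exp (u^2 * m / 2) := by
          apply Real.exp_le_exp.2
          have : (s.card : ℝ) ≤ m := by exact_mod_cast hcard
          nlinarith [sq_nonneg u]
  have hexp_eq : Real.exp (-t * bb) * Real.exp (t^2 * m / 2) = Real.exp (-(bb^2) / (2*m)) := by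
    rw [← Real.exp_add]
    congr 1
    rw [ht]
    field_simp
    ring
  have hup : (μ {ω | bb ≤ S ω}).toReal ≤ Real.exp (-(bb^2) / (2*m)) := by
    calc (μ {ω | bb ≤ S ω}).toReal ≤ Real.exp (-t * bb) * mgf S μ t :=
          measure_ge_le_exp_mul_mgf bb htpos.le (hmgf t).1
      _ ≤ Real.exp (-t * bb) * Real.exp (t^2 * m / 2) := by
          rw [(hmgf t).2]
          exact mul_le_mul_of_nonneg_left (hcosh_bound t) (Real.exp_pos _).le
      _ = Real.exp (-(bb^2) / (2*m)) := hexp_eq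
  have hdown : (μ {ω | S ω ≤ -bb}).toReal ≤ Real.exp (-(bb^2) / (2*m)) := by
    calc (μ {ω | S ω ≤ -bb}).toReal ≤ Real.exp (-(-t) * (-bb)) * mgf S μ (-t) :=
          measure_le_le_exp_mul_mgf (-bb) (by linarith) (hmgf (-t)).1
      _ ≤ Real.exp (-t * bb) * Real.exp (t^2 * m / 2) := by
          rw [(hmgf (-t)).2, Real.cosh_neg]
          have h3 : Real.exp (-(-t) * (-bb)) = Real.exp (-t * bb) := by ring_nf
          rw [h3]
          exact mul_le_mul_of_nonneg_left (hcosh_bound t) (Real.exp_pos _).le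
      _ = Real.exp (-(bb^2) / (2*m)) := hexp_eq
  have hsubset : {ω | bb ≤ |S ω|} ⊆ {ω | bb ≤ S ω} ∪ {ω | S ω ≤ -bb} := by
    intro ω hω
    simp only [Set.mem_setOf_eq] at hω
    rcases abs_cases (S ω) with ⟨he, _⟩ | ⟨he, _⟩
    · left; exact Set.mem_setOf_eq ▸ (he ▸ hω)
    · right
      simp only [Set.mem_setOf_eq]
      rw [he] at hω
      linarith
  calc μ {ω | bb ≤ |S ω|} ≤ μ ({ω | bb ≤ S ω} ∪ {ω | S ω ≤ -bb}) := measure_mono hsubset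
    _ ≤ μ {ω | bb ≤ S ω} + μ {ω | S ω ≤ -bb} := measure_union_le _ _
    _ ≤ ENNReal.ofReal (Real.exp (-(bb^2) / (2*m))) + ENNReal.ofReal (Real.exp (-(bb^2) / (2*m))) := by
        gcongr
        · rw [← ENNReal.ofReal_toReal (measure_ne_top μ _)]
          exact ENNReal.ofReal_le_ofReal hup
        · rw [← ENNReal.ofReal_toReal (measure_ne_top μ _)]
          exact ENNReal.ofReal_le_ofReal hdown
    _ = ENNReal.ofReal (2 * Real.exp (-(bb^2) / (2*m))) := by
        rw [← ENNReal.ofReal_add (Real.exp_pos _).le (Real.exp_pos _).le]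
        congr 1
        ring

end PairSums


lemma exists_coloring {M : Type*} [AddCommGroup M] [Fintype M] {τ : M} (hτ : τ ≠ 0) :
    ∃ c : M → Fin 3, ∀ x, c x ≠ c (x + τ) := by
  classical
  set r := addOrderOf τ with hrdef
  have hrpos : 0 < r := addOrderOf_pos τ
  have hr1 : r ≠ 1 := by
    intro h
    exact hτ (AddMonoid.addOrderOf_eq_one_iff.1 h)
  have hr2 : 2 ≤ r := by omega
  haveI : NeZero r := ⟨hrpos.ne'⟩
  haveI : Fact (1 < r) := ⟨hr2⟩
  set G := AddSubgroup.zmultiples τ with hG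
  have key : ∀ x : M, ∃ j : ℤ, j • τ =
      x - Quotient.out (QuotientAddGroup.mk (s := G) x) := by
    intro x
    have hout : QuotientAddGroup.mk (s := G)
        (Quotient.out (QuotientAddGroup.mk (s := G) x)) = QuotientAddGroup.mk (s := G) x :=
      QuotientAddGroup.out_eq' _
    have hmem : -(Quotient.out (QuotientAddGroup.mk (s := G) x)) + x ∈ G :=
      (QuotientAddGroup.eq).1 hout
    obtain ⟨j, hj⟩ := (AddSubgroup.mem_zmultiples_iff).1 hmem
    exact ⟨j, by rw [hj]; abel⟩
  choose dl hdl using key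
  have hstep : ∀ x : M, ((dl (x + τ) : ZMod r)) = (dl x : ZMod r) + 1 := by
    intro x
    have hmk : QuotientAddGroup.mk (s := G) (x + τ) = QuotientAddGroup.mk (s := G) x := by
      rw [QuotientAddGroup.eq]
      have : -(x + τ) + x = (-1 : ℤ) • τ := by
        rw [neg_one_zsmul]; abel
      rw [this]
      exact AddSubgroup.zsmul_mem G (AddSubgroup.mem_zmultiples τ) _
    have h1 := hdl (x + τ)
    rw [hmk] at h1
    have h2 := hdl x
    have h3 : (dl (x + τ) - dl x - 1) • τ = 0 := by
      rw [sub_zsmul, sub_zsmul, one_zsmul, h1, h2]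
      abel
    have hdvd : (r : ℤ) ∣ (dl (x + τ) - dl x - 1) := by
      rw [hrdef]
      exact addOrderOf_dvd_iff_zsmul_eq_zero.2 h3
    have : ((dl (x + τ) - dl x - 1 : ℤ) : ZMod r) = 0 :=
      (ZMod.intCast_zmod_eq_zero_iff_dvd _ _).2 hdvd
    push_cast at this
    linear_combination this
  set c₀ : ZMod r → Fin 3 := fun v => if v.val = r - 1 then 2 else ⟨v.val % 2, by omega⟩
    with hc₀
  have hc₀ne : ∀ v : ZMod r, c₀ v ≠ c₀ (v + 1) := by
    intro v
    have hv : v.val < r := ZMod.val_lt v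
    have hone : (1 : ZMod r).val = 1 := ZMod.val_one r
    have hvadd : (v + 1).val = (v.val + 1) % r := by
      rw [ZMod.val_add, hone]
    by_cases hvr : v.val = r - 1
    · have h0 : (v + 1).val = 0 := by
        rw [hvadd, hvr]
        have : r - 1 + 1 = r := by omega
        rw [this, Nat.mod_self]
      simp only [hc₀, hvr, if_pos rfl, h0]
      have : ¬ (0 = r - 1) := by omega
      rw [if_neg this]
      intro h
      have := congrArg Fin.val h
      simp at this
    · have hlt : v.val + 1 < r := by omega
      have h1 : (v + 1).val = v.val + 1 := by
        rw [hvadd, Nat.mod_eq_of_lt hlt]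
      by_cases hvr2 : v.val + 1 = r - 1
      · simp only [hc₀, if_neg hvr, h1, if_pos hvr2]
        intro h
        have := congrArg Fin.val h
        simp at this
        omega
      · simp only [hc₀, if_neg hvr, h1, if_neg hvr2]
        intro h
        have := congrArg Fin.val h
        simp at this
        omega
  refine ⟨fun x => c₀ ((dl x : ZMod r)), ?_⟩
  intro x
  show c₀ ((dl x : ZMod r)) ≠ c₀ ((dl (x + τ) : ZMod r))
  rw [hstep x]
  exact hc₀ne _


section PairTailMain

variable {Ω : Type*} {mΩ : MeasurableSpace Ω} {μ : Measure Ω} [IsProbabilityMeasure μ]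
variable {M Γ : Type*} [AddCommGroup M] [Fintype M] [AddCommGroup Γ]
  [MeasurableSpace Γ] [DecidableEq Γ] [DecidableEq M]

lemma pair_coloring (ψ : M →+ Γ) (hψ : Function.Injective ψ) {t : Γ} (ht : t ≠ 0) (k : Γ) :
    ∃ c : M → Fin 3, ∀ x y : M, c x = c y → x ≠ y →
      ({ψ x - k, ψ x - k + t} : Finset Γ) ∩ {ψ y - k, ψ y - k + t} = ∅ := by
  classical
  have main : ∀ (c : M → Fin 3), (∀ x y : M, c x = c y → x ≠ y →
        ψ x ≠ ψ y + t ∧ ψ x + t ≠ ψ y) → ∀ x y : M, c x = c y → x ≠ y →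
      ({ψ x - k, ψ x - k + t} : Finset Γ) ∩ {ψ y - k, ψ y - k + t} = ∅ := by
    intro c hc x y hcxy hxy
    obtain ⟨hne1, hne2⟩ := hc x y hcxy hxy
    rw [Finset.eq_empty_iff_forall_notMem]
    intro v hv
    rw [Finset.mem_inter, Finset.mem_insert, Finset.mem_singleton, Finset.mem_insert,
      Finset.mem_singleton] at hv
    obtain ⟨h1 | h1, h2 | h2⟩ := hv
    · rw [h1] at h2
      exact hxy (hψ (by linear_combination (norm := abel) h2))
    · rw [h1] at h2
      exact hne1 (by linear_combination (norm := abel) h2)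
    · rw [h1] at h2
      exact hne2 (by linear_combination (norm := abel) h2)
    · rw [h1] at h2
      exact hxy (hψ (by linear_combination (norm := abel) h2))
  by_cases hex : ∃ τ : M, ψ τ = t
  · obtain ⟨τ, hτt⟩ := hex
    have hτ0 : τ ≠ 0 := by
      rintro rfl
      rw [map_zero] at hτt
      exact ht hτt.symm
    obtain ⟨c, hc⟩ := exists_coloring hτ0
    refine ⟨c, main c ?_⟩
    intro x y hcxy hxy
    constructor
    · intro h
      have hxyτ : x = y + τ := hψ (by rw [map_add, hτt, h])
      rw [hxyτ] at hcxy
      exact hc y hcxy.symm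
    · intro h
      have hyxτ : y = x + τ := hψ (by rw [map_add, hτt, ← h])
      rw [hyxτ] at hcxy
      exact hc x hcxy
  · refine ⟨fun _ => 0, main _ ?_⟩
    intro x y _ hxy
    constructor
    · intro h
      exact hex ⟨x - y, by rw [map_sub]; linear_combination (norm := abel) h⟩
    · intro h
      exact hex ⟨y - x, by rw [map_sub]; linear_combination (norm := abel) h.symm⟩

lemma pair_tail_main
    (ε : Γ → Ω → ℝ) (hmeas : ∀ v, Measurable (ε v))
    (hindep : iIndepFun ε μ)
    (hhalf : ∀ v, μ {ω | ε v ω = 1} = 1/2 ∧ μ {ω | ε v ω = -1} = 1/2)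
    (ψ : M →+ Γ) (hψ : Function.Injective ψ) {t : Γ} (ht : t ≠ 0) (k : Γ)
    (hm : 0 < Fintype.card M) (aa : ℝ) (ha : 0 < aa) :
    μ {ω | aa ≤ |∑ x : M, ε (ψ x - k) ω * ε (ψ x - k + t) ω|}
      ≤ ENNReal.ofReal (6 * Real.exp (-(aa^2) / (18 * Fintype.card M))) := by
  classical
  obtain ⟨c, hc⟩ := pair_coloring ψ hψ ht k
  set a : M → Γ := fun x => ψ x - k with hadef
  set b : M → Γ := fun x => ψ x - k + t with hbdef
  set Z : M → Ω → ℝ := fun x ω => ε (a x) ω * ε (b x) ω with hZdef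
  set S : Ω → ℝ := fun ω => ∑ x : M, Z x ω with hSdef
  set m : ℕ := Fintype.card M with hmdef
  set Si : Fin 3 → Ω → ℝ := fun i ω => ∑ x ∈ univ.filter (fun x => c x = i), Z x ω with hSidef
  have hsplit : ∀ ω, S ω = ∑ i : Fin 3, Si i ω := by
    intro ω
    rw [hSdef, hSidef]
    exact (Finset.sum_fiberwise univ c (fun x => Z x ω)).symm
  have hsub : {ω | aa ≤ |S ω|} ⊆ ⋃ i : Fin 3, {ω | aa/3 ≤ |Si i ω|} := by
    intro ω hω
    simp only [Set.mem_setOf_eq] at hω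
    by_contra hno
    simp only [Set.mem_iUnion, Set.mem_setOf_eq, not_exists, not_le] at hno
    have h0 := hno 0
    have h1 := hno 1
    have h2 := hno 2
    have habs : |S ω| ≤ |Si 0 ω| + |Si 1 ω| + |Si 2 ω| := by
      rw [hsplit ω, Fin.sum_univ_three]
      calc |Si 0 ω + Si 1 ω + Si 2 ω| ≤ |Si 0 ω + Si 1 ω| + |Si 2 ω| := abs_add_le _ _
        _ ≤ |Si 0 ω| + |Si 1 ω| + |Si 2 ω| := by
            have := abs_add_le (Si 0 ω) (Si 1 ω)
            linarith
    linarith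
  have hband : ∀ i : Fin 3, μ {ω | aa/3 ≤ |Si i ω|}
      ≤ ENNReal.ofReal (2 * Real.exp (-((aa/3)^2) / (2*m))) := by
    intro i
    refine pair_sum_tail ε hmeas hindep hhalf a b (univ.filter (fun x => c x = i))
      ?_ ?_ m hm ?_ (aa/3) (by linarith)
    · intro x _
      rw [hadef, hbdef]
      intro h
      have h' : ψ x - k + t = ψ x - k := h.symm
      exact ht (by linear_combination (norm := abel) h')
    · intro x hx y hy hxy
      rw [Finset.mem_filter] at hx hy
      exact hc x y (hx.2.trans hy.2.symm) hxy
    · calc (univ.filter (fun x => c x = i)).card ≤ univ.card := Finset.card_filter_le _ _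
        _ = m := by rw [hmdef, Finset.card_univ]
  calc μ {ω | aa ≤ |S ω|} ≤ μ (⋃ i : Fin 3, {ω | aa/3 ≤ |Si i ω|}) := measure_mono hsub
    _ ≤ ∑ i : Fin 3, μ {ω | aa/3 ≤ |Si i ω|} := measure_iUnion_fintype_le _ _
    _ ≤ ∑ _i : Fin 3, ENNReal.ofReal (2 * Real.exp (-((aa/3)^2) / (2*m))) :=
        Finset.sum_le_sum (fun i _ => hband i)
    _ = 3 * ENNReal.ofReal (2 * Real.exp (-((aa/3)^2) / (2*m))) := by
        rw [Finset.sum_const, Finset.card_univ, Fintype.card_fin, nsmul_eq_mul]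
        norm_num
    _ = ENNReal.ofReal (6 * Real.exp (-(aa^2) / (18 * m))) := by
        rw [show ((3:ℝ≥0∞)) = ENNReal.ofReal 3 by simp [ENNReal.ofReal_ofNat],
          ← ENNReal.ofReal_mul (by norm_num)]
        congr 1
        rw [show -((aa/3)^2) / (2*(m:ℝ)) = -(aa^2) / (18 * m) by ring]
        ring

end PairTailMain


section ZModHom

/-- The "multiplication by `d`" additive hom `ZMod m →+ ZMod n` when `d * m = n`. -/
noncomputable def zmodMulHom (d m n : ℕ) [NeZero m] (h : d * m = n) : ZMod m →+ ZMod n where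
  toFun := fun x => ((d * x.val : ℕ) : ZMod n)
  map_zero' := by simp
  map_add' := by
    intro x y
    have key : ∀ a : ℕ, ((d * (a % m) : ℕ) : ZMod n) = ((d * a : ℕ) : ZMod n) := by
      intro a
      have h1 : d * a = d * (a % m) + n * (a / m) := by
        rw [← h]
        conv_lhs => rw [← Nat.mod_add_div a m]
        ring
      rw [h1]
      push_cast [ZMod.natCast_self]
      ring
    show ((d * (x + y).val : ℕ) : ZMod n) = ((d * x.val : ℕ) : ZMod n) + ((d * y.val : ℕ) : ZMod n)
    rw [ZMod.val_add, key]
    push_cast [Nat.mul_add]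
    ring

lemma zmodMulHom_apply (d m n : ℕ) [NeZero m] (h : d * m = n) (x : ZMod m) :
    zmodMulHom d m n h x = ((d * x.val : ℕ) : ZMod n) := rfl

lemma zmodMulHom_injective (d m n : ℕ) [NeZero m] (hd : 0 < d) (h : d * m = n) :
    Function.Injective (zmodMulHom d m n h) := by
  intro x y hxy
  rw [zmodMulHom_apply, zmodMulHom_apply] at hxy
  have hmod : (d * x.val) ≡ (d * y.val) [MOD n] := (ZMod.natCast_eq_natCast_iff _ _ _).1 hxy
  have hdvd : (n:ℤ) ∣ (d * y.val : ℤ) - (d * x.val : ℤ) := by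
    have := (Nat.modEq_iff_dvd).1 hmod
    exact_mod_cast this
  have hdvd2 : (m:ℤ) ∣ (y.val : ℤ) - (x.val : ℤ) := by
    have hn : (n:ℤ) = (d:ℤ) * m := by exact_mod_cast h.symm
    rw [hn] at hdvd
    have : (d:ℤ) * ((y.val : ℤ) - x.val) = (d * y.val : ℤ) - (d * x.val : ℤ) := by ring
    rw [← this] at hdvd
    exact (mul_dvd_mul_iff_left (by exact_mod_cast hd.ne' : (d:ℤ) ≠ 0)).1 hdvd
  have hx : x.val < m := ZMod.val_lt x
  have hy : y.val < m := ZMod.val_lt y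
  have : (y.val : ℤ) - (x.val : ℤ) = 0 := by
    refine Int.eq_zero_of_abs_lt_dvd hdvd2 ?_
    rw [abs_lt]
    constructor <;> push_cast <;> omega
  have hveq : x.val = y.val := by omega
  exact ZMod.val_injective _ hveq

end ZModHom

section DetRIP

lemma det_RIP {L K : Type*} [Fintype L] [Fintype K] [DecidableEq K]
    (A : Matrix L K ℝ) (s : ℕ) (hs : 1 ≤ s) (δ : ℝ) (hδ : 0 < δ)
    (hdiag : ∀ k, ∑ l, A l k * A l k = 1)
    (hoff : ∀ k k', k ≠ k' → |∑ l, A l k * A l k'| ≤ δ / s) :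
    IsRIP A s δ := by
  intro f hf
  obtain ⟨T, hTcard, hTz⟩ := hf
  set D : ℝ := ∑ i, f i ^ 2 with hD
  have hDnn : 0 ≤ D := Finset.sum_nonneg (fun i _ => sq_nonneg _)
  set G : K → K → ℝ := fun k k' => ∑ l, A l k * A l k' with hG
  -- expand the quadratic form
  have hexpand : ∑ j, (A.mulVec f j) ^ 2 = ∑ k, ∑ k', f k * f k' * G k k' := by
    have : ∀ j, (A.mulVec f j) ^ 2 = ∑ k, ∑ k', (A j k * f k) * (A j k' * f k') := by
      intro j
      rw [Matrix.mulVec, pow_two]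
      rw [← Finset.sum_mul_sum]
      rfl
    rw [Finset.sum_congr rfl (fun j _ => this j)]
    rw [Finset.sum_comm]
    refine Finset.sum_congr rfl (fun k _ => ?_)
    rw [Finset.sum_comm]
    refine Finset.sum_congr rfl (fun k' _ => ?_)
    rw [hG, Finset.mul_sum]
    refine Finset.sum_congr rfl (fun j _ => ?_)
    ring
  -- split diagonal and off-diagonal
  set E : ℝ := ∑ k, ∑ k' ∈ univ.erase k, f k * f k' * G k k' with hE
  have hsplit : ∑ k : K, ∑ k', f k * f k' * G k k' = D + E := by
    rw [hD, hE, ← Finset.sum_add_distrib]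
    refine Finset.sum_congr rfl (fun k _ => ?_)
    rw [← Finset.add_sum_erase _ _ (Finset.mem_univ k)]
    congr 1
    simp only [hG]
    rw [hdiag k]
    ring
  -- bound on E
  have hEbound : |E| ≤ δ * D := by
    have h1 : |E| ≤ ∑ k, ∑ k' ∈ univ.erase k, |f k| * |f k'| * (δ / s) := by
      calc |E| ≤ ∑ k, |∑ k' ∈ univ.erase k, f k * f k' * G k k'| :=
            Finset.abs_sum_le_sum_abs _ _
        _ ≤ ∑ k, ∑ k' ∈ univ.erase k, |f k * f k' * G k k'| :=
            Finset.sum_le_sum (fun k _ => Finset.abs_sum_le_sum_abs _ _)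
        _ ≤ ∑ k, ∑ k' ∈ univ.erase k, |f k| * |f k'| * (δ / s) := by
            refine Finset.sum_le_sum (fun k _ => Finset.sum_le_sum (fun k' hk' => ?_))
            rw [abs_mul, abs_mul]
            refine mul_le_mul_of_nonneg_left ?_ (mul_nonneg (abs_nonneg _) (abs_nonneg _))
            simp only [hG]
            exact hoff k k' (Ne.symm (Finset.mem_erase.1 hk').1)
        _ = _ := rfl
    have h2 : ∑ k, ∑ k' ∈ univ.erase k, |f k| * |f k'| * (δ / s)
        ≤ (∑ k, |f k|) ^ 2 * (δ / s) := by
      have : ∀ k : K, ∑ k' ∈ univ.erase k, |f k| * |f k'| * (δ / s)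
          ≤ ∑ k' : K, |f k| * |f k'| * (δ / s) := by
        intro k
        refine Finset.sum_le_sum_of_subset_of_nonneg (Finset.erase_subset _ _) ?_
        intro k' _ _
        have := div_nonneg hδ.le (Nat.cast_nonneg s)
        positivity
      calc ∑ k, ∑ k' ∈ univ.erase k, |f k| * |f k'| * (δ / s)
          ≤ ∑ k : K, ∑ k' : K, |f k| * |f k'| * (δ / s) :=
            Finset.sum_le_sum (fun k _ => this k)
        _ = (∑ k, |f k|) ^ 2 * (δ / s) := by
            rw [pow_two, Finset.sum_mul_sum]
            rw [Finset.sum_mul]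
            refine Finset.sum_congr rfl (fun k _ => ?_)
            rw [Finset.sum_mul]
      -- done
    have h3 : (∑ k, |f k|) ^ 2 ≤ s * D := by
      have hrestrict : ∑ k, |f k| = ∑ k ∈ T, |f k| := by
        refine (Finset.sum_subset (Finset.subset_univ T) ?_).symm
        intro k _ hk
        rw [hTz k hk, abs_zero]
      have hCS : (∑ k ∈ T, |f k|) ^ 2 ≤ (T.card : ℝ) * ∑ k ∈ T, f k ^ 2 := by
        have := Finset.sum_mul_sq_le_sq_mul_sq T (fun _ => (1:ℝ)) (fun k => |f k|)
        simp only [one_mul, one_pow, Finset.sum_const, nsmul_eq_mul, mul_one, sq_abs] at this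
        exact this
      have hsum_le : ∑ k ∈ T, f k ^ 2 ≤ D := by
        rw [hD]
        exact Finset.sum_le_sum_of_subset_of_nonneg (Finset.subset_univ T)
          (fun k _ _ => sq_nonneg _)
      have hcard : (T.card : ℝ) ≤ s := by exact_mod_cast hTcard
      calc (∑ k, |f k|) ^ 2 = (∑ k ∈ T, |f k|) ^ 2 := by rw [hrestrict]
        _ ≤ (T.card : ℝ) * ∑ k ∈ T, f k ^ 2 := hCS
        _ ≤ (s : ℝ) * D := by
            refine mul_le_mul hcard hsum_le (Finset.sum_nonneg (fun k _ => sq_nonneg _)) ?_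
            exact Nat.cast_nonneg s
    have hspos : (0:ℝ) < s := by exact_mod_cast hs
    calc |E| ≤ (∑ k, |f k|) ^ 2 * (δ / s) := le_trans h1 h2
      _ ≤ (s * D) * (δ / s) := by
          refine mul_le_mul_of_nonneg_right h3 ?_
          positivity
      _ = δ * D := by field_simp
  have htotal : ∑ j, (A.mulVec f j) ^ 2 = D + E := by rw [hexpand, hsplit]
  rw [htotal]
  rw [abs_le] at hEbound
  constructor <;> nlinarith [hEbound.1, hEbound.2]

end DetRIP

set_option maxHeartbeats 8000000 in
/-- Spatial-domain CCA sensing satisfies the RIP with high probability.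
There are constants `c₁ c₂ > 0` (depending only on `δs`) such that, whenever the mask
entries are i.i.d. `±√(d/n)` Rademacher variables and `m ≥ c₁ s² log n`, the CCA matrix
is `RIP(s, δs)` with probability at least `1 - 2 n² exp(-c₂ m / s²)`. -/
theorem cca_RIP (δs : ℝ) (hδs : δs ∈ Set.Ioo (0 : ℝ) 1) :
    ∃ c₁ c₂ : ℝ, 0 < c₁ ∧ 0 < c₂ ∧
      ∀ (n₁ n₂ d₁ d₂ : ℕ) [NeZero n₁] [NeZero n₂],
        d₁ ∣ n₁ → d₂ ∣ n₂ → 0 < d₁ → 0 < d₂ →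
        ∀ (s : ℕ), 1 ≤ s →
        ∀ (Ω : Type) (mΩ : MeasurableSpace Ω) (μ : Measure Ω), IsProbabilityMeasure μ →
        ∀ (H : Ω → ZMod n₁ → ZMod n₂ → ℝ),
          (∀ i j, Measurable fun ω => H ω i j) →
          -- the mask entries are independent
          iIndepFun
            (fun (ij : ZMod n₁ × ZMod n₂) ω => H ω ij.1 ij.2) μ →
          -- each entry is a scaled Rademacher variable, `±√(d/n)` with probability 1/2 each
          (∀ i j,
            μ {ω | H ω i j = Real.sqrt ((d₁ * d₂ : ℝ) / (n₁ * n₂ : ℝ))} = 1/2 ∧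
            μ {ω | H ω i j = -Real.sqrt ((d₁ * d₂ : ℝ) / (n₁ * n₂ : ℝ))} = 1/2) →
          -- m ≥ c₁ s² log n
          c₁ * (s : ℝ) ^ 2 * Real.log ((n₁ : ℝ) * n₂)
              ≤ ((n₁ / d₁) * (n₂ / d₂) : ℕ) →
          ENNReal.ofReal
              (1 - 2 * ((n₁ : ℝ) * n₂) ^ 2 *
                Real.exp (-c₂ * ((n₁ / d₁) * (n₂ / d₂) : ℕ) / (s : ℝ) ^ 2))
            ≤ μ {ω | IsRIP (ccaMatrix n₁ n₂ d₁ d₂ (H ω)) s δs} := by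
  classical
  obtain ⟨hδ0, hδ1⟩ := hδs
  refine ⟨1, δs^2/72, one_pos, by positivity, ?_⟩
  intro n₁ n₂ d₁ d₂ _ _ hd₁ hd₂ hd₁pos hd₂pos s hs Ω mΩ μ hμ H hHmeas hHindep hHdist _hm
  haveI := hμ
  set c₂ : ℝ := δs^2/72 with hc₂def
  set m₁ := n₁ / d₁ with hm₁def
  set m₂ := n₂ / d₂ with hm₂def
  have hn₁ : d₁ * m₁ = n₁ := Nat.mul_div_cancel' hd₁
  have hn₂ : d₂ * m₂ = n₂ := Nat.mul_div_cancel' hd₂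
  have hn₁pos : 0 < n₁ := Nat.pos_of_ne_zero (NeZero.ne n₁)
  have hn₂pos : 0 < n₂ := Nat.pos_of_ne_zero (NeZero.ne n₂)
  have hm₁pos : 0 < m₁ := by
    rcases Nat.eq_zero_or_pos m₁ with h | h
    · rw [h, mul_zero] at hn₁; omega
    · exact h
  have hm₂pos : 0 < m₂ := by
    rcases Nat.eq_zero_or_pos m₂ with h | h
    · rw [h, mul_zero] at hn₂; omega
    · exact h
  haveI : NeZero m₁ := ⟨hm₁pos.ne'⟩
  haveI : NeZero m₂ := ⟨hm₂pos.ne'⟩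
  have hspos : (0:ℝ) < s := by exact_mod_cast hs
  set mmr : ℝ := (m₁ : ℝ) * m₂ with hmmrdef
  have hmmrpos : 0 < mmr := by positivity
  set q := Real.sqrt ((d₁ * d₂ : ℝ) / (n₁ * n₂ : ℝ)) with hqdef
  have hqpos : 0 < q := Real.sqrt_pos.2 (by positivity)
  have hqsq : q^2 = (d₁ * d₂ : ℝ) / (n₁ * n₂ : ℝ) := Real.sq_sqrt (by positivity)
  have hone : mmr * q^2 = 1 := by
    rw [hqsq, hmmrdef]
    have e1 : (n₁ : ℝ) = (d₁ : ℝ) * m₁ := by exact_mod_cast hn₁.symm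
    have e2 : (n₂ : ℝ) = (d₂ : ℝ) * m₂ := by exact_mod_cast hn₂.symm
    rw [e1, e2]
    have hd₁r : (0:ℝ) < d₁ := by exact_mod_cast hd₁pos
    have hd₂r : (0:ℝ) < d₂ := by exact_mod_cast hd₂pos
    have hm₁r : (0:ℝ) < m₁ := by exact_mod_cast hm₁pos
    have hm₂r : (0:ℝ) < m₂ := by exact_mod_cast hm₂pos
    field_simp
  -- sign variables
  set sgn : ℝ → ℝ := fun u => if u < 0 then -1 else 1 with hsgndef
  have hsgnmeas : Measurable sgn :=
    Measurable.ite (measurableSet_lt measurable_id measurable_const)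
      measurable_const measurable_const
  have hsgnsq : ∀ u : ℝ, sgn u * sgn u = 1 := by
    intro u
    rw [hsgndef]
    by_cases h : u < 0 <;> simp [h]
  set ε : ZMod n₁ × ZMod n₂ → Ω → ℝ := fun v ω => sgn (H ω v.1 v.2) with hεdef
  have hεmeas : ∀ v, Measurable (ε v) := fun v => hsgnmeas.comp (hHmeas v.1 v.2)
  have hεindep : iIndepFun ε μ :=
    hHindep.comp (fun _ => sgn) (fun _ => hsgnmeas)
  have hεhalf : ∀ v : ZMod n₁ × ZMod n₂,
      μ {ω | ε v ω = 1} = 1/2 ∧ μ {ω | ε v ω = -1} = 1/2 := by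
    intro v
    obtain ⟨hp, hm⟩ := hHdist v.1 v.2
    have hsub1 : {ω | H ω v.1 v.2 = q} ⊆ {ω | ε v ω = 1} := by
      intro ω hω
      simp only [Set.mem_setOf_eq] at hω ⊢
      show sgn (H ω v.1 v.2) = 1
      rw [hω]
      simp only [hsgndef]
      rw [if_neg (not_lt.2 hqpos.le)]
    have hsub2 : {ω | H ω v.1 v.2 = -q} ⊆ {ω | ε v ω = -1} := by
      intro ω hω
      simp only [Set.mem_setOf_eq] at hω ⊢
      show sgn (H ω v.1 v.2) = -1
      rw [hω]
      simp only [hsgndef]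
      rw [if_pos (by linarith : -q < 0)]
    have h1 : (1:ℝ≥0∞)/2 ≤ μ {ω | ε v ω = 1} := hp ▸ measure_mono hsub1
    have h2 : (1:ℝ≥0∞)/2 ≤ μ {ω | ε v ω = -1} := hm ▸ measure_mono hsub2
    have hdisj : Disjoint {ω | ε v ω = 1} {ω | ε v ω = -1} := by
      rw [Set.disjoint_left]
      rintro ω ha hb
      simp only [Set.mem_setOf_eq] at ha hb
      rw [ha] at hb; norm_num at hb
    have hmeas2 : MeasurableSet {ω | ε v ω = -1} := (hεmeas v) (measurableSet_singleton _)
    have hsum : μ {ω | ε v ω = 1} + μ {ω | ε v ω = -1} ≤ 1 := by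
      rw [← measure_union hdisj hmeas2]
      exact prob_le_one
    exact half_squeeze h1 h2 hsum
  -- the hom
  set ψ : ZMod m₁ × ZMod m₂ →+ ZMod n₁ × ZMod n₂ :=
    AddMonoidHom.prodMap (zmodMulHom d₁ m₁ n₁ hn₁) (zmodMulHom d₂ m₂ n₂ hn₂) with hψdef
  have hψinj : Function.Injective ψ := by
    intro x y hxy
    have h1 : zmodMulHom d₁ m₁ n₁ hn₁ x.1 = zmodMulHom d₁ m₁ n₁ hn₁ y.1 :=
      congrArg Prod.fst hxy
    have h2 : zmodMulHom d₂ m₂ n₂ hn₂ x.2 = zmodMulHom d₂ m₂ n₂ hn₂ y.2 :=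
      congrArg Prod.snd hxy
    exact Prod.ext (zmodMulHom_injective d₁ m₁ n₁ hd₁pos hn₁ h1)
      (zmodMulHom_injective d₂ m₂ n₂ hd₂pos hn₂ h2)
  have hcardM : Fintype.card (ZMod m₁ × ZMod m₂) = m₁ * m₂ := by
    rw [Fintype.card_prod, ZMod.card, ZMod.card]
  -- the pair sums
  set S : (ZMod n₁ × ZMod n₂) → (ZMod n₁ × ZMod n₂) → Ω → ℝ :=
    fun k k' ω => ∑ x : ZMod m₁ × ZMod m₂, ε (ψ x - k) ω * ε (ψ x - k') ω with hSdef
  have hSmeas : ∀ k k', Measurable (S k k') := fun k k' =>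
    Finset.measurable_sum univ (fun x _ => (hεmeas _).mul (hεmeas _))
  set aa : ℝ := δs * mmr / s with haadef
  have haapos : 0 < aa := by positivity
  set P : Finset ((ZMod n₁ × ZMod n₂) × (ZMod n₁ × ZMod n₂)) :=
    univ.filter (fun p => p.1 ≠ p.2) with hPdef
  set GoodS : Set Ω := ⋂ p ∈ P, {ω | |S p.1 p.2 ω| ≤ aa} with hGoodSdef
  have hGoodmeas : MeasurableSet GoodS := by
    rw [hGoodSdef]
    refine Set.Finite.measurableSet_biInter (Set.finite_mem_finset P) ?_
    intro p _
    exact measurableSet_le (hSmeas p.1 p.2).abs measurable_const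
  set E₀ : Set Ω := {ω | ∀ v : ZMod n₁ × ZMod n₂, H ω v.1 v.2 = q ∨ H ω v.1 v.2 = -q}
    with hE₀def
  have hE₀null : μ {ω | ω ∉ E₀} = 0 := by
    have hall : ∀ᵐ ω ∂μ, ∀ v : ZMod n₁ × ZMod n₂, H ω v.1 v.2 = q ∨ H ω v.1 v.2 = -q := by
      rw [ae_all_iff]
      intro v
      obtain ⟨hp, hm⟩ := hHdist v.1 v.2
      set U := {ω | H ω v.1 v.2 = q} with hU
      set V := {ω | H ω v.1 v.2 = -q} with hV
      have hUm : MeasurableSet U := (hHmeas v.1 v.2) (measurableSet_singleton q)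
      have hVm : MeasurableSet V := (hHmeas v.1 v.2) (measurableSet_singleton (-q))
      have hdisj : Disjoint U V := by
        rw [Set.disjoint_left]
        rintro ω ha hb
        simp only [hU, hV, Set.mem_setOf_eq] at ha hb
        rw [ha] at hb
        have : q ≠ -q := by intro h; nlinarith
        exact this hb
      have hfull : μ (U ∪ V) = 1 := by
        rw [measure_union hdisj hVm, hp, hm, ENNReal.add_halves]
      rw [ae_iff]
      refine measure_mono_null ?_ (by
        rw [measure_compl (hUm.union hVm) (measure_ne_top _ _), hfull, measure_univ, tsub_self] :
        μ (U ∪ V)ᶜ = 0)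
      intro ω hω
      simp only [Set.mem_setOf_eq, not_or] at hω
      simp only [Set.mem_compl_iff, Set.mem_union, hU, hV, Set.mem_setOf_eq, not_or]
      exact hω
    rw [← ae_iff] at *
    exact hall
  -- per-pair tail bound
  set B6 : ℝ := 6 * Real.exp (-(aa^2) / (18 * mmr)) with hB6def
  have hB6nonneg : 0 ≤ B6 := by rw [hB6def]; positivity
  have hcastmm : ((Fintype.card (ZMod m₁ × ZMod m₂)) : ℝ) = mmr := by
    rw [hcardM]; push_cast; rw [hmmrdef]
  have hpair : ∀ p ∈ P, μ {ω | aa ≤ |S p.1 p.2 ω|} ≤ ENNReal.ofReal B6 := by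
    intro p hp
    have hpne : p.1 ≠ p.2 := (Finset.mem_filter.1 hp).2
    have ht : p.1 - p.2 ≠ 0 := sub_ne_zero.2 hpne
    have hmpos : 0 < Fintype.card (ZMod m₁ × ZMod m₂) := by
      rw [hcardM]; exact Nat.mul_pos hm₁pos hm₂pos
    have hbound := pair_tail_main ε hεmeas hεindep hεhalf ψ hψinj ht p.1 hmpos aa haapos
    rw [hcastmm] at hbound
    have hset : {ω | aa ≤ |S p.1 p.2 ω|}
        = {ω | aa ≤ |∑ x : ZMod m₁ × ZMod m₂,
            ε (ψ x - p.1) ω * ε (ψ x - p.1 + (p.1 - p.2)) ω|} := by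
      ext ω
      rw [Set.mem_setOf_eq, Set.mem_setOf_eq]
      have hrw : S p.1 p.2 ω
          = ∑ x : ZMod m₁ × ZMod m₂, ε (ψ x - p.1) ω * ε (ψ x - p.1 + (p.1 - p.2)) ω := by
        simp only [hSdef]
        refine Finset.sum_congr rfl (fun x _ => ?_)
        rw [sub_add_sub_cancel]
      rw [hrw]
    rw [hset, hB6def]
    exact hbound
  -- union bound
  have hPcard : P.card ≤ (n₁*n₂)^2 := by
    calc P.card ≤ (univ : Finset ((ZMod n₁ × ZMod n₂) × (ZMod n₁ × ZMod n₂))).card :=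
          Finset.card_filter_le _ _
      _ = Fintype.card ((ZMod n₁ × ZMod n₂) × (ZMod n₁ × ZMod n₂)) := Finset.card_univ
      _ = (n₁*n₂)^2 := by
          simp only [Fintype.card_prod, ZMod.card]
          ring
  have hGoodc : μ GoodSᶜ ≤ ENNReal.ofReal ((((n₁*n₂)^2 : ℕ) : ℝ) * B6) := by
    have hsub : GoodSᶜ ⊆ ⋃ p ∈ P, {ω | aa ≤ |S p.1 p.2 ω|} := by
      intro ω hω
      rw [hGoodSdef] at hω
      simp only [Set.mem_compl_iff, Set.mem_iInter, Set.mem_setOf_eq, not_forall] at hω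
      obtain ⟨p, hp, hlt⟩ := hω
      exact Set.mem_biUnion hp (le_of_lt (lt_of_not_ge hlt))
    calc μ GoodSᶜ ≤ μ (⋃ p ∈ P, {ω | aa ≤ |S p.1 p.2 ω|}) := measure_mono hsub
      _ ≤ ∑ p ∈ P, μ {ω | aa ≤ |S p.1 p.2 ω|} := measure_biUnion_finset_le _ _
      _ ≤ ∑ _p ∈ P, ENNReal.ofReal B6 := Finset.sum_le_sum hpair
      _ = P.card • ENNReal.ofReal B6 := by rw [Finset.sum_const]
      _ ≤ (((n₁*n₂)^2 : ℕ) : ℝ≥0∞) * ENNReal.ofReal B6 := by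
          rw [nsmul_eq_mul]
          exact mul_le_mul_left (by exact_mod_cast hPcard) _
      _ = ENNReal.ofReal ((((n₁*n₂)^2 : ℕ) : ℝ) * B6) := by
          rw [← ENNReal.ofReal_natCast ((n₁*n₂)^2), ← ENNReal.ofReal_mul (by positivity)]
  -- deterministic part
  have hdet : E₀ ∩ GoodS ⊆ {ω | IsRIP (ccaMatrix n₁ n₂ d₁ d₂ (H ω)) s δs} := by
    rintro ω ⟨hω0, hωG⟩
    rw [hE₀def, Set.mem_setOf_eq] at hω0
    have hHε : ∀ v : ZMod n₁ × ZMod n₂, H ω v.1 v.2 = q * ε v ω := by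
      intro v
      rcases hω0 v with h | h
      · show H ω v.1 v.2 = q * sgn (H ω v.1 v.2)
        rw [h]
        simp only [hsgndef]
        rw [if_neg (not_lt.2 hqpos.le)]
        ring
      · show H ω v.1 v.2 = q * sgn (H ω v.1 v.2)
        rw [h]
        simp only [hsgndef]
        rw [if_pos (by linarith : -q < 0)]
        ring
    set A := ccaMatrix n₁ n₂ d₁ d₂ (H ω) with hAdef
    set f : Fin m₁ × Fin m₂ → ZMod m₁ × ZMod m₂ :=
      fun l => (((l.1 : ℕ) : ZMod m₁), ((l.2 : ℕ) : ZMod m₂)) with hfdef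
    have hfbij : Function.Bijective f := by
      rw [Fintype.bijective_iff_injective_and_card]
      constructor
      · intro l l' hll
        have h1 : ((l.1 : ℕ) : ZMod m₁).val = ((l'.1 : ℕ) : ZMod m₁).val :=
          congrArg ZMod.val (congrArg Prod.fst hll)
        have h2 : ((l.2 : ℕ) : ZMod m₂).val = ((l'.2 : ℕ) : ZMod m₂).val :=
          congrArg ZMod.val (congrArg Prod.snd hll)
        rw [ZMod.val_natCast_of_lt l.1.isLt, ZMod.val_natCast_of_lt l'.1.isLt] at h1
        rw [ZMod.val_natCast_of_lt l.2.isLt, ZMod.val_natCast_of_lt l'.2.isLt] at h2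
        exact Prod.ext (Fin.ext h1) (Fin.ext h2)
      · rw [Fintype.card_prod, Fintype.card_prod, Fintype.card_fin, Fintype.card_fin,
          ZMod.card, ZMod.card]
    have hψf : ∀ (l : Fin m₁ × Fin m₂) (k : ZMod n₁ × ZMod n₂),
        A l k = H ω (ψ (f l) - k).1 (ψ (f l) - k).2 := by
      intro l k
      have h1 : (ψ (f l)).1 = (((l.1 : ℕ) * d₁ : ℕ) : ZMod n₁) := by
        show zmodMulHom d₁ m₁ n₁ hn₁ ((l.1 : ℕ) : ZMod m₁) = _
        rw [zmodMulHom_apply, ZMod.val_natCast_of_lt l.1.isLt, Nat.mul_comm]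
      have h2 : (ψ (f l)).2 = (((l.2 : ℕ) * d₂ : ℕ) : ZMod n₂) := by
        show zmodMulHom d₂ m₂ n₂ hn₂ ((l.2 : ℕ) : ZMod m₂) = _
        rw [zmodMulHom_apply, ZMod.val_natCast_of_lt l.2.isLt, Nat.mul_comm]
      show H ω ((((l.1 : ℕ) * d₁ : ℕ) : ZMod n₁) - k.1) ((((l.2 : ℕ) * d₂ : ℕ) : ZMod n₂) - k.2)
          = H ω (ψ (f l) - k).1 (ψ (f l) - k).2
      rw [Prod.fst_sub, Prod.snd_sub, h1, h2]
    have hGram : ∀ k k', (∑ l, A l k * A l k') = q^2 * S k k' ω := by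
      intro k k'
      have hterm : ∀ l : Fin m₁ × Fin m₂, A l k * A l k'
          = q^2 * (ε (ψ (f l) - k) ω * ε (ψ (f l) - k') ω) := by
        intro l
        rw [hψf l k, hψf l k']
        rw [hHε (ψ (f l) - k), hHε (ψ (f l) - k')]
        ring
      rw [Finset.sum_congr rfl (fun l _ => hterm l), ← Finset.mul_sum]
      congr 1
      simp only [hSdef]
      exact Fintype.sum_bijective f hfbij _ _ (fun l => rfl)
    have hdiagGram : ∀ k, ∑ l, A l k * A l k = 1 := by
      intro k
      rw [hGram k k]
      have hSkk : S k k ω = mmr := by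
        simp only [hSdef]
        have hone' : ∀ x : ZMod m₁ × ZMod m₂, ε (ψ x - k) ω * ε (ψ x - k) ω = 1 :=
          fun x => hsgnsq _
        rw [Finset.sum_congr rfl (fun x _ => hone' x), Finset.sum_const, Finset.card_univ,
          hcardM, nsmul_eq_mul, mul_one]
        push_cast
        rw [hmmrdef]
      rw [hSkk, mul_comm]
      exact hone
    have hoffGram : ∀ k k', k ≠ k' → |∑ l, A l k * A l k'| ≤ δs / s := by
      intro k k' hkk'
      have hpP : ((k, k') : (ZMod n₁ × ZMod n₂) × (ZMod n₁ × ZMod n₂)) ∈ P := by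
        rw [hPdef]
        simp [hkk']
      have hωG' : ω ∈ ⋂ p ∈ P, {ω | |S p.1 p.2 ω| ≤ aa} := hωG
      have hSle : |S k k' ω| ≤ aa := Set.mem_iInter₂.1 hωG' (k, k') hpP
      rw [hGram k k', abs_mul, abs_of_nonneg (sq_nonneg q)]
      calc q^2 * |S k k' ω| ≤ q^2 * aa := by gcongr
        _ = δs / s := by
            rw [haadef]
            have : q^2 * (δs * mmr / s) = (δs / s) * (mmr * q^2) := by ring
            rw [this, hone, mul_one]
    exact det_RIP A s hs δs hδ0 hdiagGram hoffGram
  -- final chain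
  set Breal : ℝ := 2 * ((n₁:ℝ) * n₂)^2 * Real.exp (-c₂ * ((m₁ * m₂ : ℕ) : ℝ) / (s:ℝ)^2)
    with hBdef
  show ENNReal.ofReal (1 - Breal) ≤ μ {ω | IsRIP (ccaMatrix n₁ n₂ d₁ d₂ (H ω)) s δs}
  by_cases hB1 : 1 ≤ Breal
  · rw [ENNReal.ofReal_eq_zero.2 (by linarith)]
    exact zero_le
  push_neg at hB1
  have hBnonneg : 0 ≤ Breal := by rw [hBdef]; positivity
  set E1 : ℝ := Real.exp (-c₂ * ((m₁ * m₂ : ℕ) : ℝ) / (s:ℝ)^2) with hE1def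
  have hE1pos : 0 < E1 := Real.exp_pos _
  have hN1 : (1:ℝ) ≤ (n₁:ℝ) * n₂ := by
    have a1 : (1:ℝ) ≤ (n₁:ℝ) := by exact_mod_cast hn₁pos
    have a2 : (1:ℝ) ≤ (n₂:ℝ) := by exact_mod_cast hn₂pos
    nlinarith
  have hE1half : E1 < 1/2 := by
    rw [hBdef] at hB1
    nlinarith [hE1pos, hN1]
  have hB6eq : B6 = 6 * E1^4 := by
    rw [hB6def, hE1def]
    have hcast : ((m₁*m₂ : ℕ):ℝ) = mmr := by push_cast; rw [hmmrdef]
    have hexp : -(aa^2) / (18 * mmr) = 4 * (-c₂ * ((m₁*m₂:ℕ):ℝ) / (s:ℝ)^2) := by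
      rw [haadef, hc₂def, hcast]
      field_simp
      ring
    rw [hexp]
    rw [show (4:ℝ) * (-c₂ * ((m₁*m₂:ℕ):ℝ) / (s:ℝ)^2)
        = (-c₂ * ((m₁*m₂:ℕ):ℝ) / (s:ℝ)^2) + (-c₂ * ((m₁*m₂:ℕ):ℝ) / (s:ℝ)^2)
          + (-c₂ * ((m₁*m₂:ℕ):ℝ) / (s:ℝ)^2) + (-c₂ * ((m₁*m₂:ℕ):ℝ) / (s:ℝ)^2) by ring,
      Real.exp_add, Real.exp_add, Real.exp_add]
    ring
  have hkey : (((n₁*n₂)^2 : ℕ) : ℝ) * B6 ≤ Breal := by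
    rw [hB6eq, hBdef]
    have hcastN : (((n₁*n₂)^2:ℕ):ℝ) = ((n₁:ℝ)*n₂)^2 := by push_cast; ring
    rw [hcastN]
    have hcube : E1^3 < (1/2)^3 := pow_lt_pow_left₀ hE1half hE1pos.le (by norm_num)
    have h8 : (0:ℝ) < 1/8 - E1^3 := by nlinarith [hcube]
    have h9 := mul_pos hE1pos h8
    have h6 : 6 * E1^4 ≤ 2 * E1 := by nlinarith [h9]
    calc ((n₁:ℝ)*n₂)^2 * (6 * E1^4) ≤ ((n₁:ℝ)*n₂)^2 * (2 * E1) :=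
          mul_le_mul_of_nonneg_left h6 (sq_nonneg _)
      _ = 2 * ((n₁:ℝ)*n₂)^2 * E1 := by ring
  have hmain : μ GoodSᶜ ≤ ENNReal.ofReal Breal :=
    le_trans hGoodc (ENNReal.ofReal_le_ofReal hkey)
  have hsplit2 : μ GoodS ≤ μ (E₀ ∩ GoodS) := by
    have hsub : GoodS ⊆ (E₀ ∩ GoodS) ∪ {ω | ω ∉ E₀} := by
      intro ω hω
      by_cases h : ω ∈ E₀
      · exact Or.inl ⟨h, hω⟩
      · exact Or.inr h
    calc μ GoodS ≤ μ ((E₀ ∩ GoodS) ∪ {ω | ω ∉ E₀}) := measure_mono hsub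
      _ ≤ μ (E₀ ∩ GoodS) + μ {ω | ω ∉ E₀} := measure_union_le _ _
      _ = μ (E₀ ∩ GoodS) := by rw [hE₀null, add_zero]
  have hchain : ENNReal.ofReal (1 - Breal) ≤ μ GoodS := by
    have hcompl := measure_add_measure_compl (μ := μ) hGoodmeas
    rw [measure_univ] at hcompl
    have h1 : ENNReal.ofReal (1 - Breal) + μ GoodSᶜ ≤ μ GoodS + μ GoodSᶜ := by
      rw [hcompl]
      calc ENNReal.ofReal (1 - Breal) + μ GoodSᶜ
          ≤ ENNReal.ofReal (1 - Breal) + ENNReal.ofReal Breal := by gcongr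
        _ = ENNReal.ofReal 1 := by
            rw [← ENNReal.ofReal_add (by linarith) hBnonneg]
            norm_num
        _ = 1 := ENNReal.ofReal_one
    exact ENNReal.le_of_add_le_add_right (measure_ne_top μ _) h1
  calc ENNReal.ofReal (1 - Breal) ≤ μ GoodS := hchain
    _ ≤ μ (E₀ ∩ GoodS) := hsplit2
    _ ≤ μ {ω | IsRIP (ccaMatrix n₁ n₂ d₁ d₂ (H ω)) s δs} := measure_mono hdet
end

section
/- Let A be an m×N real matrix with Gram matrix G = AᵀA, let s ≥ 1 be an integer and δ ∈ (0,1). If |G_{qq} − 1| ≤ δ/2 for every q ∈ {1,…,N} and |G_{pq}| ≤ δ/(2s) for every pair p ≠ q, then A satisfies RIP(s, δ); that is, (1 − δ)‖f‖₂² ≤ ‖A f‖₂² ≤ (1 + δ)‖f‖₂² for every f ∈ ℝ^N with at most s nonzero entries. -/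
open Finset Matrix

/-- the Geršgorin-disc step.  If the Gram matrix `G = AᵀA` of an `m × N` real
matrix `A` satisfies `|G_{qq} - 1| ≤ δ/2` on the diagonal and `|G_{pq}| ≤ δ/(2s)` off the
diagonal, then `A` satisfies `RIP(s, δ)`. -/
theorem gershgorin_RIP_step (m N : ℕ) (A : Matrix (Fin m) (Fin N) ℝ)
    (G : Matrix (Fin N) (Fin N) ℝ) (hG : G = Aᵀ * A)
    (s : ℕ) (hs : 1 ≤ s) (δ : ℝ) (hδ : δ ∈ Set.Ioo (0 : ℝ) 1)
    (hdiag : ∀ q, |G q q - 1| ≤ δ / 2)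
    (hoff : ∀ p q, p ≠ q → |G p q| ≤ δ / (2 * s)) :
    IsRIP A s δ := by
  obtain ⟨hδ0, hδ1⟩ := hδ
  intro f hf
  obtain ⟨T, hT, hfT⟩ := hf
  set S : ℝ := ∑ i, f i ^ 2 with hSdef
  have hSnn : 0 ≤ S := Finset.sum_nonneg fun i _ => sq_nonneg _
  have hs' : (0:ℝ) < s := by exact_mod_cast Nat.lt_of_lt_of_le Nat.zero_lt_one hs
  -- quadratic form identity
  have hQ : ∑ j, (A.mulVec f j) ^ 2 = ∑ p, ∑ q, f p * f q * G p q := by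
    subst hG
    have h1 : ∀ j, (A.mulVec f j) ^ 2
        = ∑ p, ∑ q, f p * f q * (A j p * A j q) := by
      intro j
      rw [Matrix.mulVec, dotProduct, sq, Finset.sum_mul_sum]
      apply Finset.sum_congr rfl; intro p _
      apply Finset.sum_congr rfl; intro q _
      ring
    simp only [h1]
    rw [Finset.sum_comm]
    apply Finset.sum_congr rfl; intro p _
    rw [Finset.sum_comm]
    apply Finset.sum_congr rfl; intro q _
    rw [Matrix.mul_apply]
    simp only [Matrix.transpose_apply]
    rw [Finset.mul_sum]
  -- L := ℓ¹ norm
  set L : ℝ := ∑ i, |f i| with hLdef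
  have hL2 : L ^ 2 ≤ s * S := by
    have hLT : L = ∑ i ∈ T, |f i| := by
      rw [hLdef, ← Finset.sum_subset (Finset.subset_univ T)]
      intro i _ hi; rw [hfT i hi, abs_zero]
    have hcs : (∑ i ∈ T, 1 * |f i|) ^ 2 ≤ (∑ i ∈ T, (1:ℝ) ^ 2) * ∑ i ∈ T, |f i| ^ 2 :=
      Finset.sum_mul_sq_le_sq_mul_sq T _ _
    simp only [one_mul, one_pow, Finset.sum_const, nsmul_eq_mul, mul_one] at hcs
    have h2 : ∑ i ∈ T, |f i| ^ 2 ≤ S := by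
      calc ∑ i ∈ T, |f i| ^ 2 = ∑ i ∈ T, f i ^ 2 := by simp [sq_abs]
        _ ≤ S := Finset.sum_le_sum_of_subset_of_nonneg (Finset.subset_univ T)
            (fun i _ _ => sq_nonneg _)
    calc L ^ 2 ≤ (T.card : ℝ) * ∑ i ∈ T, |f i| ^ 2 := by rw [hLT]; exact hcs
      _ ≤ (s : ℝ) * S := by
          apply mul_le_mul (by exact_mod_cast hT) h2
            (Finset.sum_nonneg fun i _ => by positivity) (by positivity)
  -- main estimate
  have key : |(∑ p, ∑ q, f p * f q * G p q) - S| ≤ δ * S := by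
    have hsplit : (∑ p, ∑ q, f p * f q * G p q) - S
        = ∑ p, ∑ q, f p * f q * (G p q - if p = q then 1 else 0) := by
      have : ∑ p, ∑ q, f p * f q * (G p q - if p = q then 1 else 0)
          = (∑ p, ∑ q, f p * f q * G p q)
            - ∑ p, ∑ q, f p * f q * (if p = q then (1:ℝ) else 0) := by
        rw [← Finset.sum_sub_distrib]
        apply Finset.sum_congr rfl; intro p _
        rw [← Finset.sum_sub_distrib]
        apply Finset.sum_congr rfl; intro q _; ring
      rw [this]
      congr 1
      rw [hSdef]
      apply Finset.sum_congr rfl; intro p _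
      rw [Finset.sum_eq_single p]
      · simp [sq]
      · intro q _ hq; simp [Ne.symm hq]
      · simp
    rw [hsplit]
    have habs : |∑ p, ∑ q, f p * f q * (G p q - if p = q then 1 else 0)|
        ≤ ∑ p, ∑ q, |f p| * |f q| * (if p = q then δ/2 else δ/(2*s)) := by
      refine (Finset.abs_sum_le_sum_abs _ _).trans (Finset.sum_le_sum fun p _ => ?_)
      refine (Finset.abs_sum_le_sum_abs _ _).trans (Finset.sum_le_sum fun q _ => ?_)
      rw [abs_mul, abs_mul]
      by_cases hpq : p = q
      · subst hpq
        simp only [if_pos rfl]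
        exact mul_le_mul_of_nonneg_left (hdiag p) (by positivity)
      · simp only [if_neg hpq, sub_zero]
        exact mul_le_mul_of_nonneg_left (hoff p q hpq) (by positivity)
    refine habs.trans ?_
    have heval : ∑ p, ∑ q, |f p| * |f q| * (if p = q then δ/2 else δ/(2*s))
        = δ/(2*s) * L^2 + (δ/2 - δ/(2*s)) * S := by
      have : ∀ p q : Fin N, |f p| * |f q| * (if p = q then δ/2 else δ/(2*s))
          = δ/(2*s) * (|f p| * |f q|)
            + (if p = q then (δ/2 - δ/(2*s)) * (f p * f q) else 0) := by
        intro p q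
        by_cases hpq : p = q
        · subst hpq
          rw [if_pos rfl, if_pos rfl, abs_mul_abs_self]
          ring
        · rw [if_neg hpq, if_neg hpq]; ring
      simp only [this, Finset.sum_add_distrib]
      congr 1
      · rw [sq, Finset.sum_mul_sum, Finset.mul_sum]
        exact Finset.sum_congr rfl fun p _ => (Finset.mul_sum _ _ _).symm
      · rw [hSdef, Finset.mul_sum]
        apply Finset.sum_congr rfl; intro p _
        rw [Finset.sum_eq_single p (fun q _ hq => if_neg (Ne.symm hq))
          (fun h => absurd (Finset.mem_univ p) h), if_pos rfl]
        ring
    rw [heval]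
    have h1 : δ/(2*s) * L^2 ≤ δ/(2*s) * (s * S) :=
      mul_le_mul_of_nonneg_left hL2 (by positivity)
    have h2 : δ/(2*s) * (s * S) = δ/2 * S := by field_simp
    nlinarith [mul_pos hδ0 (mul_pos (by norm_num : (0:ℝ) < 2⁻¹) (inv_pos.mpr hs')), hSnn,
      mul_nonneg (le_of_lt hδ0) hSnn, div_nonneg (le_of_lt hδ0) (by positivity : (0:ℝ) ≤ 2*s)]
  rw [hQ]
  rw [abs_le] at key
  constructor <;> nlinarith [key.1, key.2]
end

section
/- Let h be a random mask on an n₁×n₂ grid whose entries are i.i.d., equal to ±√(d/n) with probability 1/2 each, let A ∈ ℝ^{m×n} be the spatial-domain CCA sensing matrix built from h, and let G = AᵀA. Let p = (p₁,p₂) ≠ q = (q₁,q₂) be index pairs such that mod(p₁ − q₁, d₁) ≠ 0 or mod(p₂ − q₂, d₂) ≠ 0. Then each of the m = n/d terms of the sum defining G_{pq} involves a distinct pair of mask entries, the terms are independent with mean zero and each bounded in absolute value by d/n, and for every δ_o > 0 and s ≥ 1, P(|G_{pq}| ≥ δ_o/s) ≤ 2 exp(−n δ_o² / (2 d s²)).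 -/
open Finset Matrix MeasureTheory ProbabilityTheory

/-- The pair of mask indices selected by row `l` and column `r` of the CCA matrix. -/
def maskIdx (n₁ n₂ d₁ d₂ : ℕ) (r : ZMod n₁ × ZMod n₂)
    (l : Fin (n₁ / d₁) × Fin (n₂ / d₂)) : ZMod n₁ × ZMod n₂ :=
  (((((l.1 : ℕ) * d₁ : ℕ) : ZMod n₁) - r.1), ((((l.2 : ℕ) * d₂ : ℕ) : ZMod n₂) - r.2))



lemma aux_precomp {Ω : Type} {mΩ : MeasurableSpace Ω} {μ : Measure Ω}
    {J I : Type*} {X : J → Ω → ℝ}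
    (hX : iIndepFun X μ)
    (e : I → J) (he : Function.Injective e) :
    iIndepFun (fun i => X (e i)) μ := by
  classical
  rw [iIndepFun_iff_measure_inter_preimage_eq_mul] at hX ⊢
  intro S sets hsets
  set sets' : J → Set ℝ := fun j =>
    if h : ∃ i ∈ S, e i = j then sets h.choose else Set.univ with hsets'
  have hkey : ∀ i ∈ S, sets' (e i) = sets i := by
    intro i hi
    have hex : ∃ i' ∈ S, e i' = e i := ⟨i, hi, rfl⟩
    have h2 := hex.choose_spec
    have h3 : hex.choose = i := he h2.2
    simp only [hsets', dif_pos hex, h3]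
  have hmeas' : ∀ j, MeasurableSet (sets' j) := by
    intro j
    by_cases h : ∃ i ∈ S, e i = j
    · simp only [hsets', dif_pos h]; exact hsets _ h.choose_spec.1
    · simp only [hsets', dif_neg h]; exact MeasurableSet.univ
  have h1 : (⋂ i ∈ S, (fun ω => X (e i) ω) ⁻¹' sets i)
      = ⋂ j ∈ S.image e, X j ⁻¹' sets' j := by
    ext ω
    simp only [Set.mem_iInter, Finset.mem_image]
    constructor
    · rintro h j ⟨i, hi, rfl⟩
      rw [hkey i hi]; exact h i hi
    · intro h i hi
      have := h (e i) ⟨i, hi, rfl⟩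
      rwa [hkey i hi] at this
  rw [h1, hX (S.image e) (fun j _ => hmeas' j),
    Finset.prod_image (fun i _ i' _ h => he h)]
  exact Finset.prod_congr rfl fun i hi => by rw [hkey i hi]

lemma aux_pair_mul {Ω : Type} {mΩ : MeasurableSpace Ω} {μ : Measure Ω}
    {I J : Type*} {X : J → Ω → ℝ}
    (hX : iIndepFun X μ)
    (hmeas : ∀ j, Measurable (X j))
    {a b : I → J}
    (hinj : Function.Injective (fun ib : I × Bool => if ib.2 then a ib.1 else b ib.1)) :
    iIndepFun
      (fun i ω => X (a i) ω * X (b i) ω) μ := by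
  classical
  set e : I × Bool → J := fun ib => if ib.2 then a ib.1 else b ib.1 with he
  have hY : iIndepFun (fun ib => X (e ib)) μ :=
    aux_precomp hX e hinj
  have hab : ∀ i, a i ≠ b i := by
    intro i h
    have h2 : ((i, true) : I × Bool) = (i, false) := hinj (by simpa [e] using h)
    simp at h2
  have hP : iIndepFun
      (fun i ω => (X (a i) ω, X (b i) ω)) μ := by
    rw [iIndepFun_iff_iIndep]
    set π : I → Set (Set Ω) := fun i =>
      (Set.preimage (fun ω => (X (a i) ω, X (b i) ω))) ''
        (Set.image2 (· ×ˢ ·) { s : Set ℝ | MeasurableSet s } { t : Set ℝ | MeasurableSet t })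
      with hπ
    refine iIndepSets.iIndep (fun i => ?_) π (fun i => isPiSystem_prod.comap _)
      (fun i => ?_) ?_
    · exact Measurable.comap_le ((hmeas (a i)).prodMk (hmeas (b i)))
    · rw [← generateFrom_prod, MeasurableSpace.comap_generateFrom]
    · rw [iIndepSets_iff]
      intro S E hE
      have hex : ∀ i, ∃ s t : Set ℝ, MeasurableSet s ∧ MeasurableSet t ∧
          (i ∈ S → E i = X (a i) ⁻¹' s ∩ X (b i) ⁻¹' t) := by
        intro i
        by_cases hi : i ∈ S
        · obtain ⟨St, hSt, hPre⟩ := hE i hi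
          obtain ⟨s, hs, t, ht, rfl⟩ := hSt
          exact ⟨s, t, hs, ht, fun _ => by rw [← hPre, Set.mk_preimage_prod]⟩
        · exact ⟨Set.univ, Set.univ, .univ, .univ, fun h => absurd h hi⟩
      choose u v hu hv hEuv using hex
      set F : I × Bool → Set ℝ := fun ib => if ib.2 then u ib.1 else v ib.1 with hF
      have hYind := iIndepFun_iff_measure_inter_preimage_eq_mul.1 hY
      have hInter : (⋂ i ∈ S, E i)
          = ⋂ ib ∈ S ×ˢ (Finset.univ : Finset Bool), (fun ω => X (e ib) ω) ⁻¹' F ib := by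
        ext ω
        simp only [Set.mem_iInter, Finset.mem_product, Finset.mem_univ, and_true]
        constructor
        · rintro h ⟨i, bb⟩ hi
          have h2 := h i hi
          rw [hEuv i hi] at h2
          cases bb
          · exact h2.2
          · exact h2.1
        · intro h i hi
          rw [hEuv i hi]
          exact ⟨h (i, true) hi, h (i, false) hi⟩
      have hFmeas : ∀ ib : I × Bool, ib ∈ S ×ˢ (Finset.univ : Finset Bool) →
          MeasurableSet (F ib) := by
        rintro ⟨i, bb⟩ _
        cases bb
        · exact hv i
        · exact hu i
      rw [hInter, hYind (S ×ˢ (Finset.univ : Finset Bool)) hFmeas, Finset.prod_product]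
      refine Finset.prod_congr rfl fun i hi => ?_
      rw [Fintype.prod_bool]
      have := (hX.indepFun (hab i)).measure_inter_preimage_eq_mul (u i) (v i) (hu i) (hv i)
      rw [hEuv i hi, this]
      rfl
  have := hP.comp (fun _ => (fun pr : ℝ × ℝ => pr.1 * pr.2)) (fun _ => measurable_mul)
  exact this




lemma aux_dvd_val_sub {n d : ℕ} [NeZero n] (hd : d ∣ n) (a b : ℕ) :
    d ∣ ((((a * d : ℕ) : ZMod n) - ((b * d : ℕ) : ZMod n)).val) := by
  haveI : NeZero d := ⟨by rintro rfl; exact (NeZero.ne n) (Nat.eq_zero_of_zero_dvd hd)⟩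
  set z := (((a * d : ℕ) : ZMod n) - ((b * d : ℕ) : ZMod n)) with hz
  rw [← ZMod.natCast_eq_zero_iff]
  have h1 : ((z.val : ℕ) : ZMod d) = ZMod.castHom hd (ZMod d) z := by
    rw [ZMod.castHom_apply, ZMod.natCast_val]
  rw [h1, hz, map_sub, map_natCast, map_natCast]
  simp [Nat.cast_mul, ZMod.natCast_self]

lemma aux_cast_inj {n d : ℕ} [NeZero n] (hd : d ∣ n) (hd0 : 0 < d) {a b : Fin (n / d)}
    (h : (((a : ℕ) * d : ℕ) : ZMod n) = (((b : ℕ) * d : ℕ) : ZMod n)) : a = b := by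
  have ha : (a : ℕ) * d < n := by
    have := (Nat.lt_div_iff_mul_lt' hd (a : ℕ)).1 a.2
    rwa [Nat.mul_comm] at this
  have hb : (b : ℕ) * d < n := by
    have := (Nat.lt_div_iff_mul_lt' hd (b : ℕ)).1 b.2
    rwa [Nat.mul_comm] at this
  have := congrArg ZMod.val h
  rw [ZMod.val_cast_of_lt ha, ZMod.val_cast_of_lt hb] at this
  exact Fin.ext (Nat.eq_of_mul_eq_mul_right hd0 this)


lemma aux_ae_two_point {Ω : Type} {mΩ : MeasurableSpace Ω} {μ : Measure Ω}
    [IsProbabilityMeasure μ] {Y : Ω → ℝ} (hY : Measurable Y) {α : ℝ} (hα : α ≠ 0)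
    (h1 : μ {ω | Y ω = α} = 1/2) (h2 : μ {ω | Y ω = -α} = 1/2) :
    ∀ᵐ ω ∂μ, Y ω = α ∨ Y ω = -α := by
  have hA : MeasurableSet {ω | Y ω = α} := hY (measurableSet_singleton α)
  have hB : MeasurableSet {ω | Y ω = -α} := hY (measurableSet_singleton (-α))
  have hdisj : Disjoint {ω | Y ω = α} {ω | Y ω = -α} := by
    rw [Set.disjoint_left]
    intro ω hω1 hω2
    simp only [Set.mem_setOf_eq] at hω1 hω2
    apply hα; linarith [hω1 ▸ hω2]
  have hu : μ ({ω | Y ω = α} ∪ {ω | Y ω = -α}) = 1 := by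
    rw [measure_union hdisj hB, h1, h2, ENNReal.add_halves]
  have h0 : μ ({ω | Y ω = α} ∪ {ω | Y ω = -α})ᶜ = 0 := by
    rw [measure_compl (hA.union hB) (measure_ne_top _ _), hu, measure_univ, tsub_self]
  rw [ae_iff]
  convert h0 using 2
  ext ω; simp

lemma aux_integral_two_point {Ω : Type} {mΩ : MeasurableSpace Ω} {μ : Measure Ω}
    [IsProbabilityMeasure μ] {Y : Ω → ℝ} (hY : Measurable Y) {α : ℝ} (hα : α ≠ 0)
    (h1 : μ {ω | Y ω = α} = 1/2) (h2 : μ {ω | Y ω = -α} = 1/2) (g : ℝ → ℝ) :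
    ∫ ω, g (Y ω) ∂μ = (g α + g (-α)) / 2 := by
  have hA : MeasurableSet {ω | Y ω = α} := hY (measurableSet_singleton α)
  have hae : ∀ᵐ ω ∂μ, g (Y ω) =
      ({ω | Y ω = α}.indicator (fun _ => g α) ω
        + ({ω | Y ω = α}ᶜ).indicator (fun _ => g (-α)) ω) := by
    filter_upwards [aux_ae_two_point hY hα h1 h2] with ω hω
    rcases hω with hω | hω
    · have hmem : ω ∈ {ω | Y ω = α} := hω
      rw [Set.indicator_of_mem hmem, Set.indicator_of_notMem (by simpa using hmem), hω, add_zero]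
    · have hnmem : ω ∉ {ω | Y ω = α} := by
        simp only [Set.mem_setOf_eq, hω]
        intro h; apply hα; linarith
      rw [Set.indicator_of_notMem hnmem, Set.indicator_of_mem (by simpa using hnmem), hω,
        zero_add]
  rw [integral_congr_ae hae, integral_add ((integrable_const (g α)).indicator hA)
    ((integrable_const (g (-α))).indicator hA.compl),
    integral_indicator_const _ hA, integral_indicator_const _ hA.compl]
  have hAc : μ {ω | Y ω = α}ᶜ = 1/2 := by
    rw [measure_compl hA (measure_ne_top _ _), measure_univ, h1]
    norm_num
  rw [measureReal_def, measureReal_def, h1, hAc]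
  have : ((1:ENNReal)/2).toReal = 1/2 := by norm_num
  rw [this]
  simp only [smul_eq_mul]
  ring

lemma aux_union_quarter {Ω : Type} {mΩ : MeasurableSpace Ω} {μ : Measure Ω}
    {U V : Ω → ℝ} (hU : Measurable U) (hV : Measurable V)
    (hUV : IndepFun U V μ) {x y x' y' : ℝ} (hx : x ≠ x')
    (h1 : μ (U ⁻¹' {x}) = 1/2) (h2 : μ (V ⁻¹' {y}) = 1/2)
    (h3 : μ (U ⁻¹' {x'}) = 1/2) (h4 : μ (V ⁻¹' {y'}) = 1/2) :
    μ ((U ⁻¹' {x} ∩ V ⁻¹' {y}) ∪ (U ⁻¹' {x'} ∩ V ⁻¹' {y'})) = 1/2 := by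
  have hmul : ∀ s t : Set ℝ, MeasurableSet s → MeasurableSet t →
      μ (U ⁻¹' s ∩ V ⁻¹' t) = μ (U ⁻¹' s) * μ (V ⁻¹' t) :=
    fun s t hs ht => hUV.measure_inter_preimage_eq_mul s t hs ht
  have hdisj : Disjoint (U ⁻¹' {x} ∩ V ⁻¹' {y}) (U ⁻¹' {x'} ∩ V ⁻¹' {y'}) := by
    rw [Set.disjoint_left]
    rintro ω ⟨hω1, _⟩ ⟨hω2, _⟩
    exact hx ((Set.mem_singleton_iff.1 hω1).symm.trans (Set.mem_singleton_iff.1 hω2))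
  rw [measure_union hdisj ((hU (measurableSet_singleton _)).inter
      (hV (measurableSet_singleton _))),
    hmul _ _ (measurableSet_singleton _) (measurableSet_singleton _),
    hmul _ _ (measurableSet_singleton _) (measurableSet_singleton _),
    h1, h2, h3, h4]
  have hhalf : (1/2 : ENNReal) * (1/2) = 1/4 := by
    rw [show (4:ENNReal) = 2*2 by norm_num, one_div, one_div,
      ENNReal.mul_inv (Or.inl (by norm_num)) (Or.inl (by norm_num))]
  rw [hhalf, ENNReal.div_add_div_same, ENNReal.div_eq_div_iff] <;> norm_num

lemma aux_prod_half {Ω : Type} {mΩ : MeasurableSpace Ω} {μ : Measure Ω}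
    [IsProbabilityMeasure μ] {U V : Ω → ℝ} (hU : Measurable U) (hV : Measurable V)
    (hUV : IndepFun U V μ) {c : ℝ} (hc : 0 < c)
    (hU1 : μ {ω | U ω = c} = 1/2) (hU2 : μ {ω | U ω = -c} = 1/2)
    (hV1 : μ {ω | V ω = c} = 1/2) (hV2 : μ {ω | V ω = -c} = 1/2) :
    μ {ω | U ω * V ω = c^2} = 1/2 ∧ μ {ω | U ω * V ω = -c^2} = 1/2 := by
  have hgood : ∀ᵐ ω ∂μ, (U ω = c ∨ U ω = -c) ∧ (V ω = c ∨ V ω = -c) :=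
    (aux_ae_two_point hU hc.ne' hU1 hU2).and (aux_ae_two_point hV hc.ne' hV1 hV2)
  have hc' : c ≠ -c := by intro h; apply hc.ne'; linarith
  constructor
  · have hset : {ω | U ω * V ω = c^2} =ᵐ[μ]
        (((U ⁻¹' {c} ∩ V ⁻¹' {c}) ∪ (U ⁻¹' {-c} ∩ V ⁻¹' {-c})) : Set Ω) := by
      rw [Filter.eventuallyEq_set]
      filter_upwards [hgood] with ω hω
      obtain ⟨hu, hv⟩ := hω
      simp only [Set.mem_setOf_eq, Set.mem_union, Set.mem_inter_iff, Set.mem_preimage,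
        Set.mem_singleton_iff]
      constructor
      · intro h
        rcases hu with hu | hu <;> rcases hv with hv | hv <;> rw [hu, hv] at h <;>
          [exact Or.inl ⟨hu, hv⟩; nlinarith; nlinarith; exact Or.inr ⟨hu, hv⟩]
      · rintro (⟨hu', hv'⟩ | ⟨hu', hv'⟩) <;> rw [hu', hv'] <;> ring
    rw [measure_congr hset]
    exact aux_union_quarter hU hV hUV hc' hU1 hV1 hU2 hV2
  · have hset : {ω | U ω * V ω = -c^2} =ᵐ[μ]
        (((U ⁻¹' {c} ∩ V ⁻¹' {-c}) ∪ (U ⁻¹' {-c} ∩ V ⁻¹' {c})) : Set Ω) := by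
      rw [Filter.eventuallyEq_set]
      filter_upwards [hgood] with ω hω
      obtain ⟨hu, hv⟩ := hω
      simp only [Set.mem_setOf_eq, Set.mem_union, Set.mem_inter_iff, Set.mem_preimage,
        Set.mem_singleton_iff]
      constructor
      · intro h
        rcases hu with hu | hu <;> rcases hv with hv | hv <;> rw [hu, hv] at h <;>
          [nlinarith; exact Or.inl ⟨hu, hv⟩; exact Or.inr ⟨hu, hv⟩; nlinarith]
      · rintro (⟨hu', hv'⟩ | ⟨hu', hv'⟩) <;> rw [hu', hv'] <;> ring
    rw [measure_congr hset]
    exact aux_union_quarter hU hV hUV hc' hU1 hV2 hU2 hV1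

/-- off-diagonal Gram entries of the CCA matrix, fully independent case.
If `mod(p₁ - q₁, d₁) ≠ 0` or `mod(p₂ - q₂, d₂) ≠ 0` then each of the `m = n/d` terms of
`G_{pq} = ∑_l A_{lp} A_{lq}` involves a distinct pair of mask entries; the terms are
independent, mean zero and bounded by `d/n`; and for all `δₒ > 0`, `s ≥ 1`,
`P(|G_{pq}| ≥ δₒ/s) ≤ 2 exp(-n δₒ² / (2 d s²))`. -/
theorem cca_gram_offdiag_independent_case
    (n₁ n₂ d₁ d₂ : ℕ) [NeZero n₁] [NeZero n₂]
    (hd₁ : d₁ ∣ n₁) (hd₂ : d₂ ∣ n₂) (hd₁0 : 0 < d₁) (hd₂0 : 0 < d₂)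
    (Ω : Type) (mΩ : MeasurableSpace Ω) (μ : Measure Ω) (hμ : IsProbabilityMeasure μ)
    (H : Ω → ZMod n₁ → ZMod n₂ → ℝ)
    (hmeas : ∀ i j, Measurable fun ω => H ω i j)
    (hindep : iIndepFun
      (fun (ij : ZMod n₁ × ZMod n₂) ω => H ω ij.1 ij.2) μ)
    (hdist : ∀ i j,
      μ {ω | H ω i j = Real.sqrt ((d₁ * d₂ : ℝ) / (n₁ * n₂ : ℝ))} = 1/2 ∧
      μ {ω | H ω i j = -Real.sqrt ((d₁ * d₂ : ℝ) / (n₁ * n₂ : ℝ))} = 1/2)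
    (p q : ZMod n₁ × ZMod n₂) (hpq : p ≠ q)
    (hmod : ¬ (d₁ : ℕ) ∣ (p.1 - q.1).val ∨ ¬ (d₂ : ℕ) ∣ (p.2 - q.2).val)
    -- the `l`-th term of the sum defining `G_{pq}`
    (T : (Fin (n₁ / d₁) × Fin (n₂ / d₂)) → Ω → ℝ)
    (hT : ∀ l ω, T l ω =
      ccaMatrix n₁ n₂ d₁ d₂ (H ω) l p * ccaMatrix n₁ n₂ d₁ d₂ (H ω) l q) :
    -- each term involves a distinct pair of mask entries
    (Function.Injective (fun lb : (Fin (n₁ / d₁) × Fin (n₂ / d₂)) × Bool =>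
        if lb.2 then maskIdx n₁ n₂ d₁ d₂ p lb.1 else maskIdx n₁ n₂ d₁ d₂ q lb.1)) ∧
    -- the terms are independent
    iIndepFun T μ ∧
    -- each term has mean zero
    (∀ l, ∫ ω, T l ω ∂μ = 0) ∧
    -- each term is bounded in absolute value by `d/n`
    (∀ l, ∀ᵐ ω ∂μ, |T l ω| ≤ (d₁ * d₂ : ℝ) / (n₁ * n₂ : ℝ)) ∧
    -- the Hoeffding bound
    (∀ (δo : ℝ), 0 < δo → ∀ (s : ℕ), 1 ≤ s →
      μ {ω | δo / s ≤
          |((ccaMatrix n₁ n₂ d₁ d₂ (H ω))ᵀ * ccaMatrix n₁ n₂ d₁ d₂ (H ω)) p q|}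
        ≤ ENNReal.ofReal
            (2 * Real.exp (-((n₁ : ℝ) * n₂) * δo ^ 2 /
              (2 * ((d₁ : ℝ) * d₂) * (s : ℝ) ^ 2)))) := by
  classical
  haveI : IsProbabilityMeasure μ := hμ
  have hn₁ : (0:ℝ) < n₁ := by exact_mod_cast Nat.pos_of_ne_zero (NeZero.ne n₁)
  have hn₂ : (0:ℝ) < n₂ := by exact_mod_cast Nat.pos_of_ne_zero (NeZero.ne n₂)
  have hd₁R : (0:ℝ) < d₁ := by exact_mod_cast hd₁0
  have hd₂R : (0:ℝ) < d₂ := by exact_mod_cast hd₂0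
  set B : ℝ := (d₁ * d₂ : ℝ) / (n₁ * n₂ : ℝ) with hBdef
  have hB0 : 0 < B := div_pos (mul_pos hd₁R hd₂R) (mul_pos hn₁ hn₂)
  set c : ℝ := Real.sqrt B with hcdef
  have hc0 : 0 < c := Real.sqrt_pos.2 hB0
  have hc2 : c ^ 2 = B := Real.sq_sqrt hB0.le
  -- the injectivity
  have hcross : ∀ (l l' : Fin (n₁ / d₁) × Fin (n₂ / d₂)),
      maskIdx n₁ n₂ d₁ d₂ p l = maskIdx n₁ n₂ d₁ d₂ q l' → False := by
    intro l l' hEq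
    simp only [maskIdx, Prod.mk.injEq] at hEq
    obtain ⟨h1, h2⟩ := hEq
    have e1 : p.1 - q.1 =
        (((l.1 : ℕ) * d₁ : ℕ) : ZMod n₁) - (((l'.1 : ℕ) * d₁ : ℕ) : ZMod n₁) := by
      linear_combination -h1
    have e2 : p.2 - q.2 =
        (((l.2 : ℕ) * d₂ : ℕ) : ZMod n₂) - (((l'.2 : ℕ) * d₂ : ℕ) : ZMod n₂) := by
      linear_combination -h2
    rcases hmod with h | h
    · exact h (e1 ▸ aux_dvd_val_sub hd₁ _ _)
    · exact h (e2 ▸ aux_dvd_val_sub hd₂ _ _)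
  have hinj : Function.Injective (fun lb : (Fin (n₁ / d₁) × Fin (n₂ / d₂)) × Bool =>
      if lb.2 then maskIdx n₁ n₂ d₁ d₂ p lb.1 else maskIdx n₁ n₂ d₁ d₂ q lb.1) := by
    rintro ⟨l, bb⟩ ⟨l', bb'⟩ hEq
    simp only at hEq
    cases bb <;> cases bb' <;>
      simp only [Bool.false_eq_true, if_true, if_false, ite_true, ite_false] at hEq
    · simp only [maskIdx, Prod.mk.injEq] at hEq
      obtain ⟨h1, h2⟩ := hEq
      have hl1 : l.1 = l'.1 := aux_cast_inj hd₁ hd₁0 (sub_left_inj.mp h1)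
      have hl2 : l.2 = l'.2 := aux_cast_inj hd₂ hd₂0 (sub_left_inj.mp h2)
      have : l = l' := Prod.ext hl1 hl2
      rw [this]
    · exact (hcross l' l hEq.symm).elim
    · exact (hcross l l' hEq).elim
    · simp only [maskIdx, Prod.mk.injEq] at hEq
      obtain ⟨h1, h2⟩ := hEq
      have hl1 : l.1 = l'.1 := aux_cast_inj hd₁ hd₁0 (sub_left_inj.mp h1)
      have hl2 : l.2 = l'.2 := aux_cast_inj hd₂ hd₂0 (sub_left_inj.mp h2)
      have : l = l' := Prod.ext hl1 hl2
      rw [this]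
  -- the mask-entry family
  set X : ZMod n₁ × ZMod n₂ → Ω → ℝ := fun ij ω => H ω ij.1 ij.2 with hXdef
  have hXmeas : ∀ ij, Measurable (X ij) := fun ij => hmeas ij.1 ij.2
  have hX1 : ∀ ij, μ {ω | X ij ω = c} = 1/2 := fun ij => (hdist ij.1 ij.2).1
  have hX2 : ∀ ij, μ {ω | X ij ω = -c} = 1/2 := fun ij => (hdist ij.1 ij.2).2
  have hTfun : ∀ l, T l =
      fun ω => X (maskIdx n₁ n₂ d₁ d₂ p l) ω * X (maskIdx n₁ n₂ d₁ d₂ q l) ω :=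
    fun l => funext fun ω => hT l ω
  have hne : ∀ l, maskIdx n₁ n₂ d₁ d₂ p l ≠ maskIdx n₁ n₂ d₁ d₂ q l := by
    intro l h
    have h2 : ((l, true) : (Fin (n₁ / d₁) × Fin (n₂ / d₂)) × Bool) = (l, false) :=
      hinj (by simpa using h)
    simp at h2
  have hTmeas : ∀ l, Measurable (T l) := fun l => by
    rw [hTfun l]; exact (hXmeas _).mul (hXmeas _)
  have hThalf : ∀ l, μ {ω | T l ω = B} = 1/2 ∧ μ {ω | T l ω = -B} = 1/2 := by
    intro l
    have h := aux_prod_half (hXmeas (maskIdx n₁ n₂ d₁ d₂ p l))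
      (hXmeas (maskIdx n₁ n₂ d₁ d₂ q l)) (hindep.indepFun (hne l)) hc0
      (hX1 _) (hX2 _) (hX1 _) (hX2 _)
    rw [hc2] at h
    have hsB : {ω | T l ω = B} =
        {ω | X (maskIdx n₁ n₂ d₁ d₂ p l) ω * X (maskIdx n₁ n₂ d₁ d₂ q l) ω = B} := by
      ext ω; rw [Set.mem_setOf_eq, Set.mem_setOf_eq, hT l ω]; exact Iff.rfl
    have hsB' : {ω | T l ω = -B} =
        {ω | X (maskIdx n₁ n₂ d₁ d₂ p l) ω * X (maskIdx n₁ n₂ d₁ d₂ q l) ω = -B} := by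
      ext ω; rw [Set.mem_setOf_eq, Set.mem_setOf_eq, hT l ω]; exact Iff.rfl
    rw [hsB, hsB']
    exact h
  -- conjunct 2 : independence
  have hindepT : iIndepFun T μ := by
    have h := aux_pair_mul hindep (fun ij => hmeas ij.1 ij.2) hinj
    have hTeq : T = fun l ω =>
        X (maskIdx n₁ n₂ d₁ d₂ p l) ω * X (maskIdx n₁ n₂ d₁ d₂ q l) ω := by
      funext l ω; exact hT l ω
    rw [hTeq]
    exact h
  -- conjunct 3 : mean zero
  have hmean : ∀ l, ∫ ω, T l ω ∂μ = 0 := by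
    intro l
    have h := aux_integral_two_point (hTmeas l) hB0.ne' (hThalf l).1 (hThalf l).2 (fun x => x)
    simpa using h
  -- conjunct 4 : boundedness
  have hbdd : ∀ l, ∀ᵐ ω ∂μ, |T l ω| ≤ B := by
    intro l
    filter_upwards [aux_ae_two_point (hTmeas l) hB0.ne' (hThalf l).1 (hThalf l).2] with ω hω
    rcases hω with h | h <;> rw [h] <;> simp [abs_of_nonneg hB0.le]
  refine ⟨hinj, hindepT, hmean, hbdd, ?_⟩
  -- conjunct 5 : Hoeffding bound
  intro δo hδo s hs
  have hsR : (1:ℝ) ≤ (s:ℝ) := by exact_mod_cast hs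
  have hs0 : (0:ℝ) < (s:ℝ) := lt_of_lt_of_le one_pos hsR
  set t : ℝ := δo / (s:ℝ) with htdef
  have ht0 : 0 < t := div_pos hδo hs0
  set v : ℝ := t / B with hvdef
  have hv0 : 0 < v := div_pos ht0 hB0
  set M : ℝ := ((Fintype.card (Fin (n₁ / d₁) × Fin (n₂ / d₂)) : ℕ) : ℝ) with hMdef
  have hMB : M * B = 1 := by
    rw [hMdef, hBdef, Fintype.card_prod, Fintype.card_fin, Fintype.card_fin, Nat.cast_mul,
      Nat.cast_div hd₁ (by exact_mod_cast hd₁0.ne'),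
      Nat.cast_div hd₂ (by exact_mod_cast hd₂0.ne')]
    field_simp
  have hM : M = 1 / B := by rw [eq_div_iff hB0.ne']; exact hMB
  -- per-term mgf bound
  have hmgf_one : ∀ l (w : ℝ), mgf (T l) μ w ≤ Real.exp ((w * B)^2 / 2) := by
    intro l w
    calc mgf (T l) μ w = (Real.exp (w * B) + Real.exp (w * -B)) / 2 :=
          aux_integral_two_point (hTmeas l) hB0.ne' (hThalf l).1 (hThalf l).2
            (fun x => Real.exp (w * x))
      _ = Real.cosh (w * B) := by rw [Real.cosh_eq, mul_neg]
      _ ≤ Real.exp ((w * B)^2 / 2) := Real.cosh_le_exp_half_sq _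
  set Sf : Ω → ℝ := ∑ l, T l with hSfdef
  have hint : ∀ (w : ℝ) l, Integrable (fun ω => Real.exp (w * T l ω)) μ := by
    intro w l
    refine Integrable.mono' (integrable_const (Real.exp (|w| * B)))
      (((hTmeas l).const_mul w).exp.aestronglyMeasurable) ?_
    filter_upwards [hbdd l] with ω hω
    rw [Real.norm_eq_abs, Real.abs_exp]
    apply Real.exp_le_exp.2
    calc w * T l ω ≤ |w * T l ω| := le_abs_self _
      _ = |w| * |T l ω| := abs_mul _ _
      _ ≤ |w| * B := mul_le_mul_of_nonneg_left hω (abs_nonneg w)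
  have hintS : ∀ w : ℝ, Integrable (fun ω => Real.exp (w * Sf ω)) μ := fun w =>
    hindepT.integrable_exp_mul_sum hTmeas (fun l _ => hint w l)
  have hmgf_le : ∀ w : ℝ, mgf Sf μ w ≤ Real.exp (M * ((w * B)^2 / 2)) := by
    intro w
    rw [hSfdef, hindepT.mgf_sum hTmeas Finset.univ]
    calc ∏ l, mgf (T l) μ w
        ≤ ∏ _l : Fin (n₁ / d₁) × Fin (n₂ / d₂), Real.exp ((w * B)^2 / 2) :=
          Finset.prod_le_prod (fun l _ => mgf_nonneg) (fun l _ => hmgf_one l w)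
      _ = Real.exp ((w * B)^2 / 2) ^ (Fintype.card (Fin (n₁ / d₁) × Fin (n₂ / d₂))) := by
          rw [Finset.prod_const, Finset.card_univ]
      _ = Real.exp (M * ((w * B)^2 / 2)) := by
          rw [hMdef, ← Real.exp_nat_mul]
  have hexp_eq : -v * t + M * ((v * B)^2 / 2) = -(t^2) / (2 * B) := by
    rw [hM, hvdef]
    field_simp
    ring
  have hup : (μ {ω | t ≤ Sf ω}).toReal ≤ Real.exp (-(t^2) / (2 * B)) := by
    refine (measure_ge_le_exp_mul_mgf (μ := μ) (X := Sf) t hv0.le (hintS v)).trans ?_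
    calc Real.exp (-v * t) * mgf Sf μ v
        ≤ Real.exp (-v * t) * Real.exp (M * ((v * B)^2 / 2)) :=
          mul_le_mul_of_nonneg_left (hmgf_le v) (Real.exp_pos _).le
      _ = Real.exp (-v * t + M * ((v * B)^2 / 2)) := (Real.exp_add _ _).symm
      _ = Real.exp (-(t^2) / (2 * B)) := by rw [hexp_eq]
  have hlow : (μ {ω | Sf ω ≤ -t}).toReal ≤ Real.exp (-(t^2) / (2 * B)) := by
    refine (measure_le_le_exp_mul_mgf (μ := μ) (X := Sf) (-t)
      (neg_nonpos.mpr hv0.le) (hintS (-v))).trans ?_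
    calc Real.exp (-(-v) * -t) * mgf Sf μ (-v)
        ≤ Real.exp (-(-v) * -t) * Real.exp (M * ((-v * B)^2 / 2)) :=
          mul_le_mul_of_nonneg_left (hmgf_le (-v)) (Real.exp_pos _).le
      _ = Real.exp (-(-v) * -t + M * ((-v * B)^2 / 2)) := (Real.exp_add _ _).symm
      _ = Real.exp (-(t^2) / (2 * B)) := by rw [← hexp_eq]; congr 1; ring
  have hA1 : μ {ω | t ≤ Sf ω} ≤ ENNReal.ofReal (Real.exp (-(t^2) / (2 * B))) := by
    rw [← ENNReal.ofReal_toReal (measure_ne_top μ _)]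
    exact ENNReal.ofReal_le_ofReal hup
  have hA2 : μ {ω | Sf ω ≤ -t} ≤ ENNReal.ofReal (Real.exp (-(t^2) / (2 * B))) := by
    rw [← ENNReal.ofReal_toReal (measure_ne_top μ _)]
    exact ENNReal.ofReal_le_ofReal hlow
  have hsub : {ω | t ≤
      |((ccaMatrix n₁ n₂ d₁ d₂ (H ω))ᵀ * ccaMatrix n₁ n₂ d₁ d₂ (H ω)) p q|}
      ⊆ {ω | t ≤ Sf ω} ∪ {ω | Sf ω ≤ -t} := by
    intro ω hω
    rw [Set.mem_setOf_eq] at hω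
    have hG : ((ccaMatrix n₁ n₂ d₁ d₂ (H ω))ᵀ * ccaMatrix n₁ n₂ d₁ d₂ (H ω)) p q = Sf ω := by
      rw [Matrix.mul_apply, hSfdef, Finset.sum_apply]
      exact Finset.sum_congr rfl fun l _ => by
        rw [Matrix.transpose_apply]; exact (hT l ω).symm
    rw [hG] at hω
    rcases le_abs.mp hω with h | h
    · exact Or.inl h
    · exact Or.inr (by simpa using (neg_le_neg h))
  calc μ {ω | t ≤
        |((ccaMatrix n₁ n₂ d₁ d₂ (H ω))ᵀ * ccaMatrix n₁ n₂ d₁ d₂ (H ω)) p q|}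
      ≤ μ ({ω | t ≤ Sf ω} ∪ {ω | Sf ω ≤ -t}) := measure_mono hsub
    _ ≤ μ {ω | t ≤ Sf ω} + μ {ω | Sf ω ≤ -t} := measure_union_le _ _
    _ ≤ ENNReal.ofReal (Real.exp (-(t^2) / (2 * B)))
        + ENNReal.ofReal (Real.exp (-(t^2) / (2 * B))) := add_le_add hA1 hA2
    _ = ENNReal.ofReal (2 * Real.exp (-((n₁ : ℝ) * n₂) * δo ^ 2 /
          (2 * ((d₁ : ℝ) * d₂) * (s : ℝ) ^ 2))) := by
        rw [← ENNReal.ofReal_add (Real.exp_pos _).le (Real.exp_pos _).le]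
        congr 1
        have hexp2 : -(t^2) / (2 * B) = -((n₁ : ℝ) * n₂) * δo ^ 2 /
            (2 * ((d₁ : ℝ) * d₂) * (s : ℝ) ^ 2) := by
          rw [htdef, hBdef]
          field_simp
        rw [hexp2]
        ring
end

section
/- Let h_1, …, h_B be B independent random masks on an n₁×n₂ grid (nB ≥ 2), each with i.i.d. entries equal to ±√(d/n) with probability 1/2 each, let A_t ∈ ℝ^{m×n} be the spatial-domain CCA sensing matrix built from h_t, and let A = [A_1 ⋯ A_B] ∈ ℝ^{m×nB}. Then for δ_s ∈ (0,1) and s ≥ 1, P(A does not satisfy RIP(s, δ_s)) ≤ 2 n² B² exp(−n δ_s² / (16 d s²)); in particular, for any c₂ ≤ δ_s²/16 and c₁ ≥ 3/c₂, if n/d ≥ c₁ s² log(nB) then this probability is strictly less than 1. -/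
open Finset Matrix MeasureTheory ProbabilityTheory
open scoped ENNReal
/-- The CAKE sensing matrix `A = [A₁ ⋯ A_B]`. -/
def cakeMatrix (n₁ n₂ d₁ d₂ B : ℕ) (h : Fin B → ZMod n₁ → ZMod n₂ → ℝ) :
    Matrix (Fin (n₁ / d₁) × Fin (n₂ / d₂)) (Fin B × (ZMod n₁ × ZMod n₂)) ℝ :=
  fun l tk => ccaMatrix n₁ n₂ d₁ d₂ (h tk.1) l tk.2

namespace CakeAux

lemma cosh_le_exp_abs (x : ℝ) : Real.cosh x ≤ Real.exp |x| := by
  have h1 : Real.exp x ≤ Real.exp |x| := Real.exp_le_exp.2 (le_abs_self x)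
  have h2 : Real.exp (-x) ≤ Real.exp |x| := Real.exp_le_exp.2 (neg_le_abs x)
  rw [Real.cosh_eq]; linarith

lemma abs_sinh_le_exp_abs (x : ℝ) : |Real.sinh x| ≤ Real.exp |x| := by
  have h1 : Real.exp x ≤ Real.exp |x| := Real.exp_le_exp.2 (le_abs_self x)
  have h2 : Real.exp (-x) ≤ Real.exp |x| := Real.exp_le_exp.2 (neg_le_abs x)
  have h3 := (Real.exp_pos x).le
  have h4 := (Real.exp_pos (-x)).le
  rcases abs_cases (Real.sinh x) with ⟨h, _⟩ | ⟨h, _⟩ <;> rw [h, Real.sinh_eq] <;> linarith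

variable {Ω : Type} [MeasurableSpace Ω] {μ : Measure Ω} [IsProbabilityMeasure μ]
variable {ι : Type*} [Fintype ι] {X : ι → Ω → ℝ} {c : ℝ}

lemma good_ae (hc : 0 < c) (hXm : ∀ i, Measurable (X i))
    (hX : ∀ i, μ {ω | X i ω = c} = 1/2 ∧ μ {ω | X i ω = -c} = 1/2) :
    ∀ᵐ ω ∂μ, ∀ i, X i ω = c ∨ X i ω = -c := by
  rw [ae_all_iff]
  intro i
  have hA : MeasurableSet {ω | X i ω = c} := hXm i (measurableSet_singleton c)
  have hB : MeasurableSet {ω | X i ω = -c} := hXm i (measurableSet_singleton (-c))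
  have hAB : Disjoint {ω | X i ω = c} {ω | X i ω = -c} := by
    rw [Set.disjoint_left]; intro ω h1 h2
    have : c = -c := (h1 : X i ω = c).symm.trans h2
    linarith
  have hU : μ ({ω | X i ω = c} ∪ {ω | X i ω = -c}) = 1 := by
    rw [measure_union hAB hB, (hX i).1, (hX i).2]
    rw [ENNReal.div_add_div_same]
    norm_num
    exact ENNReal.div_self two_ne_zero ENNReal.ofNat_ne_top
  have := (prob_compl_eq_zero_iff (hA.union hB)).2 hU
  have hsub : {ω | ¬ (X i ω = c ∨ X i ω = -c)} ⊆ ({ω | X i ω = c} ∪ {ω | X i ω = -c})ᶜ := by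
    intro ω h
    simp only [Set.mem_compl_iff, Set.mem_union, Set.mem_setOf_eq]
    exact h
  exact measure_mono_null hsub this

lemma integral_X_eq_zero (hc : 0 < c) (hXm : ∀ i, Measurable (X i))
    (hX : ∀ i, μ {ω | X i ω = c} = 1/2 ∧ μ {ω | X i ω = -c} = 1/2) (i : ι) :
    ∫ ω, X i ω ∂μ = 0 := by
  have hA : MeasurableSet {ω | X i ω = c} := hXm i (measurableSet_singleton c)
  have hB : MeasurableSet {ω | X i ω = -c} := hXm i (measurableSet_singleton (-c))
  have hcne : c ≠ -c := by intro h; linarith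
  have heq : X i =ᵐ[μ] fun ω => Set.indicator {ω | X i ω = c} (fun _ => c) ω
      + Set.indicator {ω | X i ω = -c} (fun _ => -c) ω := by
    filter_upwards [good_ae hc hXm hX] with ω hω
    rcases hω i with h | h
    · have hm1 : ω ∈ {ω | X i ω = c} := h
      have hn : ω ∉ {ω | X i ω = -c} := fun hm => hcne (h.symm.trans hm)
      rw [Set.indicator_of_mem hm1, Set.indicator_of_notMem hn, h]; ring
    · have hm1 : ω ∈ {ω | X i ω = -c} := h
      have hn : ω ∉ {ω | X i ω = c} := fun hm => hcne ((hm : X i ω = c).symm.trans h)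
      rw [Set.indicator_of_notMem hn, Set.indicator_of_mem hm1, h]; ring
  rw [integral_congr_ae heq,
    integral_add ((integrable_const c).indicator hA) ((integrable_const (-c)).indicator hB),
    integral_indicator hA, integral_indicator hB, setIntegral_const, setIntegral_const,
    measureReal_def, measureReal_def, (hX i).1, (hX i).2]
  have h12 : ((1:ℝ≥0∞)/2).toReal = (1/2 : ℝ) := by simp
  rw [h12, smul_eq_mul, smul_eq_mul]; ring

lemma integrable_of_bdd {f : Ω → ℝ} {C : ℝ} (hm : AEStronglyMeasurable f μ)
    (hb : ∀ᵐ ω ∂μ, |f ω| ≤ C) : Integrable f μ :=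
  Integrable.mono' (integrable_const C) hm (by simpa [Real.norm_eq_abs] using hb)


lemma mgf_bound {ι' : Type*} (hc : 0 < c) (hXm : ∀ i, Measurable (X i))
    (hindep : iIndepFun X μ)
    (hX : ∀ i, μ {ω | X i ω = c} = 1/2 ∧ μ {ω | X i ω = -c} = 1/2)
    (p q : ι' → ι) (lam : ℝ) :
    ∀ L : Finset ι', Set.InjOn p ↑L → Set.InjOn q ↑L → (∀ l ∈ L, p l ≠ q l) →
    ∫ ω, Real.exp (lam * ∑ l ∈ L, X (p l) ω * X (q l) ω) ∂μ
      ≤ Real.exp (lam ^ 2 * c ^ 4 * L.card) := by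
  intro L
  induction L using Finset.strongInduction with
  | _ L IH =>
  intro hp hq hpq
  rcases L.eq_empty_or_nonempty with rfl | ⟨l₀, hl₀⟩
  · simp
  classical
  set v := q l₀ with hv
  set M := L.filter (fun l => p l = v ∨ q l = v) with hM
  have hl₀M : l₀ ∈ M := by
    rw [hM, Finset.mem_filter]; exact ⟨hl₀, Or.inr rfl⟩
  have hML : M ⊆ L := Finset.filter_subset _ _
  set L' := L \ M with hL'
  have hL'L : L' ⊆ L := Finset.sdiff_subset
  have hMcardN : M.card ≤ 2 := by
    have h1 : (L.filter fun l => p l = v).card ≤ 1 := by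
      refine Finset.card_le_one.2 (fun a ha b hb => ?_)
      rw [Finset.mem_filter] at ha hb
      exact hp ha.1 hb.1 (ha.2.trans hb.2.symm)
    have hsub : M ⊆ insert l₀ (L.filter fun l => p l = v) := by
      intro l hl
      rw [hM, Finset.mem_filter] at hl
      rcases hl.2 with h | h
      · exact Finset.mem_insert_of_mem (Finset.mem_filter.2 ⟨hl.1, h⟩)
      · have : l = l₀ := hq hl.1 hl₀ h
        rw [this]; exact Finset.mem_insert_self _ _
    calc M.card ≤ _ := Finset.card_le_card hsub
      _ ≤ (L.filter fun l => p l = v).card + 1 := Finset.card_insert_le _ _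
      _ ≤ 2 := by omega
  have hMcard : (M.card : ℝ) ≤ 2 := by exact_mod_cast hMcardN
  have hL'v : ∀ l ∈ L', p l ≠ v ∧ q l ≠ v := by
    intro l hl
    rw [hL', Finset.mem_sdiff, hM, Finset.mem_filter] at hl
    push_neg at hl
    exact hl.2 hl.1
  set other : ι' → ι := fun l => if q l = v then p l else q l with hother
  have hotherv : ∀ l ∈ M, other l ≠ v := by
    intro l hl
    rw [hM, Finset.mem_filter] at hl
    by_cases h : q l = v
    · simp only [hother, if_pos h]
      rw [← h]; exact hpq l hl.1
    · simp only [hother, if_neg h]; exact h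
  have hval : ∀ l ∈ M, ∀ ω, X (p l) ω * X (q l) ω = X v ω * X (other l) ω := by
    intro l hl ω
    rw [hM, Finset.mem_filter] at hl
    by_cases h : q l = v
    · simp only [hother, if_pos h, h]; ring
    · have hpv : p l = v := hl.2.resolve_right h
      simp only [hother, if_neg h, hpv]
  set S' : Ω → ℝ := fun ω => ∑ l ∈ L', X (p l) ω * X (q l) ω with hS'
  set W : Ω → ℝ := fun ω => ∑ l ∈ M, X (other l) ω with hW
  have hsplit : ∀ ω, (∑ l ∈ L, X (p l) ω * X (q l) ω) = S' ω + X v ω * W ω := by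
    intro ω
    simp only [hS', hW]
    rw [Finset.mul_sum, ← Finset.sum_sdiff hML]
    congr 1
    exact Finset.sum_congr rfl (fun l hl => hval l hl ω)
  have hS'm : Measurable S' := Finset.measurable_sum _ (fun l _ => (hXm _).mul (hXm _))
  have hWm : Measurable W := Finset.measurable_sum _ (fun l _ => hXm _)
  have habs : ∀ᵐ ω ∂μ, ∀ i, |X i ω| = c := by
    filter_upwards [good_ae hc hXm hX] with ω hω i
    rcases hω i with h | h
    · rw [h, abs_of_pos hc]
    · rw [h, abs_neg, abs_of_pos hc]
  have hS'b : ∀ᵐ ω ∂μ, |S' ω| ≤ L'.card * c ^ 2 := by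
    filter_upwards [habs] with ω hω
    calc |S' ω| ≤ ∑ l ∈ L', |X (p l) ω * X (q l) ω| := Finset.abs_sum_le_sum_abs _ _
      _ = ∑ _l ∈ L', c ^ 2 := by
          refine Finset.sum_congr rfl (fun l _ => ?_)
          rw [abs_mul, hω, hω]; ring
      _ = L'.card * c ^ 2 := by rw [Finset.sum_const, nsmul_eq_mul]
  have hWb : ∀ᵐ ω ∂μ, |W ω| ≤ M.card * c := by
    filter_upwards [habs] with ω hω
    calc |W ω| ≤ ∑ l ∈ M, |X (other l) ω| := Finset.abs_sum_le_sum_abs _ _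
      _ = ∑ _l ∈ M, c := Finset.sum_congr rfl (fun l _ => hω _)
      _ = M.card * c := by rw [Finset.sum_const, nsmul_eq_mul]
  set f₁ : Ω → ℝ := fun ω => Real.exp (lam * S' ω) with hf₁
  set f₂ : Ω → ℝ := fun ω => Real.cosh (lam * c * W ω) with hf₂
  set f₃ : Ω → ℝ := fun ω => Real.sinh (lam * c * W ω) with hf₃
  have hf₁m : Measurable f₁ := (hS'm.const_mul lam).exp
  have hf₂m : Measurable f₂ := (hWm.const_mul (lam * c)).cosh
  have hf₃m : Measurable f₃ := (hWm.const_mul (lam * c)).sinh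
  set C₁ := Real.exp (|lam| * (L'.card * c ^ 2)) with hC₁
  set C₂ := Real.exp (|lam * c| * (M.card * c)) with hC₂
  have hC₁0 : 0 ≤ C₁ := (Real.exp_pos _).le
  have hC₂0 : 0 ≤ C₂ := (Real.exp_pos _).le
  have hf₁b : ∀ᵐ ω ∂μ, |f₁ ω| ≤ C₁ := by
    filter_upwards [hS'b] with ω h
    rw [hf₁, hC₁]
    rw [abs_of_pos (Real.exp_pos _)]
    apply Real.exp_le_exp.2
    calc lam * S' ω ≤ |lam * S' ω| := le_abs_self _
      _ = |lam| * |S' ω| := abs_mul _ _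
      _ ≤ |lam| * (L'.card * c ^ 2) := mul_le_mul_of_nonneg_left h (abs_nonneg lam)
  have hf₂b : ∀ᵐ ω ∂μ, |f₂ ω| ≤ C₂ := by
    filter_upwards [hWb] with ω h
    have h2 : f₂ ω = Real.cosh (lam * c * W ω) := rfl
    have h3 : C₂ = Real.exp (|lam * c| * (M.card * c)) := rfl
    rw [h2, h3, abs_of_pos (Real.cosh_pos _)]
    calc Real.cosh (lam * c * W ω) ≤ Real.exp |lam * c * W ω| := cosh_le_exp_abs _
      _ ≤ _ := by
        apply Real.exp_le_exp.2
        rw [abs_mul]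
        exact mul_le_mul_of_nonneg_left h (abs_nonneg _)
  have hf₃b : ∀ᵐ ω ∂μ, |f₃ ω| ≤ C₂ := by
    filter_upwards [hWb] with ω h
    have h2 : f₃ ω = Real.sinh (lam * c * W ω) := rfl
    have h3 : C₂ = Real.exp (|lam * c| * (M.card * c)) := rfl
    rw [h2, h3]
    calc |Real.sinh (lam * c * W ω)| ≤ Real.exp |lam * c * W ω| := abs_sinh_le_exp_abs _
      _ ≤ _ := by
        apply Real.exp_le_exp.2
        rw [abs_mul]
        exact mul_le_mul_of_nonneg_left h (abs_nonneg _)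
  have hcne : c ≠ 0 := ne_of_gt hc
  have hid : ∀ᵐ ω ∂μ, Real.exp (lam * ∑ l ∈ L, X (p l) ω * X (q l) ω)
      = f₁ ω * f₂ ω + (f₁ ω * f₃ ω / c) * X v ω := by
    filter_upwards [good_ae hc hXm hX] with ω hω
    rw [hsplit ω, mul_add, Real.exp_add]
    simp only [hf₁, hf₂, hf₃]
    rcases hω v with h | h
    · rw [h]
      rw [show lam * (c * W ω) = lam * c * W ω from by ring]
      field_simp
      rw [Real.cosh_add_sinh]
    · rw [h]
      rw [show lam * (-c * W ω) = -(lam * c * W ω) from by ring]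
      field_simp
      rw [← sub_eq_add_neg, Real.cosh_sub_sinh]
  have int₁ : Integrable (fun ω => f₁ ω * f₂ ω) μ := by
    refine integrable_of_bdd ((hf₁m.mul hf₂m).aestronglyMeasurable) (C := C₁ * C₂) ?_
    filter_upwards [hf₁b, hf₂b] with ω h1 h2
    rw [abs_mul]
    exact mul_le_mul h1 h2 (abs_nonneg _) hC₁0
  have int₂ : Integrable (fun ω => (f₁ ω * f₃ ω / c) * X v ω) μ := by
    refine integrable_of_bdd ((((hf₁m.mul hf₃m).div_const c).mul (hXm v)).aestronglyMeasurable)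
      (C := C₁ * C₂) ?_
    filter_upwards [hf₁b, hf₃b, habs] with ω h1 h3 hω
    have : |f₁ ω * f₃ ω / c * X v ω| = |f₁ ω| * |f₃ ω| := by
      rw [abs_mul, abs_div, abs_mul, hω v, abs_of_pos hc]
      field_simp
    rw [this]
    exact mul_le_mul h1 h3 (abs_nonneg _) hC₁0
  have hInt : ∫ ω, Real.exp (lam * ∑ l ∈ L, X (p l) ω * X (q l) ω) ∂μ
      = (∫ ω, f₁ ω * f₂ ω ∂μ) + ∫ ω, (f₁ ω * f₃ ω / c) * X v ω ∂μ := by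
    rw [integral_congr_ae hid, integral_add int₁ int₂]
  have hzero : ∫ ω, (f₁ ω * f₃ ω / c) * X v ω ∂μ = 0 := by
    set T : Finset ι := (L'.image p ∪ L'.image q) ∪ M.image other with hT
    have hvT : v ∉ T := by
      intro hvm
      rw [hT] at hvm
      simp only [Finset.mem_union, Finset.mem_image] at hvm
      rcases hvm with (⟨l, hl, he⟩ | ⟨l, hl, he⟩) | ⟨l, hl, he⟩
      · exact (hL'v l hl).1 he
      · exact (hL'v l hl).2 he
      · exact hotherv l hl he
    have hdisj : Disjoint T {v} := Finset.disjoint_singleton_right.2 hvT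
    have base := hindep.indepFun_finset T {v} hdisj hXm
    have hmemp : ∀ l : {x // x ∈ L'}, p l.1 ∈ T := fun l => by
      rw [hT]
      exact Finset.mem_union_left _ (Finset.mem_union_left _ (Finset.mem_image_of_mem p l.2))
    have hmemq : ∀ l : {x // x ∈ L'}, q l.1 ∈ T := fun l => by
      rw [hT]
      exact Finset.mem_union_left _ (Finset.mem_union_right _ (Finset.mem_image_of_mem q l.2))
    have hmemo : ∀ l : {x // x ∈ M}, other l.1 ∈ T := fun l => by
      rw [hT]
      exact Finset.mem_union_right _ (Finset.mem_image_of_mem other l.2)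
    set φ : ({x // x ∈ T} → ℝ) → ℝ := fun x =>
      Real.exp (lam * ∑ l ∈ L'.attach, x ⟨p l.1, hmemp l⟩ * x ⟨q l.1, hmemq l⟩) *
        Real.sinh (lam * c * ∑ l ∈ M.attach, x ⟨other l.1, hmemo l⟩) / c with hφ
    have hφm : Measurable φ := by
      rw [hφ]
      apply Measurable.div_const
      apply Measurable.mul
      · apply Measurable.exp
        apply Measurable.const_mul
        apply Finset.measurable_sum
        intro l _
        exact Measurable.mul (measurable_pi_apply _) (measurable_pi_apply _)
      · apply Measurable.sinh
        apply Measurable.const_mul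
        apply Finset.measurable_sum
        intro l _
        exact measurable_pi_apply _
    set ψ : ({x // x ∈ ({v} : Finset ι)} → ℝ) → ℝ := fun x => x ⟨v, Finset.mem_singleton_self v⟩
      with hψ
    have hψm : Measurable ψ := measurable_pi_apply _
    have hcomp := base.comp hφm hψm
    have heq1 : (φ ∘ fun ω (i : {x // x ∈ T}) => X i.1 ω) = fun ω => f₁ ω * f₃ ω / c := by
      funext ω
      simp only [Function.comp_apply, hφ, hf₁, hf₃, hS', hW]
      rw [Finset.sum_attach L' (fun l => X (p l) ω * X (q l) ω),
          Finset.sum_attach M (fun l => X (other l) ω)]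
    have heq2 : (ψ ∘ fun ω (i : {x // x ∈ ({v} : Finset ι)}) => X i.1 ω) = X v := rfl
    rw [heq1, heq2] at hcomp
    have him : AEStronglyMeasurable (fun ω => f₁ ω * f₃ ω / c) μ :=
      ((hf₁m.mul hf₃m).div_const c).aestronglyMeasurable
    calc ∫ ω, (f₁ ω * f₃ ω / c) * X v ω ∂μ
        = (∫ ω, f₁ ω * f₃ ω / c ∂μ) * ∫ ω, X v ω ∂μ :=
          hcomp.integral_fun_mul_eq_mul_integral him (hXm v).aestronglyMeasurable
      _ = 0 := by rw [integral_X_eq_zero hc hXm hX v, mul_zero]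
  set K := Real.exp (lam ^ 2 * c ^ 4 * M.card) with hK
  have hK0 : 0 ≤ K := (Real.exp_pos _).le
  have hf₂K : ∀ᵐ ω ∂μ, f₂ ω ≤ K := by
    filter_upwards [hWb] with ω h
    have hb := abs_le.1 h
    have hW2 : (W ω) ^ 2 ≤ ((M.card : ℝ) * c) ^ 2 := by nlinarith [hb.1, hb.2]
    calc f₂ ω ≤ Real.exp ((lam * c * W ω) ^ 2 / 2) := Real.cosh_le_exp_half_sq _
      _ ≤ K := by
        rw [hK]
        apply Real.exp_le_exp.2
        have hMc0 : (0:ℝ) ≤ (M.card : ℝ) := Nat.cast_nonneg _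
        nlinarith [sq_nonneg (lam * c), sq_nonneg lam, sq_nonneg c, hc.le,
          mul_le_mul_of_nonneg_left hW2 (sq_nonneg (lam * c)),
          mul_nonneg (mul_nonneg (sq_nonneg lam) (sq_nonneg (c^2))) hMc0]
  have intf₁ : Integrable f₁ μ := integrable_of_bdd hf₁m.aestronglyMeasurable hf₁b
  have hf₁0 : 0 ≤ᵐ[μ] f₁ := ae_of_all _ (fun ω => (Real.exp_pos _).le)
  have hI1 : ∫ ω, f₁ ω * f₂ ω ∂μ ≤ K * ∫ ω, f₁ ω ∂μ := by
    calc ∫ ω, f₁ ω * f₂ ω ∂μ ≤ ∫ ω, f₁ ω * K ∂μ := by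
          refine integral_mono_ae int₁ (intf₁.mul_const K) ?_
          filter_upwards [hf₂K] with ω h
          exact mul_le_mul_of_nonneg_left h (Real.exp_pos _).le
      _ = K * ∫ ω, f₁ ω ∂μ := by rw [integral_mul_const]; ring
  have hL'ss : L' ⊂ L := Finset.sdiff_ssubset hML ⟨l₀, hl₀M⟩
  have hIH : ∫ ω, f₁ ω ∂μ ≤ Real.exp (lam ^ 2 * c ^ 4 * L'.card) := by
    exact IH L' hL'ss (hp.mono (Finset.coe_subset.2 hL'L)) (hq.mono (Finset.coe_subset.2 hL'L))
      (fun l hl => hpq l (hL'L hl))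
  have hcard : (L'.card : ℝ) + M.card = L.card := by
    have := Finset.card_sdiff_add_card_eq_card hML
    rw [hL']
    exact_mod_cast this
  rw [hInt, hzero, add_zero]
  calc ∫ ω, f₁ ω * f₂ ω ∂μ ≤ K * ∫ ω, f₁ ω ∂μ := hI1
    _ ≤ K * Real.exp (lam ^ 2 * c ^ 4 * L'.card) := mul_le_mul_of_nonneg_left hIH hK0
    _ = Real.exp (lam ^ 2 * c ^ 4 * L.card) := by
        rw [hK, ← Real.exp_add]
        congr 1
        linear_combination (lam ^ 2 * c ^ 4) * hcard


lemma tail_bound {ι' : Type*} (hc : 0 < c) (hXm : ∀ i, Measurable (X i))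
    (hindep : iIndepFun X μ)
    (hX : ∀ i, μ {ω | X i ω = c} = 1/2 ∧ μ {ω | X i ω = -c} = 1/2)
    (p q : ι' → ι) (L : Finset ι') (hLne : L.Nonempty)
    (hp : Set.InjOn p ↑L) (hq : Set.InjOn q ↑L) (hpq : ∀ l ∈ L, p l ≠ q l)
    (t : ℝ) (ht : 0 < t) :
    μ {ω | t ≤ |∑ l ∈ L, X (p l) ω * X (q l) ω|}
      ≤ ENNReal.ofReal (2 * Real.exp (-t ^ 2 / (4 * L.card * c ^ 4))) := by
  classical
  set S : Ω → ℝ := fun ω => ∑ l ∈ L, X (p l) ω * X (q l) ω with hS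
  have hSm : Measurable S := Finset.measurable_sum _ (fun l _ => (hXm _).mul (hXm _))
  have hr0 : (0:ℝ) < L.card := by
    have := Finset.card_pos.2 hLne
    exact_mod_cast this
  have hc4 : (0:ℝ) < c ^ 4 := by positivity
  have habs : ∀ᵐ ω ∂μ, ∀ i, |X i ω| = c := by
    filter_upwards [good_ae hc hXm hX] with ω hω i
    rcases hω i with h | h
    · rw [h, abs_of_pos hc]
    · rw [h, abs_neg, abs_of_pos hc]
  have hSb : ∀ᵐ ω ∂μ, |S ω| ≤ L.card * c ^ 2 := by
    filter_upwards [habs] with ω hω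
    calc |S ω| ≤ ∑ l ∈ L, |X (p l) ω * X (q l) ω| := Finset.abs_sum_le_sum_abs _ _
      _ = ∑ _l ∈ L, c ^ 2 := by
          refine Finset.sum_congr rfl (fun l _ => ?_)
          rw [abs_mul, hω, hω]; ring
      _ = L.card * c ^ 2 := by rw [Finset.sum_const, nsmul_eq_mul]
  have hone : ∀ lam u : ℝ,
      μ {ω | Real.exp u ≤ Real.exp (lam * S ω)}
        ≤ ENNReal.ofReal (Real.exp (lam ^ 2 * c ^ 4 * L.card - u)) := by
    intro lam u
    have hint : Integrable (fun ω => Real.exp (lam * S ω)) μ := by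
      refine integrable_of_bdd ((hSm.const_mul lam).exp).aestronglyMeasurable
        (C := Real.exp (|lam| * (L.card * c ^ 2))) ?_
      filter_upwards [hSb] with ω h
      rw [abs_of_pos (Real.exp_pos _)]
      apply Real.exp_le_exp.2
      calc lam * S ω ≤ |lam * S ω| := le_abs_self _
        _ = |lam| * |S ω| := abs_mul _ _
        _ ≤ |lam| * (L.card * c ^ 2) := mul_le_mul_of_nonneg_left h (abs_nonneg lam)
    have key := mul_meas_ge_le_integral_of_nonneg
      (ae_of_all μ (fun ω => (Real.exp_pos (lam * S ω)).le)) hint (Real.exp u)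
    have hmgf := mgf_bound hc hXm hindep hX p q lam L hp hq hpq
    have h1 : (μ {ω | Real.exp u ≤ Real.exp (lam * S ω)}).toReal
        ≤ Real.exp (lam ^ 2 * c ^ 4 * L.card - u) := by
      rw [Real.exp_sub]
      rw [le_div_iff₀ (Real.exp_pos u)]
      calc (μ {ω | Real.exp u ≤ Real.exp (lam * S ω)}).toReal * Real.exp u
          = Real.exp u * (μ {ω | Real.exp u ≤ Real.exp (lam * S ω)}).toReal := by ring
        _ ≤ ∫ ω, Real.exp (lam * S ω) ∂μ := key
        _ ≤ Real.exp (lam ^ 2 * c ^ 4 * L.card) := hmgf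
    calc μ {ω | Real.exp u ≤ Real.exp (lam * S ω)}
        = ENNReal.ofReal ((μ {ω | Real.exp u ≤ Real.exp (lam * S ω)}).toReal) :=
          (ENNReal.ofReal_toReal (measure_ne_top μ _)).symm
      _ ≤ _ := ENNReal.ofReal_le_ofReal h1
  set a : ℝ := t / (2 * L.card * c ^ 4) with ha
  have ha0 : 0 < a := by
    rw [ha]; positivity
  have hexp : a ^ 2 * c ^ 4 * L.card - a * t = -t ^ 2 / (4 * L.card * c ^ 4) := by
    rw [ha]; field_simp; ring
  have hsub1 : {ω | t ≤ S ω} ⊆ {ω | Real.exp (a * t) ≤ Real.exp (a * S ω)} := by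
    intro ω h
    simp only [Set.mem_setOf_eq] at h ⊢
    exact Real.exp_le_exp.2 (mul_le_mul_of_nonneg_left h ha0.le)
  have hsub2 : {ω | t ≤ -S ω} ⊆ {ω | Real.exp (a * t) ≤ Real.exp ((-a) * S ω)} := by
    intro ω h
    simp only [Set.mem_setOf_eq] at h ⊢
    apply Real.exp_le_exp.2
    nlinarith [h, ha0]
  have hb1 : μ {ω | t ≤ S ω} ≤ ENNReal.ofReal (Real.exp (-t ^ 2 / (4 * L.card * c ^ 4))) := by
    refine (measure_mono hsub1).trans ?_
    have := hone a (a * t)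
    rwa [hexp] at this
  have hb2 : μ {ω | t ≤ -S ω} ≤ ENNReal.ofReal (Real.exp (-t ^ 2 / (4 * L.card * c ^ 4))) := by
    refine (measure_mono hsub2).trans ?_
    have := hone (-a) (a * t)
    have he : (-a) ^ 2 * c ^ 4 * L.card - a * t = -t ^ 2 / (4 * L.card * c ^ 4) := by
      rw [← hexp]; ring
    rwa [he] at this
  have hsplit : {ω | t ≤ |S ω|} ⊆ {ω | t ≤ S ω} ∪ {ω | t ≤ -S ω} := by
    intro ω h
    simp only [Set.mem_setOf_eq] at h
    rcases le_abs.1 h with h' | h'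
    · exact Or.inl h'
    · exact Or.inr h'
  calc μ {ω | t ≤ |S ω|} ≤ μ ({ω | t ≤ S ω} ∪ {ω | t ≤ -S ω}) := measure_mono hsplit
    _ ≤ μ {ω | t ≤ S ω} + μ {ω | t ≤ -S ω} := measure_union_le _ _
    _ ≤ ENNReal.ofReal (Real.exp (-t ^ 2 / (4 * L.card * c ^ 4)))
        + ENNReal.ofReal (Real.exp (-t ^ 2 / (4 * L.card * c ^ 4))) := add_le_add hb1 hb2
    _ = ENNReal.ofReal (2 * Real.exp (-t ^ 2 / (4 * L.card * c ^ 4))) := by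
        rw [← ENNReal.ofReal_add (Real.exp_pos _).le (Real.exp_pos _).le]
        congr 1; ring

end CakeAux

namespace CakeAux

lemma isRIP_of_coherence {M' N : Type*} [Fintype M'] [Fintype N] [DecidableEq N]
    (A : Matrix M' N ℝ) (s : ℕ) (δ : ℝ) (hδ : 0 ≤ δ) (hs : 1 ≤ s)
    (hnorm : ∀ α, ∑ j, A j α ^ 2 = 1)
    (hcoh : ∀ α β, α ≠ β → |∑ j, A j α * A j β| ≤ δ / s) : IsRIP A s δ := by
  intro f hf
  obtain ⟨T, hTcard, hT⟩ := hf
  have hs0 : (0:ℝ) < s := by exact_mod_cast Nat.lt_of_lt_of_le Nat.zero_lt_one hs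
  have hexp : ∑ j, (A.mulVec f j) ^ 2
      = ∑ α, ∑ β, f α * f β * ∑ j, A j α * A j β := by
    have h1 : ∀ j, (A.mulVec f j) ^ 2 = ∑ α, ∑ β, (A j α * f α) * (A j β * f β) := by
      intro j
      rw [sq]
      simp only [Matrix.mulVec, dotProduct]
      rw [Finset.sum_mul_sum]
    rw [Finset.sum_congr rfl (fun j _ => h1 j), Finset.sum_comm]
    refine Finset.sum_congr rfl (fun α _ => ?_)
    rw [Finset.sum_comm]
    refine Finset.sum_congr rfl (fun β _ => ?_)
    rw [Finset.mul_sum]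
    exact Finset.sum_congr rfl (fun j _ => by ring)
  have hdiag : ∀ α, f α * f α * ∑ j, A j α * A j α = f α ^ 2 := by
    intro α
    have h2 : ∑ j, A j α * A j α = 1 := by
      rw [← hnorm α]; exact Finset.sum_congr rfl (fun j _ => (sq (A j α)).symm)
    rw [h2]; ring
  classical
  set R := ∑ α, ∑ β ∈ Finset.univ.erase α, f α * f β * ∑ j, A j α * A j β with hR
  have hsum : ∑ j, (A.mulVec f j) ^ 2 = (∑ α, f α ^ 2) + R := by
    rw [hexp, hR, ← Finset.sum_add_distrib]
    refine Finset.sum_congr rfl (fun α _ => ?_)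
    rw [← hdiag α]
    exact (Finset.add_sum_erase _ _ (Finset.mem_univ α)).symm
  have habsf : ∑ α, |f α| = ∑ α ∈ T, |f α| := by
    refine (Finset.sum_subset (Finset.subset_univ T) ?_).symm
    intro x _ hx; rw [hT x hx, abs_zero]
  have hff : ∑ α ∈ T, |f α| ^ 2 ≤ ∑ α, f α ^ 2 := by
    calc ∑ α ∈ T, |f α| ^ 2 = ∑ α ∈ T, f α ^ 2 := by simp [sq_abs]
      _ ≤ ∑ α, f α ^ 2 :=
        Finset.sum_le_sum_of_subset_of_nonneg (Finset.subset_univ T) (fun i _ _ => sq_nonneg _)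
  have hsumsq0 : 0 ≤ ∑ α, f α ^ 2 := Finset.sum_nonneg (fun α _ => sq_nonneg (f α))
  have h3 : (∑ α, |f α|) ^ 2 ≤ s * ∑ α, f α ^ 2 := by
    rw [habsf]
    calc (∑ α ∈ T, |f α|) ^ 2 ≤ T.card * ∑ α ∈ T, |f α| ^ 2 := sq_sum_le_card_mul_sum_sq
      _ ≤ s * ∑ α, f α ^ 2 := by
        have hc' : (T.card : ℝ) ≤ s := by exact_mod_cast hTcard
        have h0 : 0 ≤ ∑ α ∈ T, |f α| ^ 2 := Finset.sum_nonneg (fun _ _ => sq_nonneg _)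
        nlinarith [hff]
  have hRb : |R| ≤ δ * ∑ α, f α ^ 2 := by
    have h1 : |R| ≤ ∑ α, ∑ β ∈ Finset.univ.erase α, |f α| * |f β| * (δ / s) := by
      rw [hR]
      refine (Finset.abs_sum_le_sum_abs _ _).trans ?_
      refine Finset.sum_le_sum (fun α _ => ?_)
      refine (Finset.abs_sum_le_sum_abs _ _).trans ?_
      refine Finset.sum_le_sum (fun β hβ => ?_)
      rw [abs_mul, abs_mul]
      have hne : α ≠ β := (Finset.ne_of_mem_erase hβ).symm
      exact mul_le_mul_of_nonneg_left (hcoh α β hne) (mul_nonneg (abs_nonneg _) (abs_nonneg _))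
    have e3 : (∑ α, |f α|) ^ 2 * (δ / s) = ∑ α, ∑ β, |f α| * |f β| * (δ / s) := by
      rw [sq, Finset.sum_mul_sum, Finset.sum_mul]
      exact Finset.sum_congr rfl (fun α _ => Finset.sum_mul _ _ _)
    have h2 : ∑ α, ∑ β ∈ Finset.univ.erase α, |f α| * |f β| * (δ / s)
        ≤ (∑ α, |f α|) ^ 2 * (δ / s) := by
      rw [e3]
      refine Finset.sum_le_sum (fun α _ => ?_)
      refine Finset.sum_le_sum_of_subset_of_nonneg (Finset.erase_subset _ _) (fun β _ _ => ?_)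
      have : 0 ≤ δ / s := by positivity
      positivity
    calc |R| ≤ _ := h1
      _ ≤ (∑ α, |f α|) ^ 2 * (δ / s) := h2
      _ ≤ (s * ∑ α, f α ^ 2) * (δ / s) := mul_le_mul_of_nonneg_right h3 (by positivity)
      _ = δ * ∑ α, f α ^ 2 := by
        field_simp
  have hb := abs_le.1 hRb
  constructor
  · rw [hsum]; nlinarith [hb.1]
  · rw [hsum]; nlinarith [hb.2]

end CakeAux


set_option maxHeartbeats 1000000 in
open CakeAux in
/-- union bound for the CAKE sensing matrix.  With jointly i.i.d. `±√(d/n)`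
mask entries and `nB ≥ 2`, `P(A does not satisfy RIP(s, δs)) ≤ 2 n² B² exp(-n δs²/(16 d s²))`;
in particular, for `c₂ ≤ δs²/16` and `c₁ ≥ 3/c₂`, the bound is `< 1` when
`n/d ≥ c₁ s² log(nB)`. -/
theorem cake_not_RIP_union_bound
    (n₁ n₂ d₁ d₂ B : ℕ) [NeZero n₁] [NeZero n₂]
    (hd₁ : d₁ ∣ n₁) (hd₂ : d₂ ∣ n₂) (hd₁0 : 0 < d₁) (hd₂0 : 0 < d₂) (hB : 0 < B)
    (hn : 2 ≤ n₁ * n₂ * B)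
    (s : ℕ) (hs : 1 ≤ s) (δs : ℝ) (hδs : δs ∈ Set.Ioo (0 : ℝ) 1)
    (Ω : Type) (mΩ : MeasurableSpace Ω) (μ : Measure Ω) (hμ : IsProbabilityMeasure μ)
    (H : Ω → Fin B → ZMod n₁ → ZMod n₂ → ℝ)
    (hmeas : ∀ t i j, Measurable fun ω => H ω t i j)
    (hindep : iIndepFun
      (fun (tij : Fin B × (ZMod n₁ × ZMod n₂)) ω => H ω tij.1 tij.2.1 tij.2.2) μ)
    (hdist : ∀ t i j,
      μ {ω | H ω t i j = Real.sqrt ((d₁ * d₂ : ℝ) / (n₁ * n₂ : ℝ))} = 1/2 ∧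
      μ {ω | H ω t i j = -Real.sqrt ((d₁ * d₂ : ℝ) / (n₁ * n₂ : ℝ))} = 1/2) :
    μ {ω | ¬ IsRIP (cakeMatrix n₁ n₂ d₁ d₂ B (H ω)) s δs}
      ≤ ENNReal.ofReal
          (2 * ((n₁ : ℝ) * n₂) ^ 2 * (B : ℝ) ^ 2 *
            Real.exp (-((n₁ : ℝ) * n₂) * δs ^ 2 /
              (16 * ((d₁ : ℝ) * d₂) * (s : ℝ) ^ 2)))
    ∧
    ∀ c₁ c₂ : ℝ, 0 < c₂ → c₂ ≤ δs ^ 2 / 16 → 3 / c₂ ≤ c₁ →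
      c₁ * (s : ℝ) ^ 2 * Real.log ((n₁ : ℝ) * n₂ * B)
          ≤ ((n₁ : ℝ) * n₂) / ((d₁ : ℝ) * d₂) →
      2 * ((n₁ : ℝ) * n₂) ^ 2 * (B : ℝ) ^ 2 *
          Real.exp (-((n₁ : ℝ) * n₂) * δs ^ 2 /
            (16 * ((d₁ : ℝ) * d₂) * (s : ℝ) ^ 2)) < 1 := by
  classical
  obtain ⟨hδ0, hδ1⟩ := hδs
  have hn₁0 : 0 < n₁ := Nat.pos_of_ne_zero (NeZero.ne n₁)
  have hn₂0 : 0 < n₂ := Nat.pos_of_ne_zero (NeZero.ne n₂)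
  have hn₁R : (0:ℝ) < n₁ := by exact_mod_cast hn₁0
  have hn₂R : (0:ℝ) < n₂ := by exact_mod_cast hn₂0
  have hd₁R : (0:ℝ) < d₁ := by exact_mod_cast hd₁0
  have hd₂R : (0:ℝ) < d₂ := by exact_mod_cast hd₂0
  have hsR : (1:ℝ) ≤ (s:ℝ) := by exact_mod_cast hs
  have hsR0 : (0:ℝ) < (s:ℝ) := lt_of_lt_of_le one_pos hsR
  have hBR : (1:ℝ) ≤ (B:ℝ) := by exact_mod_cast hB
  set nR : ℝ := (n₁ : ℝ) * n₂ with hnR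
  set dR : ℝ := (d₁ : ℝ) * d₂ with hdR
  have hnR0 : (0:ℝ) < nR := mul_pos hn₁R hn₂R
  have hdR0 : (0:ℝ) < dR := mul_pos hd₁R hd₂R
  set c : ℝ := Real.sqrt (dR / nR) with hcdef
  have hc0 : 0 < c := Real.sqrt_pos.2 (by positivity)
  have hc2 : c ^ 2 = dR / nR := Real.sq_sqrt (by positivity)
  set Ee : ℝ := nR * δs ^ 2 / (16 * dR * (s:ℝ) ^ 2) with hEe
  have hEe0 : 0 ≤ Ee := by rw [hEe]; positivity
  have hEarg : -nR * δs ^ 2 / (16 * dR * (s:ℝ) ^ 2) = -Ee := by rw [hEe]; ring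
  constructor
  · -- main probability bound
    set X : (Fin B × (ZMod n₁ × ZMod n₂)) → Ω → ℝ := fun i ω => H ω i.1 i.2.1 i.2.2 with hX
    have hXm : ∀ i, Measurable (X i) := fun i => hmeas i.1 i.2.1 i.2.2
    have hXd : ∀ i : Fin B × (ZMod n₁ × ZMod n₂),
        μ {ω | X i ω = c} = 1/2 ∧ μ {ω | X i ω = -c} = 1/2 :=
      fun i => hdist i.1 i.2.1 i.2.2
    have hXi : iIndepFun X μ := hindep
    have hm₁0 : 0 < n₁ / d₁ := Nat.div_pos (Nat.le_of_dvd hn₁0 hd₁) hd₁0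
    have hm₂0 : 0 < n₂ / d₂ := Nat.div_pos (Nat.le_of_dvd hn₂0 hd₂) hd₂0
    have hρne : (Finset.univ : Finset (Fin (n₁ / d₁) × Fin (n₂ / d₂))).Nonempty :=
      ⟨(⟨0, hm₁0⟩, ⟨0, hm₂0⟩), Finset.mem_univ _⟩
    have hcardρ : (((Finset.univ : Finset (Fin (n₁ / d₁) × Fin (n₂ / d₂))).card : ℕ) : ℝ)
        = nR / dR := by
      rw [Finset.card_univ, Fintype.card_prod, Fintype.card_fin, Fintype.card_fin]
      rw [Nat.cast_mul, Nat.cast_div hd₁ (ne_of_gt hd₁R), Nat.cast_div hd₂ (ne_of_gt hd₂R)]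
      rw [hnR, hdR]
      field_simp
    set pcol : (Fin B × (ZMod n₁ × ZMod n₂)) → (Fin (n₁ / d₁) × Fin (n₂ / d₂))
        → (Fin B × (ZMod n₁ × ZMod n₂)) := fun α l =>
      (α.1, ((((l.1 : ℕ) * d₁ : ℕ) : ZMod n₁) - α.2.1, (((l.2 : ℕ) * d₂ : ℕ) : ZMod n₂) - α.2.2))
      with hpcol
    have hcolA : ∀ ω (α : Fin B × (ZMod n₁ × ZMod n₂)) (l : Fin (n₁ / d₁) × Fin (n₂ / d₂)),
        cakeMatrix n₁ n₂ d₁ d₂ B (H ω) l α = X (pcol α l) ω := fun _ _ _ => rfl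
    have hmullt : ∀ (n d : ℕ), 0 < d → d ∣ n → ∀ x : Fin (n / d), (x : ℕ) * d < n := by
      intro n d hd0 hd x
      have h1 : ((x : ℕ) + 1) * d ≤ (n / d) * d := Nat.mul_le_mul_right d x.2
      rw [Nat.div_mul_cancel hd] at h1
      nlinarith [x.2]
    have hshift : ∀ (n d : ℕ) (hnz : NeZero n) (hd0 : 0 < d) (hd : d ∣ n) (k : ZMod n)
        (a b : Fin (n / d)), (((a : ℕ) * d : ℕ) : ZMod n) - k = (((b : ℕ) * d : ℕ) : ZMod n) - k
        → a = b := by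
      intro n d hnz hd0 hd k a b h
      haveI := hnz
      have h' : (((a : ℕ) * d : ℕ) : ZMod n) = (((b : ℕ) * d : ℕ) : ZMod n) := sub_left_inj.1 h
      have hv := congrArg ZMod.val h'
      rw [ZMod.val_cast_of_lt (hmullt n d hd0 hd a), ZMod.val_cast_of_lt (hmullt n d hd0 hd b)]
        at hv
      exact Fin.ext (Nat.eq_of_mul_eq_mul_right hd0 hv)
    have hpinj : ∀ α, Function.Injective (pcol α) := by
      intro α l l' h
      rw [hpcol] at h
      simp only [Prod.mk.injEq, true_and] at h
      exact Prod.ext (hshift n₁ d₁ ‹_› hd₁0 hd₁ α.2.1 l.1 l'.1 h.1)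
        (hshift n₂ d₂ ‹_› hd₂0 hd₂ α.2.2 l.2 l'.2 h.2)
    have hpne : ∀ (α β : Fin B × (ZMod n₁ × ZMod n₂)), α ≠ β →
        ∀ l, pcol α l ≠ pcol β l := by
      intro α β hne l h
      rw [hpcol] at h
      simp only [Prod.mk.injEq] at h
      exact hne (Prod.ext h.1 (Prod.ext (sub_right_inj.1 h.2.1) (sub_right_inj.1 h.2.2)))
    set t : ℝ := δs / s with ht
    have ht0 : 0 < t := by rw [ht]; positivity
    set Ev : (Fin B × (ZMod n₁ × ZMod n₂)) × (Fin B × (ZMod n₁ × ZMod n₂)) → Set Ω := fun z =>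
      {ω | t ≤ |∑ l ∈ (Finset.univ : Finset (Fin (n₁ / d₁) × Fin (n₂ / d₂))),
        X (pcol z.1 l) ω * X (pcol z.2 l) ω|} with hEv
    have hincl : {ω | ¬ IsRIP (cakeMatrix n₁ n₂ d₁ d₂ B (H ω)) s δs}
        ⊆ {ω | ¬ ∀ i, X i ω = c ∨ X i ω = -c}
          ∪ ⋃ z ∈ (Finset.univ.offDiag :
              Finset ((Fin B × (ZMod n₁ × ZMod n₂)) × (Fin B × (ZMod n₁ × ZMod n₂)))), Ev z := by
      intro ω hω
      by_cases hg : ∀ i, X i ω = c ∨ X i ω = -c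
      · right
        simp only [Set.mem_iUnion]
        by_contra hcon
        push_neg at hcon
        apply hω
        apply isRIP_of_coherence _ s δs hδ0.le hs
        · intro α
          have hsq : ∀ j, cakeMatrix n₁ n₂ d₁ d₂ B (H ω) j α ^ 2 = c ^ 2 := by
            intro j
            rw [hcolA ω α j]
            rcases hg (pcol α j) with h | h <;> rw [h] <;> ring
          rw [Finset.sum_congr rfl (fun j _ => hsq j), Finset.sum_const, nsmul_eq_mul, hcardρ,
            hc2]
          field_simp
        · intro α β hne
          have hz : (α, β) ∈ (Finset.univ.offDiag :
              Finset ((Fin B × (ZMod n₁ × ZMod n₂)) × (Fin B × (ZMod n₁ × ZMod n₂)))) :=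
            Finset.mem_offDiag.2 ⟨Finset.mem_univ _, Finset.mem_univ _, hne⟩
          have hno : ω ∉ Ev (α, β) := hcon (α, β) hz
          rw [hEv] at hno
          simp only [Set.mem_setOf_eq, not_le] at hno
          have heq : ∑ j, cakeMatrix n₁ n₂ d₁ d₂ B (H ω) j α * cakeMatrix n₁ n₂ d₁ d₂ B (H ω) j β
              = ∑ l ∈ (Finset.univ : Finset (Fin (n₁ / d₁) × Fin (n₂ / d₂))),
                  X (pcol α l) ω * X (pcol β l) ω :=
            Finset.sum_congr rfl (fun j _ => by rw [hcolA ω α j, hcolA ω β j])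
          rw [heq, ← ht]
          exact le_of_lt hno
      · left; exact hg
    have hGc0 : μ {ω | ¬ ∀ i, X i ω = c ∨ X i ω = -c} = 0 := by
      have := good_ae (μ := μ) hc0 hXm hXd
      rwa [ae_iff] at this
    have hpair : ∀ z ∈ (Finset.univ.offDiag :
        Finset ((Fin B × (ZMod n₁ × ZMod n₂)) × (Fin B × (ZMod n₁ × ZMod n₂)))),
        μ (Ev z) ≤ ENNReal.ofReal (2 * Real.exp (-Ee)) := by
      intro z hz
      have hzne : z.1 ≠ z.2 := (Finset.mem_offDiag.1 hz).2.2
      have htail := tail_bound hc0 hXm hXi hXd (pcol z.1) (pcol z.2)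
        (Finset.univ : Finset (Fin (n₁ / d₁) × Fin (n₂ / d₂))) hρne
        ((hpinj z.1).injOn) ((hpinj z.2).injOn)
        (fun l _ => hpne z.1 z.2 hzne l) t ht0
      refine le_trans htail (ENNReal.ofReal_le_ofReal ?_)
      have hkey : t ^ 2 / (4 * (((Finset.univ :
          Finset (Fin (n₁ / d₁) × Fin (n₂ / d₂))).card : ℕ) : ℝ) * c ^ 4) = 4 * Ee := by
        rw [hcardρ, show c ^ 4 = (c ^ 2) ^ 2 from by ring, hc2, ht, hEe]
        field_simp
        ring
      have hle : -t ^ 2 / (4 * (((Finset.univ :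
          Finset (Fin (n₁ / d₁) × Fin (n₂ / d₂))).card : ℕ) : ℝ) * c ^ 4) ≤ -Ee := by
        rw [neg_div, hkey]
        linarith
      have := Real.exp_le_exp.2 hle
      linarith
    have hcount : (((Finset.univ.offDiag :
        Finset ((Fin B × (ZMod n₁ × ZMod n₂)) × (Fin B × (ZMod n₁ × ZMod n₂)))).card : ℕ)
          : ℝ≥0∞)
        ≤ ((Fintype.card (Fin B × (ZMod n₁ × ZMod n₂))
            * Fintype.card (Fin B × (ZMod n₁ × ZMod n₂)) : ℕ) : ℝ≥0∞) := by
      apply Nat.cast_le.2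
      rw [Finset.offDiag_card, Finset.card_univ]
      exact Nat.sub_le _ _
    have hcardι : ((Fintype.card (Fin B × (ZMod n₁ × ZMod n₂))
        * Fintype.card (Fin B × (ZMod n₁ × ZMod n₂)) : ℕ) : ℝ) = nR ^ 2 * (B:ℝ) ^ 2 := by
      rw [Nat.cast_mul]
      rw [show Fintype.card (Fin B × (ZMod n₁ × ZMod n₂)) = B * (n₁ * n₂) from by
        rw [Fintype.card_prod, Fintype.card_prod, Fintype.card_fin, ZMod.card, ZMod.card]]
      rw [hnR]
      push_cast
      ring
    calc μ {ω | ¬ IsRIP (cakeMatrix n₁ n₂ d₁ d₂ B (H ω)) s δs}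
        ≤ μ ({ω | ¬ ∀ i, X i ω = c ∨ X i ω = -c}
            ∪ ⋃ z ∈ (Finset.univ.offDiag :
              Finset ((Fin B × (ZMod n₁ × ZMod n₂)) × (Fin B × (ZMod n₁ × ZMod n₂)))), Ev z) :=
          measure_mono hincl
      _ ≤ μ {ω | ¬ ∀ i, X i ω = c ∨ X i ω = -c}
            + μ (⋃ z ∈ (Finset.univ.offDiag :
              Finset ((Fin B × (ZMod n₁ × ZMod n₂)) × (Fin B × (ZMod n₁ × ZMod n₂)))), Ev z) :=
          measure_union_le _ _
      _ = μ (⋃ z ∈ (Finset.univ.offDiag :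
              Finset ((Fin B × (ZMod n₁ × ZMod n₂)) × (Fin B × (ZMod n₁ × ZMod n₂)))), Ev z) := by
          rw [hGc0, zero_add]
      _ ≤ ∑ z ∈ (Finset.univ.offDiag :
              Finset ((Fin B × (ZMod n₁ × ZMod n₂)) × (Fin B × (ZMod n₁ × ZMod n₂)))),
            μ (Ev z) := measure_biUnion_finset_le _ _
      _ ≤ ∑ _z ∈ (Finset.univ.offDiag :
              Finset ((Fin B × (ZMod n₁ × ZMod n₂)) × (Fin B × (ZMod n₁ × ZMod n₂)))),
            ENNReal.ofReal (2 * Real.exp (-Ee)) := Finset.sum_le_sum hpair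
      _ = (((Finset.univ.offDiag :
              Finset ((Fin B × (ZMod n₁ × ZMod n₂)) × (Fin B × (ZMod n₁ × ZMod n₂)))).card : ℕ)
              : ℝ≥0∞)
            * ENNReal.ofReal (2 * Real.exp (-Ee)) := by
          rw [Finset.sum_const, nsmul_eq_mul]
      _ ≤ ((Fintype.card (Fin B × (ZMod n₁ × ZMod n₂))
            * Fintype.card (Fin B × (ZMod n₁ × ZMod n₂)) : ℕ) : ℝ≥0∞)
            * ENNReal.ofReal (2 * Real.exp (-Ee)) := mul_le_mul_left hcount _
      _ = ENNReal.ofReal (((Fintype.card (Fin B × (ZMod n₁ × ZMod n₂))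
            * Fintype.card (Fin B × (ZMod n₁ × ZMod n₂)) : ℕ) : ℝ) * (2 * Real.exp (-Ee))) := by
          rw [← ENNReal.ofReal_natCast, ← ENNReal.ofReal_mul (by positivity)]
      _ = ENNReal.ofReal (2 * nR ^ 2 * (B:ℝ) ^ 2
            * Real.exp (-nR * δs ^ 2 / (16 * dR * (s:ℝ) ^ 2))) := by
          rw [hcardι, hEarg]
          congr 1
          ring
  · -- smallness of the bound
    intro c₁ c₂ hc₂0 hc₂δ hc₁c₂ hxd
    rw [hEarg]
    set P : ℝ := nR * B with hP
    have hP2 : (2:ℝ) ≤ P := by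
      have h2 : ((2:ℕ):ℝ) ≤ ((n₁ * n₂ * B : ℕ):ℝ) := Nat.cast_le.2 hn
      push_cast at h2
      rw [hP, hnR]
      linarith
    have hP0 : (0:ℝ) < P := lt_of_lt_of_le two_pos hP2
    have hPgoal : nR ^ 2 * (B:ℝ) ^ 2 = P ^ 2 := by rw [hP]; ring
    set Lg : ℝ := Real.log ((n₁ : ℝ) * n₂ * B) with hLg
    have hLgP : Lg = Real.log P := by rw [hLg, hP, hnR]
    have hlog2 : (0.6931471803 : ℝ) < Real.log 2 := Real.log_two_gt_d9
    have hLg2 : Real.log 2 ≤ Lg := by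
      rw [hLgP]
      exact Real.log_le_log (by norm_num) hP2
    have hLg0 : 0 < Lg := lt_of_lt_of_le (by linarith) hLg2
    have hδ2 : δs ^ 2 ≤ 1 := by nlinarith
    have hc₂16 : c₂ ≤ 1 / 16 := le_trans hc₂δ (by linarith)
    have h3cc : 3 ≤ c₁ * c₂ := by
      have := (div_le_iff₀ hc₂0).1 hc₁c₂
      linarith
    have hc₁48 : 48 ≤ c₁ := by
      have h48 : (48:ℝ) ≤ 3 / c₂ := by
        rw [le_div_iff₀ hc₂0]
        linarith
      linarith
    have hE3 : 3 * Lg ≤ Ee := by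
      have hstep1 : c₁ * (s:ℝ) ^ 2 * Lg * c₂ ≤ (nR / dR) * (δs ^ 2 / 16) := by
        have h1 : c₁ * (s:ℝ) ^ 2 * Lg * c₂ ≤ (nR / dR) * c₂ :=
          mul_le_mul_of_nonneg_right hxd hc₂0.le
        have h2 : (nR / dR) * c₂ ≤ (nR / dR) * (δs ^ 2 / 16) := by
          apply mul_le_mul_of_nonneg_left hc₂δ
          positivity
        linarith
      have hE' : Ee = (nR / dR) * (δs ^ 2 / 16) / (s:ℝ) ^ 2 := by
        rw [hEe]; field_simp
      rw [hE', le_div_iff₀ (by positivity : (0:ℝ) < (s:ℝ) ^ 2)]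
      have hmono := mul_le_mul_of_nonneg_right h3cc (mul_nonneg hLg0.le (sq_nonneg (s:ℝ)))
      linarith [hstep1, hmono]
    rcases lt_or_ge 2 P with hP3 | hPle
    · have hexp3 : Real.exp (-(3 * Lg)) = (P ^ 3)⁻¹ := by
        rw [Real.exp_neg]
        congr 1
        rw [show (3:ℝ) * Lg = ((3:ℕ):ℝ) * Lg from by norm_num, Real.exp_nat_mul, hLgP,
          Real.exp_log hP0]
      have hee : Real.exp (-Ee) ≤ (P ^ 3)⁻¹ := by
        rw [← hexp3]
        apply Real.exp_le_exp.2
        linarith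
      have hfin : 2 * nR ^ 2 * (B:ℝ) ^ 2 * Real.exp (-Ee) ≤ 2 / P := by
        have h1 : 2 * nR ^ 2 * (B:ℝ) ^ 2 * Real.exp (-Ee) = 2 * P ^ 2 * Real.exp (-Ee) := by
          rw [← hPgoal]; ring
        rw [h1]
        have h2 : 2 * P ^ 2 * Real.exp (-Ee) ≤ 2 * P ^ 2 * (P ^ 3)⁻¹ :=
          mul_le_mul_of_nonneg_left hee (by positivity)
        have h3 : 2 * P ^ 2 * (P ^ 3)⁻¹ = 2 / P := by
          field_simp
        linarith
      have hlt : 2 / P < 1 := by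
        rw [div_lt_one hP0]
        linarith
      linarith
    · exfalso
      have hdR1 : (1:ℝ) ≤ dR := by
        rw [hdR]
        have h1 : (1:ℝ) ≤ (d₁:ℝ) := by exact_mod_cast hd₁0
        have h2 : (1:ℝ) ≤ (d₂:ℝ) := by exact_mod_cast hd₂0
        calc (1:ℝ) = 1 * 1 := by norm_num
          _ ≤ (d₁:ℝ) * d₂ := mul_le_mul h1 h2 zero_le_one (le_trans zero_le_one h1)
      have hnR2 : nR ≤ 2 := by
        have h1 : nR * 1 ≤ nR * B := mul_le_mul_of_nonneg_left hBR hnR0.le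
        rw [mul_one] at h1
        have h2 : nR * (B:ℝ) = P := by rw [hP]
        linarith
      have hnd2 : nR / dR ≤ 2 := by
        have := div_le_self hnR0.le hdR1
        linarith
      have hbig : (2:ℝ) < c₁ * (s:ℝ) ^ 2 * Lg := by
        have h1 : (0.6931471803 : ℝ) < Lg := lt_of_lt_of_le hlog2 hLg2
        have hs2 : (1:ℝ) ≤ (s:ℝ) ^ 2 := by
          calc (1:ℝ) = 1 ^ 2 := by norm_num
            _ ≤ (s:ℝ) ^ 2 := pow_le_pow_left₀ zero_le_one hsR 2
        have hfac : (1:ℝ) * Lg ≤ (s:ℝ) ^ 2 * Lg := mul_le_mul_of_nonneg_right hs2 hLg0.le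
        have step1 : 48 * ((1:ℝ) * Lg) ≤ 48 * ((s:ℝ) ^ 2 * Lg) :=
          mul_le_mul_of_nonneg_left hfac (by norm_num)
        have step2 : 48 * ((s:ℝ) ^ 2 * Lg) ≤ c₁ * ((s:ℝ) ^ 2 * Lg) :=
          mul_le_mul_of_nonneg_right hc₁48 (mul_nonneg (sq_nonneg _) hLg0.le)
        linarith [step1, step2, h1]
      linarith
end
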